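/- arXiv:2605.01375 — 5 statements merged into one kernel-verified Lean document; each statement's English description precedes it below -/
import Mathlib

section
/- Let d ≥ 2 and let k ≥ 2 be an integer with 1/k ≤ P ≤ 1/(k-1). Set λ_k = 1/k − √((1 − 1/k)(P − 1/k)) and λ₁ = (1 − λ_k)/(k − 1). Then for every probability vector (p₁,…,p_d) (p_i ≥ 0, Σ p_i = 1) with Σ p_i² = P, the Shannon entropy satisfies −Σ_i p_i ln p_i ≥ −[(1 − λ_k) ln λ₁ + λ_k ln λ_k]. -/
open Real

lemma logsum_pos {A B C : ℝ} (hC : 0 < C) (hCB : C < B) (hBA : B < A) :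
    0 < (C - B) * Real.log A + (A - C) * Real.log B + (B - A) * Real.log C := by
  have hA : 0 < A := lt_trans (lt_trans hC hCB) hBA
  have hAC : 0 < A - C := by linarith
  set t : ℝ := (B - C) / (A - C) with ht
  have hts : t * (A - C) = B - C := by rw [ht]; exact div_mul_cancel₀ _ hAC.ne'
  have ht0 : 0 < t := div_pos (by linarith) hAC
  have ht1 : t < 1 := (div_lt_one hAC).2 (by linarith)
  have hcomb : t • A + (1 - t) • C = B := by
    simp only [smul_eq_mul]; nlinarith [hts]
  have := strictConcaveOn_log_Ioi.2 (Set.mem_Ioi.2 hA) (Set.mem_Ioi.2 hC)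
    (by linarith : A ≠ C) ht0 (by linarith : (0:ℝ) < 1 - t) (by ring)
  rw [hcomb] at this
  have h2 : t * Real.log A + (1 - t) * Real.log C < Real.log B := by
    simpa [smul_eq_mul] using this
  have h3 : (B - C) * Real.log A + (A - B) * Real.log C < (A - C) * Real.log B := by
    have h4 := mul_lt_mul_of_pos_left h2 hAC
    have h5 : (A - C) * (t * Real.log A + (1 - t) * Real.log C)
        = (B - C) * Real.log A + (A - B) * Real.log C := by
      linear_combination (Real.log A - Real.log C) * hts
    linarith [h4, h5.symm.le]
  linarith

lemma triple_improve (x y z : ℝ) (hz : 0 < z) (hzy : z ≤ y) (hyx : y < x) :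
    ∃ a b c : ℝ, 0 < a ∧ 0 < b ∧ 0 < c ∧ a + b + c = x + y + z ∧
      a^2 + b^2 + c^2 = x^2 + y^2 + z^2 ∧
      x * Real.log x + y * Real.log y + z * Real.log z
        < a * Real.log a + b * Real.log b + c * Real.log c := by
  have hy : 0 < y := lt_of_lt_of_le hz hzy
  have hx : 0 < x := lt_trans hy hyx
  set s : ℝ := x + y + z with hs
  set r : ℝ := Real.sqrt 3 with hrdef
  have hr2 : r * r = 3 := Real.mul_self_sqrt (by norm_num)
  have hrpos : 0 < r := Real.sqrt_pos.2 (by norm_num)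
  set g1 : ℝ → ℝ := fun θ => s/3 + Real.cos θ * (x - s/3) + Real.sin θ * ((z - y) * r / 3) with hg1
  set g2 : ℝ → ℝ := fun θ => s/3 + Real.cos θ * (y - s/3) + Real.sin θ * ((x - z) * r / 3) with hg2
  set g3 : ℝ → ℝ := fun θ => s/3 + Real.cos θ * (z - s/3) + Real.sin θ * ((y - x) * r / 3) with hg3
  have hcont1 : Continuous g1 := by rw [hg1]; continuity
  have hcont2 : Continuous g2 := by rw [hg2]; continuity
  have hcont3 : Continuous g3 := by rw [hg3]; continuity
  have hg10 : g1 0 = x := by simp [hg1]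
  have hg20 : g2 0 = y := by simp [hg2]
  have hg30 : g3 0 = z := by simp [hg3]
  have hsumg : ∀ θ, g1 θ + g2 θ + g3 θ = x + y + z := by
    intro θ; simp only [hg1, hg2, hg3]; ring
  have hsqg : ∀ θ, (g1 θ)^2 + (g2 θ)^2 + (g3 θ)^2 = x^2 + y^2 + z^2 := by
    intro θ
    simp only [hg1, hg2, hg3, hs]
    linear_combination (x^2+y^2+z^2 - (x+y+z)^2/3) * (Real.sin_sq_add_cos_sq θ) +
      ((x^2+y^2+z^2 - (x+y+z)^2/3) * Real.sin θ^2 / 3) * hr2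
  -- eventual ordering facts near 0
  have hev : ∀ᶠ θ in nhds (0:ℝ), 0 < g1 θ - g2 θ ∧ 0 < g3 θ := by
    have h1 : ContinuousAt (fun θ => g1 θ - g2 θ) 0 := (hcont1.sub hcont2).continuousAt
    have h2 : ContinuousAt g3 0 := hcont3.continuousAt
    have e1 : ∀ᶠ θ in nhds (0:ℝ), 0 < g1 θ - g2 θ := by
      have : (0:ℝ) < g1 0 - g2 0 := by rw [hg10, hg20]; linarith
      exact h1.eventually (eventually_gt_nhds this)
    have e2 : ∀ᶠ θ in nhds (0:ℝ), 0 < g3 θ := by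
      have : (0:ℝ) < g3 0 := by rw [hg30]; exact hz
      exact h2.eventually (eventually_gt_nhds this)
    exact e1.and e2
  obtain ⟨ε, hεpos, hε⟩ := Metric.eventually_nhds_iff.1 hev
  set δ : ℝ := min ε 1 with hδdef
  have hδpos : 0 < δ := lt_min hεpos one_pos
  have hδ1 : δ ≤ 1 := min_le_right _ _
  have horder : ∀ θ ∈ Set.Ioo (0:ℝ) δ, 0 < g3 θ ∧ g3 θ < g2 θ ∧ g2 θ < g1 θ := by
    intro θ hθ
    obtain ⟨hθ0, hθδ⟩ := hθ
    have hθε : dist θ (0:ℝ) < ε := by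
      rw [Real.dist_eq, sub_zero, abs_of_pos hθ0]
      exact lt_of_lt_of_le hθδ (min_le_left _ _)
    obtain ⟨h12, h3⟩ := hε hθε
    have hθ1 : θ < 1 := lt_of_lt_of_le hθδ hδ1
    have hcos : 0 < Real.cos θ := by
      apply Real.cos_pos_of_mem_Ioo
      constructor
      · linarith [Real.pi_gt_three]
      · linarith [Real.pi_gt_three]
    have hsin : 0 < Real.sin θ := Real.sin_pos_of_pos_of_lt_pi hθ0 (by linarith [Real.pi_gt_three])
    have h23 : 0 < g2 θ - g3 θ := by
      have : g2 θ - g3 θ = Real.cos θ * (y - z) + Real.sin θ * ((2*x - y - z) * r / 3) := by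
        simp only [hg2, hg3]; ring
      rw [this]
      have t1 : 0 ≤ Real.cos θ * (y - z) := mul_nonneg hcos.le (by linarith)
      have t2 : 0 < Real.sin θ * ((2*x - y - z) * r / 3) := by
        apply mul_pos hsin
        apply div_pos (mul_pos (by linarith) hrpos) (by norm_num)
      linarith
    exact ⟨h3, by linarith, by linarith⟩
  -- derivative of E
  set E : ℝ → ℝ := fun θ => g1 θ * Real.log (g1 θ) + g2 θ * Real.log (g2 θ) + g3 θ * Real.log (g3 θ) with hE
  have hEcont : Continuous E := by
    rw [hE]
    exact ((Real.continuous_mul_log.comp hcont1).add (Real.continuous_mul_log.comp hcont2)).add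
      (Real.continuous_mul_log.comp hcont3)
  have hderiv : ∀ θ ∈ Set.Ioo (0:ℝ) δ, HasDerivAt E
      (((g3 θ - g2 θ) * Real.log (g1 θ) + (g1 θ - g3 θ) * Real.log (g2 θ)
        + (g2 θ - g1 θ) * Real.log (g3 θ)) * (r/3)) θ := by
    intro θ hθ
    obtain ⟨h3, h32, h21⟩ := horder θ hθ
    have hd1 : HasDerivAt g1 (-Real.sin θ * (x - s/3) + Real.cos θ * ((z - y) * r / 3)) θ := by
      rw [hg1]
      have h := (((Real.hasDerivAt_cos θ).mul_const (x - s/3)).const_add (s/3)).add ((Real.hasDerivAt_sin θ).mul_const ((z - y) * r / 3))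
      exact h
    have hd2 : HasDerivAt g2 (-Real.sin θ * (y - s/3) + Real.cos θ * ((x - z) * r / 3)) θ := by
      rw [hg2]
      have h := (((Real.hasDerivAt_cos θ).mul_const (y - s/3)).const_add (s/3)).add ((Real.hasDerivAt_sin θ).mul_const ((x - z) * r / 3))
      exact h
    have hd3 : HasDerivAt g3 (-Real.sin θ * (z - s/3) + Real.cos θ * ((y - x) * r / 3)) θ := by
      rw [hg3]
      have h := (((Real.hasDerivAt_cos θ).mul_const (z - s/3)).const_add (s/3)).add ((Real.hasDerivAt_sin θ).mul_const ((y - x) * r / 3))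
      exact h
    have hm1 : HasDerivAt (fun θ => g1 θ * Real.log (g1 θ))
        ((Real.log (g1 θ) + 1) * (-Real.sin θ * (x - s/3) + Real.cos θ * ((z - y) * r / 3))) θ :=
      (Real.hasDerivAt_mul_log (by linarith : (0:ℝ) < g1 θ).ne').comp θ hd1
    have hm2 : HasDerivAt (fun θ => g2 θ * Real.log (g2 θ))
        ((Real.log (g2 θ) + 1) * (-Real.sin θ * (y - s/3) + Real.cos θ * ((x - z) * r / 3))) θ :=
      (Real.hasDerivAt_mul_log (by linarith : (0:ℝ) < g2 θ).ne').comp θ hd2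
    have hm3 : HasDerivAt (fun θ => g3 θ * Real.log (g3 θ))
        ((Real.log (g3 θ) + 1) * (-Real.sin θ * (z - s/3) + Real.cos θ * ((y - x) * r / 3))) θ :=
      (Real.hasDerivAt_mul_log h3.ne').comp θ hd3
    have hid1 : -Real.sin θ * (x - s/3) + Real.cos θ * ((z - y) * r / 3) = (g3 θ - g2 θ) * r / 3 := by
      simp only [hg2, hg3, hs]
      linear_combination (-(Real.sin θ * (y + z - 2*x)) / 9) * hr2
    have hid2 : -Real.sin θ * (y - s/3) + Real.cos θ * ((x - z) * r / 3) = (g1 θ - g3 θ) * r / 3 := by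
      simp only [hg1, hg3, hs]
      linear_combination (-(Real.sin θ * (z + x - 2*y)) / 9) * hr2
    have hid3 : -Real.sin θ * (z - s/3) + Real.cos θ * ((y - x) * r / 3) = (g2 θ - g1 θ) * r / 3 := by
      simp only [hg1, hg2, hs]
      linear_combination (-(Real.sin θ * (x + y - 2*z)) / 9) * hr2
    have htot := (hm1.add hm2).add hm3
    have heq : (Real.log (g1 θ) + 1) * (-Real.sin θ * (x - s/3) + Real.cos θ * ((z - y) * r / 3))
        + (Real.log (g2 θ) + 1) * (-Real.sin θ * (y - s/3) + Real.cos θ * ((x - z) * r / 3))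
        + (Real.log (g3 θ) + 1) * (-Real.sin θ * (z - s/3) + Real.cos θ * ((y - x) * r / 3))
        = ((g3 θ - g2 θ) * Real.log (g1 θ) + (g1 θ - g3 θ) * Real.log (g2 θ)
        + (g2 θ - g1 θ) * Real.log (g3 θ)) * (r/3) := by
      rw [hid1, hid2, hid3]; ring
    rw [hE]
    exact heq ▸ htot
  -- strict monotonicity on [0, δ/2]... use Icc 0 δ with continuity
  have hmono : StrictMonoOn E (Set.Icc 0 δ) := by
    apply strictMonoOn_of_deriv_pos (convex_Icc 0 δ) hEcont.continuousOn
    intro θ hθ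
    rw [interior_Icc] at hθ
    obtain ⟨h3, h32, h21⟩ := horder θ hθ
    rw [(hderiv θ hθ).deriv]
    exact mul_pos (logsum_pos h3 h32 h21) (by positivity)
  have hlt : E 0 < E (δ/2) := by
    apply hmono (Set.left_mem_Icc.2 hδpos.le) ⟨by linarith, by linarith⟩ (by linarith)
  obtain ⟨h3, h32, h21⟩ := horder (δ/2) ⟨by linarith, by linarith⟩
  refine ⟨g1 (δ/2), g2 (δ/2), g3 (δ/2), by linarith, by linarith, h3, hsumg _, hsqg _, ?_⟩
  have hE0 : E 0 = x * Real.log x + y * Real.log y + z * Real.log z := by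
    rw [hE]; simp only [hg10, hg20, hg30]
  rw [← hE0]
  exact hlt


lemma arith_real (K M P a b lamk lam1 : ℝ)
    (hK2 : 2 ≤ K) (hM1 : 1 ≤ M)
    (htri : M + 2 ≤ K ∨ M = K - 1 ∨ K ≤ M)
    (hPl : 1/K ≤ P) (hPh : P ≤ 1/(K-1)) (hb0 : 0 ≤ b) (hba : b ≤ a)
    (hsum : M*a + b = 1) (hsq : M*a^2 + b^2 = P)
    (hlamk : lamk = 1/K - Real.sqrt ((1 - 1/K) * (P - 1/K)))
    (hlam1 : lam1 = (1 - lamk)/(K-1)) :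
    M * (a * Real.log a) + b * Real.log b
      ≤ (1-lamk)*Real.log lam1 + lamk * Real.log lamk := by
  have hKpos : 0 < K := by linarith
  have hK1pos : 0 < K - 1 := by linarith
  have hMpos : 0 < M := by linarith
  have ha0 : 0 < a := by nlinarith
  rcases htri with hcase | hcase | hcase
  · -- M + 2 ≤ K
    have hCS : (M+1)*P - 1 = M*(a-b)^2 := by
      linear_combination (-(M+1))*hsq + (M*a+b+1)*hsum
    have hM1pos : 0 < M + 1 := by linarith
    have hPlow2 : 1/(M+1) ≤ P := by
      rw [div_le_iff₀ hM1pos]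
      nlinarith [sq_nonneg (a-b)]
    have hchain : 1/(K-1) ≤ 1/(M+1) := by
      apply one_div_le_one_div_of_le hM1pos (by linarith)
    have hPeq : P = 1/(M+1) := le_antisymm (by linarith) hPlow2
    have hPeq2 : P = 1/(K-1) := le_antisymm hPh (by linarith)
    have hab : a = b := by
      have h0 : M*(a-b)^2 = 0 := by rw [← hCS, hPeq]; field_simp; norm_num
      rcases mul_eq_zero.1 h0 with h | h
      · linarith
      · have := pow_eq_zero_iff (n := 2) (by norm_num) |>.1 h
        linarith
    have hbval : b = 1/(K-1) := by
      rw [hab] at hsum hsq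
      have h1 : (M+1)*b^2 = P := by linarith
      have h2 : (M+1)*b = 1 := by linarith
      have hb0' : 0 < b := by nlinarith
      have : b * ((M+1)*b) = b := by rw [h2]; ring
      have hPb : P = b := by nlinarith
      rw [← hPb, hPeq2]
    have hprod : (1 - 1/K) * (P - 1/K) = (1/K)^2 := by
      rw [hPeq2]; field_simp; ring
    have hlamk0 : lamk = 0 := by
      rw [hlamk, hprod, Real.sqrt_sq (by positivity)]
      ring
    have hlam1v : lam1 = 1/(K-1) := by rw [hlam1, hlamk0]; norm_num
    rw [hlamk0, hlam1v]
    simp only [Real.log_zero, mul_zero, zero_mul, sub_zero, add_zero, one_mul]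
    apply le_of_eq
    rw [hab, hbval]
    have hM1K : (M+1) * (1/(K-1)) = 1 := by
      rw [hab, hbval] at hsum; linarith
    linear_combination Real.log (1/(K-1)) * hM1K
  · -- M = K - 1
    rw [hcase] at hsum hsq ⊢
    have hq : K*b^2 - 2*b + 1 = (K-1)*P := by
      linear_combination (K-1)*hsq - (1 - b + (K-1)*a)*hsum
    have hD : (1 - K*b)^2 = (K-1)*(K*P-1) := by linear_combination K * hq
    have hkb : K*b ≤ 1 := by nlinarith
    have harg : (1 - 1/K) * (P - 1/K) = ((1-K*b)/K)^2 := by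
      have h1 : (1 - 1/K) * (P - 1/K) = ((K-1)*(K*P-1))/(K^2) := by
        field_simp
      rw [h1, ← hD]
      rw [div_pow]
    have hlamkb : lamk = b := by
      rw [hlamk, harg, Real.sqrt_sq (div_nonneg (by linarith) hKpos.le)]
      field_simp; ring
    have hlam1a : lam1 = a := by
      rw [hlam1, hlamkb, div_eq_iff (ne_of_gt hK1pos)]
      linarith
    rw [hlamkb, hlam1a]
    apply le_of_eq
    linear_combination Real.log a * hsum
  · -- K ≤ M
    have haP : P ≤ a := by nlinarith [mul_nonneg hb0 (sub_nonneg.2 hba)]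
    have hMa1 : M * a ≤ 1 := by linarith
    have h1 : 1 ≤ M * (1/K) := by
      rw [mul_one_div, le_div_iff₀ hKpos]; linarith
    have h2 : M * (1/K) ≤ M * P := mul_le_mul_of_nonneg_left hPl (by positivity)
    have h3 : M * P ≤ M * a := mul_le_mul_of_nonneg_left haP (by positivity)
    have hMa : M * a = 1 := le_antisymm hMa1 (by linarith)
    have hMP : M * P = 1 := le_antisymm (by linarith) (by linarith)
    have hPa : P = a := mul_left_cancel₀ (ne_of_gt hMpos) (hMP.trans hMa.symm)
    have hP1K : P = 1/K := by
      have h4 : M * (1/K) = 1 := le_antisymm (by linarith) h1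
      exact (mul_left_cancel₀ (ne_of_gt hMpos) (h4.trans hMP.symm)).symm
    have hb : b = 0 := by linarith
    have halK : a = 1/K := by rw [← hP1K, hPa]
    have hlamkv : lamk = 1/K := by
      rw [hlamk, hP1K]
      simp
    have hlam1v : lam1 = 1/K := by
      rw [hlam1, hlamkv]
      rw [div_eq_iff (ne_of_gt hK1pos)]
      field_simp
    have hM1K : M * (1/K) = 1 := by rw [← halK]; exact hMa
    rw [hb, halK, hlamkv, hlam1v]
    apply le_of_eq
    rw [Real.log_zero, mul_zero, add_zero]
    linear_combination Real.log (1/K) * hM1K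

lemma arith_final (k m : ℕ) (hk : 2 ≤ k) (hm : 1 ≤ m) (P a b lamk lam1 : ℝ)
    (hPl : 1/(k:ℝ) ≤ P) (hPh : P ≤ 1/((k:ℝ)-1)) (hb0 : 0 ≤ b) (hba : b ≤ a)
    (hsum : (m:ℝ)*a + b = 1) (hsq : (m:ℝ)*a^2 + b^2 = P)
    (hlamk : lamk = 1/(k:ℝ) - Real.sqrt ((1 - 1/(k:ℝ)) * (P - 1/(k:ℝ))))
    (hlam1 : lam1 = (1 - lamk)/((k:ℝ)-1)) :
    (m:ℝ) * (a * Real.log a) + b * Real.log b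
      ≤ (1-lamk)*Real.log lam1 + lamk * Real.log lamk := by
  apply arith_real (k:ℝ) (m:ℝ) P a b lamk lam1 (by exact_mod_cast hk) (by exact_mod_cast hm)
    _ hPl hPh hb0 hba hsum hsq hlamk hlam1
  rcases lt_trichotomy (m+1) k with h | h | h
  · left
    have : (m:ℝ) + 2 ≤ (k:ℝ) := by exact_mod_cast Nat.succ_le_of_lt h
    linarith
  · right; left
    have : (m:ℝ) + 1 = (k:ℝ) := by exact_mod_cast h
    linarith
  · right; right
    have : (k:ℝ) ≤ (m:ℝ) + 1 := by exact_mod_cast Nat.le_of_lt h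
    have hkm : k ≤ m := by omega
    exact_mod_cast hkm

lemma sum_three_rest {d : ℕ} (i j l : Fin d) (hij : i ≠ j) (hil : i ≠ l) (hjl : j ≠ l)
    (f : Fin d → ℝ) :
    ∑ t, f t = f i + f j + f l + ∑ t ∈ ((Finset.univ.erase i).erase j).erase l, f t := by
  have hj : j ∈ Finset.univ.erase i := Finset.mem_erase.2 ⟨Ne.symm hij, Finset.mem_univ j⟩
  have hl : l ∈ (Finset.univ.erase i).erase j :=
    Finset.mem_erase.2 ⟨Ne.symm hjl, Finset.mem_erase.2 ⟨Ne.symm hil, Finset.mem_univ l⟩⟩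
  rw [← Finset.add_sum_erase _ f (Finset.mem_univ i), ← Finset.add_sum_erase _ f hj,
    ← Finset.add_sum_erase _ f hl]
  ring

/-- For every probability vector `p` in dimension `d ≥ 2` with purity
`∑ pᵢ² = P`, where `1/k ≤ P ≤ 1/(k−1)` for an integer `k ≥ 2`, the Shannon entropy
`−∑ pᵢ ln pᵢ` is at least `−[(1 − λ_k) ln λ₁ + λ_k ln λ_k]`, with
`λ_k = 1/k − √((1 − 1/k)(P − 1/k))` and `λ₁ = (1 − λ_k)/(k − 1)`. -/
theorem entropy_lower_bound_at_fixed_purity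
    (d k : ℕ) (hd : 2 ≤ d) (hk : 2 ≤ k) (P : ℝ)
    (hPlow : 1 / (k : ℝ) ≤ P) (hPhigh : P ≤ 1 / ((k : ℝ) - 1))
    (lamk lam1 : ℝ)
    (hlamk : lamk = 1 / (k : ℝ) - Real.sqrt ((1 - 1 / (k : ℝ)) * (P - 1 / (k : ℝ))))
    (hlam1 : lam1 = (1 - lamk) / ((k : ℝ) - 1))
    (p : Fin d → ℝ) (hp0 : ∀ i, 0 ≤ p i) (hpsum : ∑ i, p i = 1)
    (hpur : ∑ i, (p i) ^ 2 = P) :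
    -(∑ i, p i * Real.log (p i)) ≥
      -((1 - lamk) * Real.log lam1 + lamk * Real.log lamk) := by
  classical
  set Φ : (Fin d → ℝ) → ℝ := fun v => ∑ i, v i * Real.log (v i) with hΦ
  set KS : Set (Fin d → ℝ) := {v | (∀ i, 0 ≤ v i) ∧ ∑ i, v i = 1 ∧ ∑ i, (v i)^2 = P}
    with hKSdef
  have hpK : p ∈ KS := ⟨hp0, hpsum, hpur⟩
  have hclosed : IsClosed KS := by
    have h1 : IsClosed {v : Fin d → ℝ | ∀ i, 0 ≤ v i} := by
      have : {v : Fin d → ℝ | ∀ i, 0 ≤ v i} = ⋂ i, {v : Fin d → ℝ | 0 ≤ v i} := by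
        ext v; simp
      rw [this]
      exact isClosed_iInter fun i => isClosed_le continuous_const (continuous_apply i)
    have h2 : IsClosed {v : Fin d → ℝ | ∑ i, v i = 1} :=
      isClosed_eq (continuous_finset_sum _ fun i _ => continuous_apply i) continuous_const
    have h3 : IsClosed {v : Fin d → ℝ | ∑ i, (v i)^2 = P} :=
      isClosed_eq (continuous_finset_sum _ fun i _ => (continuous_apply i).pow 2)
        continuous_const
    exact h1.inter (h2.inter h3)
  have hKcomp : IsCompact KS := by
    apply (isCompact_univ_pi (fun _ : Fin d => isCompact_Icc (a := (0:ℝ)) (b := 1))).of_isClosed_subset hclosed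
    intro v hv t _
    obtain ⟨h0, h1, _⟩ := hv
    refine ⟨h0 t, ?_⟩
    calc v t ≤ ∑ i, v i := Finset.single_le_sum (fun i _ => h0 i) (Finset.mem_univ t)
    _ = 1 := h1
  have hΦcont : ContinuousOn Φ KS :=
    (continuous_finset_sum _ fun i _ =>
      Real.continuous_mul_log.comp (continuous_apply i)).continuousOn
  obtain ⟨q, hqK, hqmax⟩ := hKcomp.exists_isMaxOn ⟨p, hpK⟩ hΦcont
  obtain ⟨hq0, hq1, hqP⟩ := hqK
  -- no bad triple at the maximizer
  have hnb : ∀ i j l : Fin d, i ≠ j → i ≠ l → j ≠ l →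
      0 < q l → q l ≤ q j → q j < q i → False := by
    intro i j l hij hil hjl hl hlj hji
    obtain ⟨A, B, C, hA, hB, hC, hsum3, hsq3, hlt⟩ := triple_improve (q i) (q j) (q l) hl hlj hji
    set q' : Fin d → ℝ := fun t => if t = i then A else if t = j then B else if t = l then C else q t
      with hq'def
    have hq'i : q' i = A := by simp [hq'def]
    have hq'j : q' j = B := by simp [hq'def, Ne.symm hij]
    have hq'l : q' l = C := by simp [hq'def, Ne.symm hil, Ne.symm hjl]
    have hrest : ∀ t ∈ ((Finset.univ.erase i).erase j).erase l, q' t = q t := by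
      intro t ht
      have htl : t ≠ l := Finset.ne_of_mem_erase ht
      have htj : t ≠ j := Finset.ne_of_mem_erase (Finset.mem_of_mem_erase ht)
      have hti : t ≠ i := Finset.ne_of_mem_erase (Finset.mem_of_mem_erase (Finset.mem_of_mem_erase ht))
      simp [hq'def, hti, htj, htl]
    have key : ∀ F : ℝ → ℝ, ∑ t, F (q' t)
        = F A + F B + F C - F (q i) - F (q j) - F (q l) + ∑ t, F (q t) := by
      intro F
      rw [sum_three_rest i j l hij hil hjl (fun t => F (q' t)),
        sum_three_rest i j l hij hil hjl (fun t => F (q t))]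
      simp only [hq'i, hq'j, hq'l]
      have hre : ∑ t ∈ ((Finset.univ.erase i).erase j).erase l, F (q' t)
          = ∑ t ∈ ((Finset.univ.erase i).erase j).erase l, F (q t) :=
        Finset.sum_congr rfl (fun t ht => by rw [hrest t ht])
      rw [hre]; ring
    have hq'K : q' ∈ KS := by
      refine ⟨?_, ?_, ?_⟩
      · intro t
        rcases eq_or_ne t i with rfl | hti
        · rw [hq'i]; exact hA.le
        rcases eq_or_ne t j with rfl | htj
        · rw [hq'j]; exact hB.le
        rcases eq_or_ne t l with rfl | htl
        · rw [hq'l]; exact hC.le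
        · simp only [hq'def, if_neg hti, if_neg htj, if_neg htl]
          exact hq0 t
      · have := key (fun v => v)
        rw [this, hq1]
        linarith
      · have := key (fun v => v^2)
        rw [this, hqP]
        linarith
    have hle : Φ q' ≤ Φ q := hqmax hq'K
    have hΦq' : Φ q' = A * Real.log A + B * Real.log B + C * Real.log C
        - q i * Real.log (q i) - q j * Real.log (q j) - q l * Real.log (q l) + Φ q :=
      key (fun v => v * Real.log v)
    rw [hΦq'] at hle
    linarith
  -- structure of the maximizer
  set S : Finset (Fin d) := Finset.univ.filter (fun i => q i ≠ 0) with hSdef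
  have hSpos : ∀ i ∈ S, 0 < q i := fun i hi =>
    lt_of_le_of_ne (hq0 i) (Ne.symm (Finset.mem_filter.1 hi).2)
  have hzero : ∀ t, t ∉ S → q t = 0 := by
    intro t ht
    by_contra hne
    exact ht (Finset.mem_filter.2 ⟨Finset.mem_univ t, hne⟩)
  have hSne : S.Nonempty := by
    by_contra h
    rw [Finset.not_nonempty_iff_eq_empty] at h
    have : ∑ i, q i = 0 := Finset.sum_eq_zero fun i _ => hzero i (by rw [h]; exact Finset.notMem_empty i)
    rw [hq1] at this
    norm_num at this
  have hsum_univ_S : ∀ F : ℝ → ℝ, F 0 = 0 → ∑ t, F (q t) = ∑ t ∈ S, F (q t) := by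
    intro F hF0
    symm
    apply Finset.sum_subset (Finset.subset_univ S)
    intro t _ ht
    rw [hzero t ht, hF0]
  obtain ⟨i₀, hi₀, hmin⟩ := S.exists_min_image q hSne
  set b := q i₀ with hbdef
  have hb0 : 0 ≤ b := hq0 i₀
  set T := S.erase i₀ with hTdef
  have hΦfinal : Φ q ≤ (1 - lamk) * Real.log lam1 + lamk * Real.log lamk := by
    by_cases hTem : T = ∅
    · -- support is a single point
      have hSsing : S = {i₀} := by
        apply Finset.eq_singleton_iff_unique_mem.2
        refine ⟨hi₀, fun t ht => ?_⟩
        by_contra hne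
        have : t ∈ T := Finset.mem_erase.2 ⟨hne, ht⟩
        rw [hTem] at this
        exact Finset.notMem_empty t this
      have hqi₀ : q i₀ = 1 := by
        have h1 := hsum_univ_S (fun v => v) rfl
        rw [hq1, hSsing, Finset.sum_singleton] at h1
        exact h1.symm
      have hP1 : P = 1 := by
        have h2 := hsum_univ_S (fun v => v^2) (by norm_num)
        rw [hqP, hSsing, Finset.sum_singleton, hqi₀] at h2
        simpa using h2
      have hΦq : Φ q = 0 := by
        have h3 := hsum_univ_S (fun v => v * Real.log v) (by simp)
        rw [hΦ]
        simp only at h3 ⊢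
        rw [h3, hSsing, Finset.sum_singleton, hqi₀]
        simp
      have harith := arith_final k 1 hk le_rfl P 1 0 lamk lam1 hPlow hPhigh le_rfl zero_le_one
        (by norm_num) (by rw [hP1]; norm_num) hlamk hlam1
      rw [hΦq]
      simpa using harith
    · obtain ⟨i₁, hi₁⟩ := Finset.nonempty_iff_ne_empty.2 hTem
      set a := q i₁ with hadef
      have hi₁S : i₁ ∈ S := Finset.mem_of_mem_erase hi₁
      have hi₁i₀ : i₁ ≠ i₀ := Finset.ne_of_mem_erase hi₁
      have hba : b ≤ a := hmin i₁ hi₁S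
      have hconst : ∀ t ∈ T, q t = a := by
        intro t ht
        by_contra hne
        have htS := Finset.mem_of_mem_erase ht
        have hti₀ : t ≠ i₀ := Finset.ne_of_mem_erase ht
        have hi₀pos : 0 < q i₀ := hSpos i₀ hi₀
        rcases lt_or_gt_of_ne hne with hlt | hgt
        · exact hnb i₁ t i₀ (fun h => hne (by rw [hadef, h])) hi₁i₀ hti₀ hi₀pos (hmin t htS) hlt
        · exact hnb t i₁ i₀ (fun h => hne (by rw [hadef, h])) hti₀ hi₁i₀ hi₀pos (hmin i₁ hi₁S) hgt
      have hm1 : 1 ≤ T.card := Finset.card_pos.2 ⟨i₁, hi₁⟩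
      have hsum_S : ∀ F : ℝ → ℝ, ∑ t ∈ S, F (q t) = (T.card : ℝ) * F a + F b := by
        intro F
        rw [← Finset.add_sum_erase S _ hi₀, ← hTdef]
        rw [Finset.sum_congr rfl (fun t ht => by rw [hconst t ht] : ∀ t ∈ T, F (q t) = F a)]
        rw [Finset.sum_const, nsmul_eq_mul]
        ring
      have e1 : ∑ t ∈ S, q t = (T.card : ℝ) * a + b := by
        simpa using hsum_S (fun v => v)
      have e1' : ∑ t : Fin d, q t = ∑ t ∈ S, q t := hsum_univ_S (fun v => v) rfl
      have h1 : (T.card : ℝ) * a + b = 1 := by rw [← e1, ← e1', hq1]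
      have e2 : ∑ t ∈ S, (q t)^2 = (T.card : ℝ) * a^2 + b^2 := by
        simpa using hsum_S (fun v => v^2)
      have e2' : ∑ t : Fin d, (q t)^2 = ∑ t ∈ S, (q t)^2 := hsum_univ_S (fun v => v^2) (by norm_num)
      have h2 : (T.card : ℝ) * a^2 + b^2 = P := by rw [← e2, ← e2', hqP]
      have e3 : ∑ t ∈ S, q t * Real.log (q t) = (T.card : ℝ) * (a * Real.log a) + b * Real.log b := by
        simpa using hsum_S (fun v => v * Real.log v)
      have e3' : ∑ t : Fin d, q t * Real.log (q t) = ∑ t ∈ S, q t * Real.log (q t) :=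
        hsum_univ_S (fun v => v * Real.log v) (by simp)
      have hΦq : Φ q = (T.card : ℝ) * (a * Real.log a) + b * Real.log b := by
        rw [hΦ]
        simp only
        rw [e3', e3]
      rw [hΦq]
      exact arith_final k T.card hk hm1 P a b lamk lam1 hPlow hPhigh hb0 hba h1 h2 hlamk hlam1
  have hΦp : Φ p ≤ Φ q := hqmax hpK
  have : Φ p ≤ (1 - lamk) * Real.log lam1 + lamk * Real.log lamk := le_trans hΦp hΦfinal
  simp only [ge_iff_le, neg_le_neg_iff]
  exact this
end

section
/- Let k ≥ 2 be an integer and 1/k ≤ P ≤ 1/(k-1). Set λ_k = 1/k − √((1 − 1/k)(P − 1/k)) and λ₁ = (1 − λ_k)/(k − 1). Then the vector consisting of k − 1 entries equal to λ₁ and one entry equal to λ_k is a probability vector (all entries nonnegative, summing to 1), has purity (k−1)λ₁² + λ_k² = P, and has Shannon entropy exactly −[(1 − λ_k) ln λ₁ + λ_k ln λ_k]; hence the minimum of the Shannon entropy over probability vectors of fixed purity P equals L(P). -/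
open Real Filter

lemma logdiff_lt {x y : ℝ} (hx : 0 < x) (hxy : x < y) :
    Real.log y - Real.log x < (y - x) / x := by
  have hy : 0 < y := hx.trans hxy
  have h1 : Real.log (y / x) < y / x - 1 :=
    Real.log_lt_sub_one_of_pos (div_pos hy hx) (ne_of_gt ((one_lt_div hx).mpr hxy))
  rw [Real.log_div hy.ne' hx.ne'] at h1
  have : y / x - 1 = (y - x) / x := by field_simp
  linarith

lemma lt_logdiff {x y : ℝ} (hx : 0 < x) (hxy : x < y) :
    (y - x) / y < Real.log y - Real.log x := by
  have hy : 0 < y := hx.trans hxy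
  have h1 : Real.log (x / y) < x / y - 1 :=
    Real.log_lt_sub_one_of_pos (div_pos hx hy) (ne_of_lt ((div_lt_one hy).mpr hxy))
  rw [Real.log_div hx.ne' hy.ne'] at h1
  have : x / y - 1 = -((y - x) / y) := by field_simp; ring
  linarith

noncomputable def crv (m e f t : ℝ) : ℝ := m + (e * (1 - 3 * t ^ 2) + 2 * f * t) / (1 + 3 * t ^ 2)

noncomputable def dcrv (e f t : ℝ) : ℝ := (2 * f - 12 * e * t - 6 * f * t ^ 2) / (1 + 3 * t ^ 2) ^ 2

lemma Dpos (t : ℝ) : (0:ℝ) < 1 + 3 * t ^ 2 := by positivity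

lemma crv_zero (m e f : ℝ) : crv m e f 0 = m + e := by simp [crv]

lemma dcrv_zero (e f : ℝ) : dcrv e f 0 = 2 * f := by simp [dcrv]

lemma crv_hasDeriv (m e f t : ℝ) : HasDerivAt (crv m e f) (dcrv e f t) t := by
  have h1 : HasDerivAt (fun t : ℝ => 1 - 3 * t ^ 2) (-(3 * (2 * t ^ 1))) t :=
    ((hasDerivAt_pow 2 t).const_mul 3).const_sub 1
  have hD : HasDerivAt (fun t : ℝ => 1 + 3 * t ^ 2) (3 * (2 * t ^ 1)) t :=
    ((hasDerivAt_pow 2 t).const_mul 3).const_add 1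
  have hN := (h1.const_mul e).add ((hasDerivAt_id t).const_mul (2 * f))
  have h2 := (hN.div hD (Dpos t).ne').const_add m
  refine h2.congr_deriv ?_
  unfold dcrv
  simp only [Pi.add_apply, id]
  field_simp
  ring

lemma dcrv_hasDeriv_zero (e f : ℝ) : HasDerivAt (dcrv e f) (-12 * e) 0 := by
  have hD1 : HasDerivAt (fun t : ℝ => 1 + 3 * t ^ 2) (3 * (2 * (0:ℝ) ^ 1)) (0:ℝ) :=
    ((hasDerivAt_pow 2 (0:ℝ)).const_mul 3).const_add 1
  have hD := hD1.pow 2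
  have hN := ((((hasDerivAt_id (0:ℝ)).const_mul (12 * e)).const_sub (2 * f)).sub
    ((hasDerivAt_pow 2 (0:ℝ)).const_mul (6 * f)))
  have h2 := hN.div hD (by norm_num : ((1:ℝ) + 3 * (0:ℝ) ^ 2) ^ 2 ≠ 0)
  unfold dcrv
  refine h2.congr_deriv ?_
  norm_num [Pi.pow_apply]

lemma ent_hasDeriv (m e f t : ℝ) (h : 0 < crv m e f t) :
    HasDerivAt (fun s => crv m e f s * Real.log (crv m e f s))
      ((Real.log (crv m e f t) + 1) * dcrv e f t) t := by
  have hc := crv_hasDeriv m e f t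
  have hlog : HasDerivAt (fun s => Real.log (crv m e f s)) ((crv m e f t)⁻¹ * dcrv e f t) t :=
    (Real.hasDerivAt_log h.ne').comp t hc
  have h2 := hc.mul hlog
  refine h2.congr_deriv ?_
  field_simp

lemma dent_hasDeriv_zero (m e f : ℝ) (h : 0 < m + e) :
    HasDerivAt (fun s => (Real.log (crv m e f s) + 1) * dcrv e f s)
      (4 * f ^ 2 / (m + e) + (Real.log (m + e) + 1) * (-12 * e)) 0 := by
  have hc := crv_hasDeriv m e f 0
  have hcv : crv m e f 0 = m + e := crv_zero m e f
  have hlog : HasDerivAt (fun s => Real.log (crv m e f s) + 1) ((m + e)⁻¹ * dcrv e f 0) 0 := by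
    have h3 := (Real.hasDerivAt_log (by rw [hcv]; exact h.ne')).comp 0 hc
    rw [hcv] at h3
    exact h3.add_const 1
  have h2 := hlog.mul (dcrv_hasDeriv_zero e f)
  refine h2.congr_deriv ?_
  rw [hcv, dcrv_zero]
  field_simp
  ring

noncomputable def cX (A B C : ℝ) : ℝ → ℝ := crv ((A+B+C)/3) (A - (A+B+C)/3) (C - B)
noncomputable def cY (A B C : ℝ) : ℝ → ℝ := crv ((A+B+C)/3) (B - (A+B+C)/3) (A - C)
noncomputable def cZ (A B C : ℝ) : ℝ → ℝ := crv ((A+B+C)/3) (C - (A+B+C)/3) (B - A)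

noncomputable def entT (A B C : ℝ) : ℝ → ℝ := fun t =>
  cX A B C t * Real.log (cX A B C t) + cY A B C t * Real.log (cY A B C t)
    + cZ A B C t * Real.log (cZ A B C t)

lemma cX_zero (A B C : ℝ) : cX A B C 0 = A := by rw [cX, crv_zero]; ring
lemma cY_zero (A B C : ℝ) : cY A B C 0 = B := by rw [cY, crv_zero]; ring
lemma cZ_zero (A B C : ℝ) : cZ A B C 0 = C := by rw [cZ, crv_zero]; ring

lemma cXYZ_sum (A B C t : ℝ) : cX A B C t + cY A B C t + cZ A B C t = A + B + C := by
  simp only [cX, cY, cZ, crv]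
  field_simp
  ring

lemma cXYZ_sumsq (A B C t : ℝ) :
    cX A B C t ^ 2 + cY A B C t ^ 2 + cZ A B C t ^ 2 = A ^ 2 + B ^ 2 + C ^ 2 := by
  simp only [cX, cY, cZ, crv]
  have h := (Dpos t).ne'
  field_simp
  ring

/-- second derivative test: no local max when g'(0)=0 and g''(0)>0. -/
lemma not_isLocalMax_of_second (g G : ℝ → ℝ)
    (hg : ∀ᶠ t in nhds (0:ℝ), HasDerivAt g (G t) t) (hG0 : G 0 = 0)
    {q : ℝ} (hq : 0 < q) (hdG : HasDerivAt G q 0) : ¬ IsLocalMax g 0 := by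
  intro hmax
  obtain ⟨ε, hε, hball⟩ := Metric.eventually_nhds_iff.mp hg
  have hslope : ∀ᶠ t in nhdsWithin 0 {(0:ℝ)}ᶜ, 0 < slope G 0 t :=
    (hasDerivAt_iff_tendsto_slope.mp hdG).eventually (eventually_gt_nhds hq)
  obtain ⟨δ, hδ, hδball⟩ := Metric.eventually_nhds_iff.mp (eventually_nhdsWithin_iff.mp hslope)
  obtain ⟨δ', hδ', hmaxball⟩ := Metric.eventually_nhds_iff.mp
    (show ∀ᶠ x in nhds (0:ℝ), g x ≤ g 0 from hmax)
  have hmin0 : 0 < min (min ε δ) δ' := lt_min (lt_min hε hδ) hδ'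
  set η := min (min ε δ) δ' / 2 with hηdef
  have hη0 : 0 < η := by positivity
  have hηε : η < ε := by
    have h1 := min_le_left (min ε δ) δ'
    have h2 := min_le_left ε δ
    simp only [hηdef]; linarith
  have hηδ : η < δ := by
    have h1 := min_le_left (min ε δ) δ'
    have h2 := min_le_right ε δ
    simp only [hηdef]; linarith
  have hηδ' : η < δ' := by
    have h1 := min_le_right (min ε δ) δ'
    simp only [hηdef]; linarith
  have hcont : ContinuousOn g (Set.Icc 0 η) := by
    intro x hx
    have : dist x 0 < ε := by
      rw [Real.dist_eq, sub_zero, abs_of_nonneg hx.1]; linarith [hx.2]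
    exact (hball this).continuousAt.continuousWithinAt
  have hder : ∀ x ∈ Set.Ioo 0 η, HasDerivAt g (G x) x := by
    intro x hx
    refine hball ?_
    rw [Real.dist_eq, sub_zero, abs_of_nonneg hx.1.le]; linarith [hx.2]
  obtain ⟨c, hc, hceq⟩ := exists_hasDerivAt_eq_slope g G hη0 hcont hder
  have hGc : 0 < G c := by
    have hcd : dist c 0 < δ := by
      rw [Real.dist_eq, sub_zero, abs_of_nonneg hc.1.le]; linarith [hc.2]
    have h3 := hδball hcd (by simp [hc.1.ne'])
    rw [slope_def_field, hG0] at h3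
    rcases div_pos_iff.mp h3 with ⟨h4, _⟩ | ⟨_, h5⟩
    · linarith
    · linarith [hc.1]
  have hgη : g η ≤ g 0 := by
    refine hmaxball ?_
    rw [Real.dist_eq, sub_zero, abs_of_nonneg hη0.le]; exact hηδ'
  rw [hceq] at hGc
  rcases div_pos_iff.mp hGc with ⟨h4, _⟩ | ⟨_, h5⟩
  · linarith
  · linarith

/-- first-order contradiction: three distinct positive values -/
lemma notLocalMax_case1 {A B C : ℝ} (hC : 0 < C) (hCB : C < B) (hBA : B < A) :
    ¬ IsLocalMax (entT A B C) 0 := by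
  intro hmax
  have hB : 0 < B := hC.trans hCB
  have hA : 0 < A := hB.trans hBA
  have hmX : (A+B+C)/3 + (A - (A+B+C)/3) = A := by ring
  have hmY : (A+B+C)/3 + (B - (A+B+C)/3) = B := by ring
  have hmZ : (A+B+C)/3 + (C - (A+B+C)/3) = C := by ring
  have hpX : 0 < crv ((A+B+C)/3) (A - (A+B+C)/3) (C - B) 0 := by rw [crv_zero, hmX]; exact hA
  have hpY : 0 < crv ((A+B+C)/3) (B - (A+B+C)/3) (A - C) 0 := by rw [crv_zero, hmY]; exact hB
  have hpZ : 0 < crv ((A+B+C)/3) (C - (A+B+C)/3) (B - A) 0 := by rw [crv_zero, hmZ]; exact hC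
  have hd : HasDerivAt (entT A B C)
      ((Real.log A + 1) * (2 * (C - B)) + (Real.log B + 1) * (2 * (A - C))
        + (Real.log C + 1) * (2 * (B - A))) 0 := by
    have h1 := ent_hasDeriv ((A+B+C)/3) (A - (A+B+C)/3) (C - B) 0 hpX
    have h2 := ent_hasDeriv ((A+B+C)/3) (B - (A+B+C)/3) (A - C) 0 hpY
    have h3 := ent_hasDeriv ((A+B+C)/3) (C - (A+B+C)/3) (B - A) 0 hpZ
    rw [crv_zero, hmX, dcrv_zero] at h1
    rw [crv_zero, hmY, dcrv_zero] at h2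
    rw [crv_zero, hmZ, dcrv_zero] at h3
    exact (h1.add h2).add h3
  have hV := hmax.hasDerivAt_eq_zero hd
  have e1 : (A-B) * ((B-C)/B) < (A-B) * (Real.log B - Real.log C) :=
    mul_lt_mul_of_pos_left (lt_logdiff hC hCB) (by linarith)
  have e2 : (B-C) * (Real.log A - Real.log B) < (B-C) * ((A-B)/B) :=
    mul_lt_mul_of_pos_left (logdiff_lt hB hBA) (by linarith)
  have e3 : (A-B) * ((B-C)/B) = (B-C) * ((A-B)/B) := by ring
  have eE : (Real.log A + 1) * (2 * (C - B)) + (Real.log B + 1) * (2 * (A - C))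
        + (Real.log C + 1) * (2 * (B - A))
      = 2*((A-B)*(Real.log B - Real.log C) - (B-C)*(Real.log A - Real.log B)) := by ring
  rw [eE] at hV
  linarith

/-- second-order contradiction: two equal small values and a bigger one -/
lemma notLocalMax_case2 {b a : ℝ} (hb : 0 < b) (hba : b < a) :
    ¬ IsLocalMax (entT b b a) 0 := by
  have ha : 0 < a := hb.trans hba
  have hmX : (b+b+a)/3 + (b - (b+b+a)/3) = b := by ring
  have hmZ : (b+b+a)/3 + (a - (b+b+a)/3) = a := by ring
  -- the neighborhood derivative
  have hcontX : ∀ᶠ t in nhds (0:ℝ), 0 < crv ((b+b+a)/3) (b - (b+b+a)/3) (a - b) t := by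
    have hc := (crv_hasDeriv ((b+b+a)/3) (b - (b+b+a)/3) (a - b) 0).continuousAt
    exact hc.tendsto.eventually (eventually_gt_nhds (by rw [crv_zero, hmX]; exact hb))
  have hcontY : ∀ᶠ t in nhds (0:ℝ), 0 < crv ((b+b+a)/3) (b - (b+b+a)/3) (b - a) t := by
    have hc := (crv_hasDeriv ((b+b+a)/3) (b - (b+b+a)/3) (b - a) 0).continuousAt
    exact hc.tendsto.eventually (eventually_gt_nhds (by rw [crv_zero, hmX]; exact hb))
  have hcontZ : ∀ᶠ t in nhds (0:ℝ), 0 < crv ((b+b+a)/3) (a - (b+b+a)/3) (b - b) t := by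
    have hc := (crv_hasDeriv ((b+b+a)/3) (a - (b+b+a)/3) (b - b) 0).continuousAt
    exact hc.tendsto.eventually (eventually_gt_nhds (by rw [crv_zero, hmZ]; exact ha))
  set G : ℝ → ℝ := fun t =>
    (Real.log (crv ((b+b+a)/3) (b - (b+b+a)/3) (a - b) t) + 1) * dcrv (b - (b+b+a)/3) (a - b) t
    + (Real.log (crv ((b+b+a)/3) (b - (b+b+a)/3) (b - a) t) + 1) * dcrv (b - (b+b+a)/3) (b - a) t
    + (Real.log (crv ((b+b+a)/3) (a - (b+b+a)/3) (b - b) t) + 1) * dcrv (a - (b+b+a)/3) (b - b) t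
    with hGdef
  have hg : ∀ᶠ t in nhds (0:ℝ), HasDerivAt (entT b b a) (G t) t := by
    filter_upwards [hcontX, hcontY, hcontZ] with t h1 h2 h3
    exact ((ent_hasDeriv _ _ _ t h1).add (ent_hasDeriv _ _ _ t h2)).add (ent_hasDeriv _ _ _ t h3)
  have hG0 : G 0 = 0 := by
    simp only [hGdef, crv_zero, dcrv_zero, hmX, hmZ]
    ring
  have hdG : HasDerivAt G
      ((4 * (a-b) ^ 2 / (b) + (Real.log b + 1) * (-12 * (b - (b+b+a)/3)))
        + (4 * (b-a) ^ 2 / b + (Real.log b + 1) * (-12 * (b - (b+b+a)/3)))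
        + (4 * (b-b) ^ 2 / a + (Real.log a + 1) * (-12 * (a - (b+b+a)/3)))) 0 := by
    have h1 := dent_hasDeriv_zero ((b+b+a)/3) (b - (b+b+a)/3) (a - b) (by rw [hmX]; exact hb)
    have h2 := dent_hasDeriv_zero ((b+b+a)/3) (b - (b+b+a)/3) (b - a) (by rw [hmX]; exact hb)
    have h3 := dent_hasDeriv_zero ((b+b+a)/3) (a - (b+b+a)/3) (b - b) (by rw [hmZ]; exact ha)
    rw [hmX] at h1 h2
    rw [hmZ] at h3
    exact (h1.add h2).add h3
  have hq : 0 < (4 * (a-b) ^ 2 / (b) + (Real.log b + 1) * (-12 * (b - (b+b+a)/3)))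
        + (4 * (b-a) ^ 2 / b + (Real.log b + 1) * (-12 * (b - (b+b+a)/3)))
        + (4 * (b-b) ^ 2 / a + (Real.log a + 1) * (-12 * (a - (b+b+a)/3))) := by
    have hlog : Real.log a - Real.log b < (a - b)/b := logdiff_lt hb hba
    have heq : (4 * (a-b) ^ 2 / (b) + (Real.log b + 1) * (-12 * (b - (b+b+a)/3)))
        + (4 * (b-a) ^ 2 / b + (Real.log b + 1) * (-12 * (b - (b+b+a)/3)))
        + (4 * (b-b) ^ 2 / a + (Real.log a + 1) * (-12 * (a - (b+b+a)/3)))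
        = 8 * (a-b) * ((a-b)/b - (Real.log a - Real.log b)) := by
      field_simp
      ring
    rw [heq]
    have h1 : 0 < a - b := by linarith
    have h2 : 0 < (a-b)/b - (Real.log a - Real.log b) := by linarith
    positivity
  exact not_isLocalMax_of_second (entT b b a) G hg hG0 hq hdG

lemma sum_update3 {d : ℕ} (f : Fin d → ℝ) {i j l : Fin d} (hij : i ≠ j) (hil : i ≠ l)
    (hjl : j ≠ l) (a b c : ℝ) (φ : ℝ → ℝ) :
    ∑ m, φ (Function.update (Function.update (Function.update f i a) j b) l c m)
      = φ a + φ b + φ c + (∑ m, φ (f m) - (φ (f i) + φ (f j) + φ (f l))) := by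
  classical
  set u := fun m => Function.update (Function.update (Function.update f i a) j b) l c m with hu
  have hui : u i = a := by simp [hu, Function.update_apply, hij, hil]
  have huj : u j = b := by simp [hu, Function.update_apply, hjl]
  have hul : u l = c := by simp [hu, Function.update_apply]
  have hum : ∀ m, m ≠ i → m ≠ j → m ≠ l → u m = f m := by
    intro m h1 h2 h3
    simp [hu, Function.update_apply, h1, h2, h3]
  set s : Finset (Fin d) := {i, j, l} with hs
  have hil' : i ∉ ({j, l} : Finset (Fin d)) := by simp [hij, hil]
  have hjl' : j ∉ ({l} : Finset (Fin d)) := by simp [hjl]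
  have hgs : ∀ g : Fin d → ℝ, ∑ m ∈ s, g m = g i + g j + g l := by
    intro g
    rw [hs, Finset.sum_insert hil', Finset.sum_insert hjl', Finset.sum_singleton]
    ring
  have hsplit : ∀ g : Fin d → ℝ,
      ∑ m, g m = ∑ m ∈ Finset.univ \ s, g m + ∑ m ∈ s, g m := by
    intro g
    rw [Finset.sum_sdiff (Finset.subset_univ s)]
  have hcompl : ∑ m ∈ Finset.univ \ s, φ (u m) = ∑ m ∈ Finset.univ \ s, φ (f m) := by
    apply Finset.sum_congr rfl
    intro m hm
    rw [Finset.mem_sdiff] at hm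
    have := hm.2
    rw [hs] at this
    simp only [Finset.mem_insert, Finset.mem_singleton] at this
    push_neg at this
    rw [hum m this.1 this.2.1 this.2.2]
  have e1 := hsplit (fun m => φ (u m))
  have e2 := hsplit (fun m => φ (f m))
  have e3 := hgs (fun m => φ (u m))
  have e4 := hgs (fun m => φ (f m))
  rw [hui, huj, hul] at e3
  rw [e3, hcompl] at e1
  rw [e4] at e2
  rw [e1, e2]
  ring

lemma locmax {d : ℕ} {P : ℝ} {q : Fin d → ℝ}
    (hqpos : ∀ m, 0 < q m) (hsum : ∑ m, q m = 1) (hsq : ∑ m, (q m)^2 = P)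
    (hqmax : ∀ r : Fin d → ℝ, (∀ i, 0 ≤ r i) → (∑ i, r i = 1) → (∑ i, (r i)^2 = P) →
      ∑ i, r i * Real.log (r i) ≤ ∑ i, q i * Real.log (q i))
    {i j l : Fin d} (hij : i ≠ j) (hil : i ≠ l) (hjl : j ≠ l) :
    IsLocalMax (entT (q i) (q j) (q l)) 0 := by
  classical
  set A := q i with hA
  set B := q j with hB
  set C := q l with hC
  have hpX : ∀ᶠ t in nhds (0:ℝ), 0 < cX A B C t := by
    have hc := (crv_hasDeriv ((A+B+C)/3) (A - (A+B+C)/3) (C - B) 0).continuousAt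
    exact hc.tendsto.eventually (eventually_gt_nhds (by
      rw [show crv ((A+B+C)/3) (A - (A+B+C)/3) (C - B) 0 = cX A B C 0 from rfl, cX_zero]
      exact hqpos i))
  have hpY : ∀ᶠ t in nhds (0:ℝ), 0 < cY A B C t := by
    have hc := (crv_hasDeriv ((A+B+C)/3) (B - (A+B+C)/3) (A - C) 0).continuousAt
    exact hc.tendsto.eventually (eventually_gt_nhds (by
      rw [show crv ((A+B+C)/3) (B - (A+B+C)/3) (A - C) 0 = cY A B C 0 from rfl, cY_zero]
      exact hqpos j))
  have hpZ : ∀ᶠ t in nhds (0:ℝ), 0 < cZ A B C t := by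
    have hc := (crv_hasDeriv ((A+B+C)/3) (C - (A+B+C)/3) (B - A) 0).continuousAt
    exact hc.tendsto.eventually (eventually_gt_nhds (by
      rw [show crv ((A+B+C)/3) (C - (A+B+C)/3) (B - A) 0 = cZ A B C 0 from rfl, cZ_zero]
      exact hqpos l))
  rw [IsLocalMax, IsMaxFilter]
  filter_upwards [hpX, hpY, hpZ] with t h1 h2 h3
  set r := Function.update (Function.update (Function.update q i (cX A B C t)) j (cY A B C t))
    l (cZ A B C t) with hr
  have hr1 : ∑ m, r m = 1 := by
    have := sum_update3 q hij hil hjl (cX A B C t) (cY A B C t) (cZ A B C t) (fun x => x)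
    rw [hr, this, cXYZ_sum, hsum]
    ring
  have hr2 : ∑ m, (r m)^2 = P := by
    have := sum_update3 q hij hil hjl (cX A B C t) (cY A B C t) (cZ A B C t) (fun x => x^2)
    rw [hr, this, cXYZ_sumsq, hsq]
    ring
  have hrpos : ∀ m, 0 ≤ r m := by
    intro m
    rw [hr]
    by_cases e3 : m = l
    · subst e3; simpa using h3.le
    · by_cases e2 : m = j
      · subst e2
        rw [Function.update_apply]
        simp [e3, Function.update_apply]
        exact h2.le
      · by_cases e1 : m = i
        · subst e1
          rw [Function.update_apply]
          simp [e3, e2, Function.update_apply]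
          exact h1.le
        · simp [Function.update_apply, e1, e2, e3]
          exact (hqpos m).le
  have hent := sum_update3 q hij hil hjl (cX A B C t) (cY A B C t) (cZ A B C t)
    (fun x => x * Real.log x)
  have hle := hqmax r hrpos hr1 hr2
  rw [hr] at hle
  rw [hent] at hle
  have hend0 : entT A B C 0 = A * Real.log A + B * Real.log B + C * Real.log C := by
    rw [entT]
    simp only [cX_zero, cY_zero, cZ_zero]
  rw [hend0, entT]
  simp only [← hA, ← hB, ← hC] at hle ⊢
  linarith

lemma S1 (k : ℕ) (hk : 2 ≤ k) (P lamk lam1 : ℝ) (hP : P = 1/(k:ℝ))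
    (hlamk : lamk = 1 / (k : ℝ) - Real.sqrt ((1 - 1 / (k : ℝ)) * (P - 1 / (k : ℝ))))
    (hlam1 : lam1 = (1 - lamk) / ((k : ℝ) - 1)) :
    (1 - lamk) * Real.log lam1 + lamk * Real.log lamk = -Real.log (k:ℝ) := by
  have hk2 : (2:ℝ) ≤ (k:ℝ) := by exact_mod_cast hk
  have hk0 : (0:ℝ) < (k:ℝ) := by linarith
  have hk1 : (k:ℝ) - 1 ≠ 0 := by linarith
  have h0 : (1 - 1/(k:ℝ)) * (P - 1/(k:ℝ)) = 0 := by rw [hP]; ring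
  rw [h0, Real.sqrt_zero, sub_zero] at hlamk
  have hl1 : lam1 = 1/(k:ℝ) := by
    rw [hlam1, hlamk]
    field_simp
  rw [hl1, hlamk, one_div, Real.log_inv]
  ring

lemma S2 (k : ℕ) (hk : 2 ≤ k) (P lamk lam1 : ℝ) (hP : P = 1/((k:ℝ)-1))
    (hlamk : lamk = 1 / (k : ℝ) - Real.sqrt ((1 - 1 / (k : ℝ)) * (P - 1 / (k : ℝ))))
    (hlam1 : lam1 = (1 - lamk) / ((k : ℝ) - 1)) :
    (1 - lamk) * Real.log lam1 + lamk * Real.log lamk = -Real.log ((k:ℝ)-1) := by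
  have hk2 : (2:ℝ) ≤ (k:ℝ) := by exact_mod_cast hk
  have hk0 : (0:ℝ) < (k:ℝ) := by linarith
  have hk0' : (k:ℝ) ≠ 0 := hk0.ne'
  have hk1 : (k:ℝ) - 1 ≠ 0 := by linarith
  have h0 : (1 - 1/(k:ℝ)) * (P - 1/(k:ℝ)) = (1/(k:ℝ))^2 := by
    rw [hP]
    field_simp
    ring
  rw [h0, Real.sqrt_sq (by positivity)] at hlamk
  have hlamk0 : lamk = 0 := by rw [hlamk]; ring
  have hl1 : lam1 = 1/((k:ℝ)-1) := by rw [hlam1, hlamk0]; ring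
  rw [hl1, hlamk0, one_div, Real.log_inv]
  ring

lemma S3 (k : ℕ) (hk : 2 ≤ k) (P lamk lam1 a b : ℝ)
    (hlamk : lamk = 1 / (k : ℝ) - Real.sqrt ((1 - 1 / (k : ℝ)) * (P - 1 / (k : ℝ))))
    (hlam1 : lam1 = (1 - lamk) / ((k : ℝ) - 1))
    (hb : 0 < b) (hba : b < a)
    (heq1 : ((k:ℝ)-1)*a + b = 1) (heq2 : ((k:ℝ)-1)*a^2 + b^2 = P) :
    b = lamk ∧ a = lam1 := by
  have hk2 : (2:ℝ) ≤ (k:ℝ) := by exact_mod_cast hk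
  have hk0 : (0:ℝ) < (k:ℝ) := by linarith
  have hk0' : (k:ℝ) ≠ 0 := hk0.ne'
  have hk1 : (0:ℝ) < (k:ℝ) - 1 := by linarith
  have hbk : b < 1/(k:ℝ) := by
    have h1 : ((k:ℝ)-1)*b < ((k:ℝ)-1)*a := by
      exact mul_lt_mul_of_pos_left hba hk1
    have h2 : (k:ℝ)*b < 1 := by nlinarith
    rw [lt_div_iff₀ hk0]
    linarith
  have ha : a = (1 - b)/((k:ℝ)-1) := by
    field_simp
    linarith
  have hsq : (1 - 1/(k:ℝ)) * (P - 1/(k:ℝ)) = (1/(k:ℝ) - b)^2 := by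
    rw [← heq2, ha]
    field_simp
    ring
  have hs : Real.sqrt ((1 - 1/(k:ℝ)) * (P - 1/(k:ℝ))) = 1/(k:ℝ) - b := by
    rw [hsq]
    exact Real.sqrt_sq (by linarith)
  have hbl : b = lamk := by rw [hlamk, hs]; ring
  refine ⟨hbl, ?_⟩
  rw [hlam1, ← hbl]
  exact ha

lemma exists_maxEnt {d : ℕ} {P : ℝ} (p : Fin d → ℝ) (hp0 : ∀ i, 0 ≤ p i)
    (hp1 : ∑ i, p i = 1) (hp2 : ∑ i, (p i)^2 = P) :
    ∃ q : Fin d → ℝ, (∀ i, 0 ≤ q i) ∧ (∑ i, q i = 1) ∧ (∑ i, (q i)^2 = P) ∧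
      ∀ r : Fin d → ℝ, (∀ i, 0 ≤ r i) → (∑ i, r i = 1) → (∑ i, (r i)^2 = P) →
        ∑ i, r i * Real.log (r i) ≤ ∑ i, q i * Real.log (q i) := by
  classical
  set K : Set (Fin d → ℝ) :=
    {x | (∀ i, 0 ≤ x i) ∧ (∑ i, x i = 1) ∧ (∑ i, (x i)^2 = P)} with hK
  have hsumcont : Continuous (fun x : Fin d → ℝ => ∑ i, x i) :=
    continuous_finset_sum _ (fun i _ => continuous_apply i)
  have hsqcont : Continuous (fun x : Fin d → ℝ => ∑ i, (x i)^2) :=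
    continuous_finset_sum _ (fun i _ => (continuous_apply i).pow 2)
  have hKclosed : IsClosed K := by
    have h1 : IsClosed {x : Fin d → ℝ | ∀ i, 0 ≤ x i} := by
      have : {x : Fin d → ℝ | ∀ i, 0 ≤ x i} = ⋂ i, {x : Fin d → ℝ | 0 ≤ x i} := by
        ext x; simp [Set.mem_iInter]
      rw [this]
      exact isClosed_iInter (fun i => isClosed_le continuous_const (continuous_apply i))
    have h2 : IsClosed {x : Fin d → ℝ | ∑ i, x i = 1} :=
      isClosed_eq hsumcont continuous_const
    have h3 : IsClosed {x : Fin d → ℝ | ∑ i, (x i)^2 = P} :=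
      isClosed_eq hsqcont continuous_const
    have : K = {x : Fin d → ℝ | ∀ i, 0 ≤ x i} ∩
        ({x : Fin d → ℝ | ∑ i, x i = 1} ∩ {x : Fin d → ℝ | ∑ i, (x i)^2 = P}) := by
      ext x; simp [hK, Set.mem_inter_iff, and_assoc]
    rw [this]
    exact h1.inter (h2.inter h3)
  have hKsub : K ⊆ Set.Icc 0 1 := by
    intro x hx
    obtain ⟨hx0, hx1, _⟩ := hx
    constructor
    · intro i; exact hx0 i
    · intro i
      calc x i ≤ ∑ j, x j := Finset.single_le_sum (fun j _ => hx0 j) (Finset.mem_univ i)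
        _ = 1 := hx1
  have hKcomp : IsCompact K := isCompact_Icc.of_isClosed_subset hKclosed hKsub
  have hKne : K.Nonempty := ⟨p, hp0, hp1, hp2⟩
  have hFcont : ContinuousOn (fun x : Fin d → ℝ => ∑ i, x i * Real.log (x i)) K :=
    (continuous_finset_sum _ (fun i _ =>
      (Real.continuous_mul_log).comp (continuous_apply i))).continuousOn
  obtain ⟨q, hqK, hqmax⟩ := hKcomp.exists_isMaxOn hKne hFcont
  exact ⟨q, hqK.1, hqK.2.1, hqK.2.2, fun r h1 h2 h3 => hqmax ⟨h1, h2, h3⟩⟩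

lemma key (k : ℕ) (hk : 2 ≤ k) (P lamk lam1 : ℝ)
    (hPlow : 1 / (k : ℝ) ≤ P) (hPhigh : P ≤ 1 / ((k : ℝ) - 1))
    (hlamk : lamk = 1 / (k : ℝ) - Real.sqrt ((1 - 1 / (k : ℝ)) * (P - 1 / (k : ℝ))))
    (hlam1 : lam1 = (1 - lamk) / ((k : ℝ) - 1)) :
    ∀ d (p : Fin d → ℝ), (∀ i, 0 ≤ p i) → (∑ i, p i = 1) → (∑ i, (p i)^2 = P) →
      ∑ i, p i * Real.log (p i) ≤ (1 - lamk) * Real.log lam1 + lamk * Real.log lamk := by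
  have hk2 : (2:ℝ) ≤ (k:ℝ) := by exact_mod_cast hk
  have hk0 : (0:ℝ) < (k:ℝ) := by linarith
  have hk1 : (0:ℝ) < (k:ℝ) - 1 := by linarith
  intro d
  induction d using Nat.strong_induction_on with
  | _ d IH =>
  intro p hpos hsum hsq
  rcases Nat.eq_zero_or_pos d with rfl | hd1
  · norm_num at hsum
  obtain ⟨q, hq0, hq1, hq2, hqmax⟩ := exists_maxEnt p hpos hsum hsq
  refine le_trans (hqmax p hpos hsum hsq) ?_
  by_cases hz : ∃ i0, q i0 = 0
  · obtain ⟨i0, hi0⟩ := hz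
    obtain ⟨d', rfl⟩ : ∃ d', d = d' + 1 := ⟨d - 1, by omega⟩
    have e1 := Fin.sum_univ_succAbove q i0
    have e2 := Fin.sum_univ_succAbove (fun i => (q i)^2) i0
    have e3 := Fin.sum_univ_succAbove (fun i => q i * Real.log (q i)) i0
    rw [e1, hi0] at hq1
    rw [e2, hi0] at hq2
    have hs1 : ∑ i : Fin d', q (i0.succAbove i) = 1 := by linarith
    have hs2 : ∑ i : Fin d', (q (i0.succAbove i))^2 = P := by nlinarith [hq2]
    rw [e3, hi0]
    simp only [Real.log_zero, zero_mul, mul_zero, zero_add]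
    exact IH d' (by omega) _ (fun i => hq0 _) hs1 hs2
  push_neg at hz
  have hqpos : ∀ i, 0 < q i := fun i => lt_of_le_of_ne (hq0 i) (Ne.symm (hz i))
  by_cases huni : ∀ m n : Fin d, q m = q n
  · -- uniform case
    set i0 : Fin d := ⟨0, hd1⟩ with hi0def
    have hd0 : (0:ℝ) < (d:ℝ) := by exact_mod_cast hd1
    have hval : ∀ m, q m = 1/(d:ℝ) := by
      have hsame : (1:ℝ) = (d:ℝ) * q i0 := by
        rw [← hq1, show (∑ m, q m) = ∑ _m : Fin d, q i0 from
          Finset.sum_congr rfl (fun m _ => huni m i0), Finset.sum_const,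
          Finset.card_univ, Fintype.card_fin, nsmul_eq_mul]
      intro m
      rw [huni m i0]
      field_simp
      linarith
    have hPd : P = 1/(d:ℝ) := by
      rw [← hq2, show (∑ m, (q m)^2) = ∑ _m : Fin d, (1/(d:ℝ))^2 from
        Finset.sum_congr rfl (fun m _ => by rw [hval m]), Finset.sum_const,
        Finset.card_univ, Fintype.card_fin, nsmul_eq_mul]
      field_simp
    have hFu : ∑ i, q i * Real.log (q i) = -Real.log (d:ℝ) := by
      rw [show (∑ m, q m * Real.log (q m)) = ∑ _m : Fin d, (1/(d:ℝ)) * Real.log (1/(d:ℝ)) from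
        Finset.sum_congr rfl (fun m _ => by rw [hval m]), Finset.sum_const,
        Finset.card_univ, Fintype.card_fin, nsmul_eq_mul, one_div, Real.log_inv]
      field_simp
    have hdk : d = k ∨ d = k - 1 := by
      have h1 : (k:ℝ) - 1 ≤ (d:ℝ) := by
        rw [hPd] at hPhigh
        exact le_of_one_div_le_one_div hd0 hPhigh
      have h2 : (d:ℝ) ≤ (k:ℝ) := by
        rw [hPd] at hPlow
        exact le_of_one_div_le_one_div hk0 hPlow
      have h3 : d ≤ k := by exact_mod_cast h2
      have h4 : k ≤ d + 1 := by
        have : (k:ℝ) ≤ (d:ℝ) + 1 := by linarith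
        exact_mod_cast this
      omega
    rw [hFu]
    rcases hdk with rfl | hdk1
    · rw [S1 d hk P lamk lam1 hPd hlamk hlam1]
    · have hcast : ((d:ℕ):ℝ) = (k:ℝ) - 1 := by
        rw [hdk1, Nat.cast_sub (by omega : 1 ≤ k)]
        norm_num
      rw [S2 k hk P lamk lam1 (by rw [hPd, hcast]) hlamk hlam1, hcast]
  · -- non-uniform case
    push_neg at huni
    obtain ⟨m0, n0, hmn⟩ := huni
    have hd2 : 2 ≤ d := by
      by_contra h
      have hd1' : d = 1 := by omega
      subst hd1'
      exact hmn (congrArg q (Subsingleton.elim m0 n0))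
    have hne : (Finset.univ : Finset (Fin d)).Nonempty := ⟨m0, Finset.mem_univ m0⟩
    set T := Finset.univ.image q with hT
    have hTne : T.Nonempty := hne.image q
    set b := T.min' hTne with hbdef
    set a := T.max' hTne with hadef
    have hmemT : ∀ m : Fin d, q m ∈ T := fun m => Finset.mem_image_of_mem q (Finset.mem_univ m)
    have hble : ∀ m, b ≤ q m := fun m => Finset.min'_le T _ (hmemT m)
    have halege : ∀ m, q m ≤ a := fun m => Finset.le_max' T _ (hmemT m)
    obtain ⟨ib, _, hib⟩ := Finset.mem_image.mp (T.min'_mem hTne)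
    obtain ⟨ia, _, hia⟩ := Finset.mem_image.mp (T.max'_mem hTne)
    rw [← hbdef] at hib
    rw [← hadef] at hia
    have hb0 : 0 < b := by rw [← hib]; exact hqpos ib
    have hba : b < a := by
      by_contra h
      push_neg at h
      have hall : ∀ m, q m = b := fun m => le_antisymm (le_trans (halege m) h) (hble m)
      exact hmn (by rw [hall m0, hall n0])
    have claim2 : ∀ m, q m = a ∨ q m = b := by
      intro m
      by_contra hcon
      push_neg at hcon
      obtain ⟨hna, hnb⟩ := hcon
      have h1 : b < q m := lt_of_le_of_ne (hble m) (Ne.symm hnb)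
      have h2 : q m < a := lt_of_le_of_ne (halege m) hna
      have hia_m : ia ≠ m := by
        intro h; rw [h] at hia; exact hna hia
      have hia_ib : ia ≠ ib := by
        intro h; rw [h] at hia; rw [hia] at hib; exact absurd hib (ne_of_gt hba)
      have hm_ib : m ≠ ib := by
        intro h; rw [h] at hnb; exact hnb hib
      have hloc := locmax hqpos hq1 hq2 hqmax hia_m hia_ib hm_ib
      rw [hia, hib] at hloc
      exact notLocalMax_case1 hb0 h1 h2 hloc
    have claim3 : ∀ i1 i2, q i1 = b → q i2 = b → i1 = i2 := by
      intro i1 i2 h1 h2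
      by_contra h12
      have hia1 : i1 ≠ ia := by
        intro h; rw [h] at h1; rw [h1] at hia; exact absurd hia.symm (ne_of_gt hba)
      have hia2 : i2 ≠ ia := by
        intro h; rw [h] at h2; rw [h2] at hia; exact absurd hia.symm (ne_of_gt hba)
      have hloc := locmax hqpos hq1 hq2 hqmax h12 hia1 hia2
      rw [h1, h2, hia] at hloc
      exact notLocalMax_case2 hb0 hba hloc
    have hother : ∀ m, m ≠ ib → q m = a := by
      intro m hm
      rcases claim2 m with h | h
      · exact h
      · exact absurd (claim3 m ib h hib) hm
    have hcard : (Finset.univ.erase ib).card = d - 1 := by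
      rw [Finset.card_erase_of_mem (Finset.mem_univ ib), Finset.card_univ, Fintype.card_fin]
    have hcast : ((d - 1 : ℕ) : ℝ) = (d:ℝ) - 1 := by
      rw [Nat.cast_sub (by omega : 1 ≤ d)]
      norm_num
    have hsplit : ∀ φ : ℝ → ℝ, ∑ m, φ (q m) = φ b + ((d:ℝ)-1) * φ a := by
      intro φ
      rw [← Finset.add_sum_erase _ _ (Finset.mem_univ ib), hib]
      congr 1
      rw [Finset.sum_congr rfl (fun m hm => by rw [hother m (Finset.ne_of_mem_erase hm)]),
        Finset.sum_const, hcard, nsmul_eq_mul, hcast]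
    have heq1 : ((d:ℝ)-1)*a + b = 1 := by
      have := hsplit (fun x => x)
      rw [hq1] at this
      linarith
    have heq2 : ((d:ℝ)-1)*a^2 + b^2 = P := by
      have := hsplit (fun x => x^2)
      rw [hq2] at this
      linarith
    have hFq : ∑ i, q i * Real.log (q i)
        = b * Real.log b + ((d:ℝ)-1) * (a * Real.log a) := hsplit (fun x => x * Real.log x)
    have hd0 : (0:ℝ) < (d:ℝ) := by exact_mod_cast hd1
    have hd2' : (2:ℝ) ≤ (d:ℝ) := by exact_mod_cast hd2
    have hdP : (d:ℝ) * P - 1 = ((d:ℝ)-1) * (a-b)^2 := by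
      rw [← heq2]; linear_combination (((d:ℝ)-1)*a + b + 1) * heq1
    have hdP2 : ((d:ℝ)-1) * P - 1 = b*(((d:ℝ)-2)*b - 2*((d:ℝ)-1)*a) := by
      rw [← heq2]; linear_combination (((d:ℝ)-1)*a + b + 1) * heq1
    have hP1 : 0 < (d:ℝ)*P - 1 := by
      rw [hdP]
      have h5 : (0:ℝ) < (a-b)^2 := by
        have : a - b ≠ 0 := by linarith
        positivity
      have h6 : (0:ℝ) < (d:ℝ) - 1 := by linarith
      exact mul_pos h6 h5
    have hP2 : ((d:ℝ)-1)*P - 1 < 0 := by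
      rw [hdP2]
      have ha0 : 0 < a := lt_trans hb0 hba
      have h7 : ((d:ℝ)-2)*b - 2*((d:ℝ)-1)*a < 0 := by
        have e1 : ((d:ℝ)-2) * b ≤ ((d:ℝ)-2) * a := mul_le_mul_of_nonneg_left hba.le (by linarith)
        have e2 : ((d:ℝ)-2) * a < 2*((d:ℝ)-1) * a :=
          mul_lt_mul_of_pos_right (by linarith) ha0
        linarith
      exact mul_neg_of_pos_of_neg hb0 h7
    have hkd : d = k := by
      have ha1 : (k:ℝ) - 1 < (d:ℝ) := by
        have hPgt : 1/(d:ℝ) < P := by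
          rw [div_lt_iff₀ hd0]
          linarith [hP1, mul_comm P (d:ℝ)]
        have h8 : 1/(d:ℝ) < 1/((k:ℝ)-1) := lt_of_lt_of_le hPgt hPhigh
        exact lt_of_one_div_lt_one_div hd0 h8
      have ha2 : (d:ℝ) - 1 < (k:ℝ) := by
        have hd1r : (0:ℝ) < (d:ℝ) - 1 := by linarith
        have hPlt : P < 1/((d:ℝ)-1) := by
          rw [lt_div_iff₀ hd1r]
          linarith [hP2, mul_comm P ((d:ℝ)-1)]
        have h9 : 1/(k:ℝ) < 1/((d:ℝ)-1) := lt_of_le_of_lt hPlow hPlt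
        exact lt_of_one_div_lt_one_div hk0 h9
      have hb1 : d < k + 1 := by exact_mod_cast (by linarith : (d:ℝ) < (k:ℝ)+1)
      have hb2 : k < d + 1 := by exact_mod_cast (by linarith : (k:ℝ) < (d:ℝ)+1)
      omega
    subst hkd
    obtain ⟨hbl, hal⟩ := S3 d hk P lamk lam1 a b hlamk hlam1 hb0 hba heq1 heq2
    rw [hFq, hbl, hal]
    have h10 : ((d:ℝ)-1) * lam1 = 1 - lamk := by
      rw [hlam1]
      field_simp
    have h11 : ((d:ℝ)-1) * (lam1 * Real.log lam1) = (1-lamk) * Real.log lam1 := by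
      rw [← h10]; ring
    linarith

/-- For `k ≥ 2` and `1/k ≤ P ≤ 1/(k−1)`, the vector with `k − 1`
entries equal to `λ₁ = (1 − λ_k)/(k − 1)` and one entry equal to
`λ_k = 1/k − √((1 − 1/k)(P − 1/k))` is a probability vector, has purity
`(k−1)λ₁² + λ_k² = P`, and has Shannon entropy exactly
`−[(1 − λ_k) ln λ₁ + λ_k ln λ_k]`; hence the minimum of the Shannon entropy over
probability vectors of fixed purity `P` equals `L(P)`. -/
theorem entropy_minimizer_at_fixed_purity
    (k : ℕ) (hk : 2 ≤ k) (P : ℝ)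
    (hPlow : 1 / (k : ℝ) ≤ P) (hPhigh : P ≤ 1 / ((k : ℝ) - 1))
    (lamk lam1 : ℝ)
    (hlamk : lamk = 1 / (k : ℝ) - Real.sqrt ((1 - 1 / (k : ℝ)) * (P - 1 / (k : ℝ))))
    (hlam1 : lam1 = (1 - lamk) / ((k : ℝ) - 1))
    (v : Fin k → ℝ) (hv : v = fun i : Fin k => if (i : ℕ) = 0 then lamk else lam1) :
    (∀ i, 0 ≤ v i) ∧ (∑ i, v i = 1) ∧
    (((k : ℝ) - 1) * lam1 ^ 2 + lamk ^ 2 = P) ∧ (∑ i, (v i) ^ 2 = P) ∧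
    (-(∑ i, v i * Real.log (v i)) =
      -((1 - lamk) * Real.log lam1 + lamk * Real.log lamk)) ∧
    IsLeast { H : ℝ | ∃ (d : ℕ) (p : Fin d → ℝ),
        (∀ i, 0 ≤ p i) ∧ (∑ i, p i = 1) ∧ (∑ i, (p i) ^ 2 = P) ∧
        H = -(∑ i, p i * Real.log (p i)) }
      (-((1 - lamk) * Real.log lam1 + lamk * Real.log lamk)) := by
  have hkey := key k hk P lamk lam1 hPlow hPhigh hlamk hlam1
  have hk2 : (2:ℝ) ≤ (k:ℝ) := by exact_mod_cast hk
  have hk0 : (0:ℝ) < (k:ℝ) := by linarith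
  have hk1 : (0:ℝ) < (k:ℝ) - 1 := by linarith
  set s := Real.sqrt ((1 - 1/(k:ℝ)) * (P - 1/(k:ℝ))) with hsdef
  have h1k : 1/(k:ℝ) ≤ 1 := by rw [div_le_one hk0]; linarith
  have harg : 0 ≤ (1 - 1/(k:ℝ)) * (P - 1/(k:ℝ)) :=
    mul_nonneg (by linarith) (by linarith)
  have hs2 : s^2 = (1 - 1/(k:ℝ)) * (P - 1/(k:ℝ)) := Real.sq_sqrt harg
  have hs0 : 0 ≤ s := Real.sqrt_nonneg _
  have hsle : s ≤ 1/(k:ℝ) := by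
    have heqq : (1 - 1/(k:ℝ)) * (1/((k:ℝ)-1) - 1/(k:ℝ)) = (1/(k:ℝ))^2 := by
      field_simp
      ring
    have harg2 : (1 - 1/(k:ℝ)) * (P - 1/(k:ℝ)) ≤ (1/(k:ℝ))^2 := by
      rw [← heqq]
      exact mul_le_mul_of_nonneg_left (by linarith) (by linarith)
    have h3 := Real.sqrt_le_sqrt harg2
    rwa [Real.sqrt_sq (by positivity)] at h3
  have hlamk0 : 0 ≤ lamk := by rw [hlamk]; linarith
  have hlamkle : lamk ≤ 1/(k:ℝ) := by rw [hlamk]; linarith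
  have hlam10 : 0 ≤ lam1 := by
    rw [hlam1]
    apply div_nonneg _ (by linarith)
    linarith
  have hC1 : ∀ i, 0 ≤ v i := by
    intro i
    rw [hv]
    dsimp only
    split_ifs
    · exact hlamk0
    · exact hlam10
  obtain ⟨k', rfl⟩ : ∃ k', k = k' + 1 := ⟨k - 1, by omega⟩
  have hk'1 : 1 ≤ k' := by omega
  have hkcast : ((k' + 1 : ℕ):ℝ) - 1 = (k':ℝ) := by push_cast; ring
  have hk'0 : (0:ℝ) < (k':ℝ) := by exact_mod_cast hk'1
  have hsum3 : ∀ φ : ℝ → ℝ, ∑ i : Fin (k'+1), φ (v i) = φ lamk + (k':ℝ) * φ lam1 := by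
    intro φ
    rw [hv, Fin.sum_univ_succ]
    simp only [Fin.val_zero, Fin.val_succ]
    norm_num
  have hk'lam1 : (k':ℝ) * lam1 = 1 - lamk := by
    rw [hlam1, hkcast]
    field_simp
  have hC2 : ∑ i, v i = 1 := by
    have := hsum3 (fun x => x)
    rw [this, hk'lam1]
    ring
  have hC3 : (((k' + 1 : ℕ):ℝ) - 1) * lam1^2 + lamk^2 = P := by
    rw [hkcast, hlam1, hlamk, hkcast]
    have h1 : (k':ℝ) * ((1 - (1/((k' + 1 : ℕ):ℝ) - s))/(k':ℝ))^2 + (1/((k' + 1 : ℕ):ℝ) - s)^2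
        = 1/((k' + 1 : ℕ):ℝ) + s^2 * (((k' + 1 : ℕ):ℝ)/(k':ℝ)) := by
      have hku : ((k' + 1 : ℕ):ℝ) = (k':ℝ) + 1 := by push_cast; ring
      rw [hku]
      field_simp
      ring
    rw [h1, hs2]
    have hku : ((k' + 1 : ℕ):ℝ) = (k':ℝ) + 1 := by push_cast; ring
    rw [hku]
    field_simp
    ring
  have hC4 : ∑ i, (v i)^2 = P := by
    have := hsum3 (fun x => x^2)
    rw [this, ← hC3, hkcast]
    ring
  have hC5 : -(∑ i, v i * Real.log (v i)) =
      -((1 - lamk) * Real.log lam1 + lamk * Real.log lamk) := by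
    have := hsum3 (fun x => x * Real.log x)
    rw [this]
    have h2 : (k':ℝ) * (lam1 * Real.log lam1) = (1 - lamk) * Real.log lam1 := by
      rw [← hk'lam1]; ring
    linarith
  refine ⟨hC1, hC2, hC3, hC4, hC5, ⟨⟨k' + 1, v, hC1, hC2, hC4, hC5.symm⟩, ?_⟩⟩
  rintro H ⟨dd, pp, h1, h2, h3, rfl⟩
  have := hkey dd pp h1 h2 h3
  linarith
end

section
/- Let d ≥ 2 and 1/d ≤ P ≤ 1. Set λ = 1/d + √((1 − 1/d)(P − 1/d)). Then for every probability vector (p₁,…,p_d) with Σ p_i² = P, the Shannon entropy satisfies −Σ_i p_i ln p_i ≤ −[(1 − λ) ln((1 − λ)/(d − 1)) + λ ln λ]. -/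
open Real Set

-- quadratic upper bound on -x log x, tangent at μ, equal at lam
lemma aux_quad_bound (μ lam c : ℝ) (hμ : 0 < μ) (hμL : μ < lam)
    (hc : -(lam * Real.log lam) =
      -(μ * Real.log μ) + (-Real.log μ - 1) * (lam - μ) + c * (lam - μ)^2) :
    ∀ x : ℝ, 0 ≤ x → x ≤ lam →
      -(x * Real.log x) ≤ -(μ * Real.log μ) + (-Real.log μ - 1) * (x - μ) + c * (x - μ)^2 := by
  set h : ℝ → ℝ := fun x => -(μ * Real.log μ) + (-Real.log μ - 1) * (x - μ) + c * (x - μ)^2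
      + x * Real.log x with hh
  set k : ℝ → ℝ := fun x => Real.log x - Real.log μ + 2*c*(x - μ) with hk
  have hderiv : ∀ x : ℝ, x ≠ 0 → HasDerivAt h (k x) x := by
    intro x hx
    have h1 : HasDerivAt (fun y : ℝ => (-Real.log μ - 1) * (y - μ)) ((-Real.log μ - 1) * 1) x :=
      ((hasDerivAt_id x).sub_const μ).const_mul _
    have h2 : HasDerivAt (fun y : ℝ => c * (y - μ)^2) (c * (2 * (x - μ)^1 * 1)) x :=
      (((hasDerivAt_id x).sub_const μ).pow 2).const_mul c
    have h3 := Real.hasDerivAt_mul_log hx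
    have := ((h1.const_add (-(μ * Real.log μ))).add h2).add h3
    convert this using 1
    show k x = _; simp only [hk]; ring
    all_goals rfl
  have hcont : Continuous h := by
    have : Continuous fun x : ℝ => -(μ * Real.log μ) + (-Real.log μ - 1) * (x - μ) + c * (x - μ)^2 := by
      continuity
    exact this.add Real.continuous_mul_log
  have hhμ : h μ = 0 := by simp [hh]
  have hhL : h lam = 0 := by simp only [hh]; linarith
  obtain ⟨ζ, hζmem, hζ⟩ : ∃ ζ ∈ Ioo μ lam, k ζ = 0 :=
    exists_hasDerivAt_eq_zero hμL hcont.continuousOn (hhμ.trans hhL.symm)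
      (fun x hx => hderiv x (ne_of_gt (hμ.trans hx.1)))
  have hζμ : μ < ζ := hζmem.1
  have hζL : ζ < lam := hζmem.2
  have hζpos : 0 < ζ := hμ.trans hζμ
  have hkμ : k μ = 0 := by simp [hk]
  -- strict concavity combination for k
  have hconc : ∀ x y t : ℝ, 0 < x → 0 < y → x ≠ y → 0 < t → t < 1 →
      t * k x + (1-t) * k y < k (t*x + (1-t)*y) := by
    intro x y t hx hy hxy ht ht1
    have hlog := strictConcaveOn_log_Ioi.2 (mem_Ioi.2 hx) (mem_Ioi.2 hy) hxy ht
      (show (0:ℝ) < 1 - t by linarith) (by ring)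
    simp only [smul_eq_mul] at hlog
    simp only [hk]
    have hlin : t*(2*c*(x-μ)) + (1-t)*(2*c*(y-μ)) = 2*c*(t*x+(1-t)*y-μ) := by ring
    linarith [hlog, hlin]
  have hkneg_left : ∀ x : ℝ, 0 < x → x < μ → k x < 0 := by
    intro x hx hxμ
    have ht : (0:ℝ) < (ζ - μ)/(ζ - x) := by
      apply div_pos <;> linarith
    have ht1 : (ζ - μ)/(ζ - x) < 1 := by
      rw [div_lt_one (by linarith)]; linarith
    have hne : ζ - x ≠ 0 := ne_of_gt (by linarith)
    have hmix : (ζ - μ)/(ζ - x) * x + (1 - (ζ - μ)/(ζ - x)) * ζ = μ := by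
      field_simp
      ring
    have := hconc x ζ ((ζ - μ)/(ζ - x)) hx hζpos (by intro he; rw [he] at hxμ; linarith) ht ht1
    rw [hmix, hkμ, hζ] at this
    by_contra hge
    push_neg at hge
    nlinarith [mul_nonneg ht.le hge]
  have hkpos_mid : ∀ x : ℝ, μ < x → x < ζ → 0 < k x := by
    intro x hxμ hxζ
    have ht : (0:ℝ) < (ζ - x)/(ζ - μ) := by apply div_pos <;> linarith
    have ht1 : (ζ - x)/(ζ - μ) < 1 := by rw [div_lt_one (by linarith)]; linarith
    have hne : ζ - μ ≠ 0 := ne_of_gt (by linarith)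
    have hmix : (ζ - x)/(ζ - μ) * μ + (1 - (ζ - x)/(ζ - μ)) * ζ = x := by
      field_simp; ring
    have := hconc μ ζ ((ζ - x)/(ζ - μ)) hμ hζpos (by intro he; linarith) ht ht1
    rw [hmix, hkμ, hζ] at this
    by_contra hge
    push_neg at hge
    nlinarith [mul_nonpos_of_nonneg_of_nonpos (by linarith : (0:ℝ) ≤ 1 - (ζ - x)/(ζ - μ)) hge]
  have hkneg_right : ∀ x : ℝ, ζ < x → k x < 0 := by
    intro x hxζ
    have hx : 0 < x := hζpos.trans hxζ
    have ht : (0:ℝ) < (x - ζ)/(x - μ) := by apply div_pos <;> linarith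
    have ht1 : (x - ζ)/(x - μ) < 1 := by rw [div_lt_one (by linarith)]; linarith
    have hne : x - μ ≠ 0 := ne_of_gt (by linarith)
    have hmix : (x - ζ)/(x - μ) * μ + (1 - (x - ζ)/(x - μ)) * x = ζ := by
      field_simp; ring
    have := hconc μ x ((x - ζ)/(x - μ)) hμ hx (by intro he; linarith) ht ht1
    rw [hmix, hkμ, hζ] at this
    by_contra hge
    push_neg at hge
    nlinarith [mul_nonneg (by linarith : (0:ℝ) ≤ 1 - (x - ζ)/(x - μ)) hge]
  -- main claim for positive x
  have main : ∀ x : ℝ, 0 < x → x ≤ lam → 0 ≤ h x := by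
    intro x hx hxL
    rcases lt_trichotomy x μ with hxμ | hxμ | hxμ
    · -- h strictly anti on [x, μ]
      have hanti : StrictAntiOn h (Icc x μ) := by
        apply strictAntiOn_of_deriv_neg (convex_Icc x μ) hcont.continuousOn
        intro y hy
        rw [interior_Icc] at hy
        rw [(hderiv y (ne_of_gt (hx.trans hy.1))).deriv]
        exact hkneg_left y (hx.trans hy.1) hy.2
      have := hanti (left_mem_Icc.2 hxμ.le) (right_mem_Icc.2 hxμ.le) hxμ
      rw [hhμ] at this; linarith
    · rw [hxμ, hhμ]
    · rcases le_or_gt x ζ with hxζ | hxζ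
      · have hmono : StrictMonoOn h (Icc μ x) := by
          apply strictMonoOn_of_deriv_pos (convex_Icc μ x) hcont.continuousOn
          intro y hy
          rw [interior_Icc] at hy
          rw [(hderiv y (ne_of_gt (hμ.trans hy.1))).deriv]
          exact hkpos_mid y hy.1 (lt_of_lt_of_le hy.2 hxζ)
        have := hmono (left_mem_Icc.2 hxμ.le) (right_mem_Icc.2 hxμ.le) hxμ
        rw [hhμ] at this; linarith
      · rcases eq_or_lt_of_le hxL with hxl | hxl
        · rw [hxl, hhL]
        · have hanti : StrictAntiOn h (Icc x lam) := by
            apply strictAntiOn_of_deriv_neg (convex_Icc x lam) hcont.continuousOn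
            intro y hy
            rw [interior_Icc] at hy
            rw [(hderiv y (ne_of_gt (hx.trans hy.1))).deriv]
            exact hkneg_right y (hxζ.trans hy.1)
          have := hanti (left_mem_Icc.2 hxl.le) (right_mem_Icc.2 hxl.le) hxl
          rw [hhL] at this; linarith
  intro x hx0 hxL
  rcases eq_or_lt_of_le hx0 with hx | hx
  · -- x = 0, use continuity
    have h0 : 0 ≤ h 0 := by
      have htend : Filter.Tendsto h (nhdsWithin 0 (Ioi 0)) (nhds (h 0)) :=
        (hcont.continuousAt).continuousWithinAt.tendsto
      refine ge_of_tendsto htend ?_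
      filter_upwards [Ioo_mem_nhdsGT_of_mem (Set.left_mem_Ico.2 hμ)] with y hy
      exact main y hy.1 (le_of_lt (hy.2.trans hμL))
    rw [← hx]
    have h0' : 0 ≤ -(μ * Real.log μ) + (-Real.log μ - 1) * (0 - μ) + c * (0 - μ)^2
        + 0 * Real.log 0 := by simpa [hh] using h0
    linarith
  · have h0' : 0 ≤ -(μ * Real.log μ) + (-Real.log μ - 1) * (x - μ) + c * (x - μ)^2
        + x * Real.log x := by simpa [hh] using main x hx hxL
    linarith


set_option maxHeartbeats 1000000 in
/-- For every probability vector `p` in dimension `d ≥ 2` with purity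
`∑ pᵢ² = P`, where `1/d ≤ P ≤ 1`, the Shannon entropy `−∑ pᵢ ln pᵢ` is at most
`−[(1 − λ) ln((1 − λ)/(d − 1)) + λ ln λ]`, with `λ = 1/d + √((1 − 1/d)(P − 1/d))`. -/
theorem entropy_upper_bound_at_fixed_purity
    (d : ℕ) (hd : 2 ≤ d) (P : ℝ)
    (hPlow : 1 / (d : ℝ) ≤ P) (hPhigh : P ≤ 1)
    (lam : ℝ)
    (hlam : lam = 1 / (d : ℝ) + Real.sqrt ((1 - 1 / (d : ℝ)) * (P - 1 / (d : ℝ))))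
    (p : Fin d → ℝ) (hp0 : ∀ i, 0 ≤ p i) (hpsum : ∑ i, p i = 1)
    (hpur : ∑ i, (p i) ^ 2 = P) :
    -(∑ i, p i * Real.log (p i)) ≤
      -((1 - lam) * Real.log ((1 - lam) / ((d : ℝ) - 1)) + lam * Real.log lam) := by
  have hD2 : (2:ℝ) ≤ (d:ℝ) := by exact_mod_cast hd
  have hD0 : (d:ℝ) ≠ 0 := by linarith
  have hDm1 : (0:ℝ) < (d:ℝ) - 1 := by linarith
  have h1d : (0:ℝ) ≤ 1 - 1/(d:ℝ) := by
    have : 1/(d:ℝ) ≤ 1/2 := by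
      apply one_div_le_one_div_of_le <;> linarith
    linarith
  have hple1 : ∀ i, p i ≤ 1 := by
    intro i
    calc p i ≤ ∑ j, p j := Finset.single_le_sum (fun j _ => hp0 j) (Finset.mem_univ i)
    _ = 1 := hpsum
  rcases eq_or_lt_of_le hPhigh with hP1 | hP1
  · -- P = 1 : point mass
    have hlam1 : lam = 1 := by
      rw [hlam, hP1, Real.sqrt_mul_self h1d]; ring
    have hzero : ∀ i ∈ Finset.univ, p i * Real.log (p i) = 0 := by
      have hsum0 : ∑ i, (p i - (p i)^2) = 0 := by
        rw [Finset.sum_sub_distrib, hpsum, hpur, hP1]; ring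
      intro i hi
      have hterm := (Finset.sum_eq_zero_iff_of_nonneg
        (fun j _ => by nlinarith [hp0 j, hple1 j])).1 hsum0 i hi
      have : p i * (1 - p i) = 0 := by nlinarith
      rcases mul_eq_zero.1 this with h | h
      · rw [h]; simp
      · have : p i = 1 := by linarith
        rw [this]; simp
    rw [Finset.sum_eq_zero hzero, hlam1]
    simp
  rcases eq_or_lt_of_le hPlow with hPd | hPd
  · -- P = 1/d : uniform
    have hlam1 : lam = 1/(d:ℝ) := by
      rw [hlam, ← hPd]; simp
    have huni : ∀ i, p i = 1/(d:ℝ) := by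
      have hsum0 : ∑ i, (p i - 1/(d:ℝ))^2 = 0 := by
        have expand : ∀ i : Fin d, (p i - 1/(d:ℝ))^2
            = (p i)^2 - (2/(d:ℝ)) * p i + (1/(d:ℝ))^2 := fun i => by ring
        simp_rw [expand]
        rw [Finset.sum_add_distrib, Finset.sum_sub_distrib, hpur, ← Finset.mul_sum, hpsum,
          Finset.sum_const, Finset.card_univ, Fintype.card_fin, nsmul_eq_mul]
        rw [← hPd]
        field_simp
        ring
      intro i
      have := (Finset.sum_eq_zero_iff_of_nonneg (fun j _ => sq_nonneg _)).1 hsum0 i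
        (Finset.mem_univ i)
      have := pow_eq_zero_iff (n := 2) (by norm_num) |>.1 this
      linarith
    have hXsum : ∑ i, p i * Real.log (p i)
        = (d:ℝ) * ((1/(d:ℝ)) * Real.log (1/(d:ℝ))) := by
      rw [Finset.sum_congr rfl (fun i _ => by rw [huni i])]
      rw [Finset.sum_const, Finset.card_univ, Fintype.card_fin, nsmul_eq_mul]
    rw [hXsum, hlam1]
    have hq : (1 - 1/(d:ℝ)) / ((d:ℝ) - 1) = 1/(d:ℝ) := by
      field_simp
    rw [hq]
    have hcancel : (d:ℝ) * ((1/(d:ℝ)) * Real.log (1/(d:ℝ))) = Real.log (1/(d:ℝ)) := by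
      field_simp
    rw [hcancel]
    have : (1 - 1/(d:ℝ)) * Real.log (1/(d:ℝ)) + (1/(d:ℝ)) * Real.log (1/(d:ℝ))
        = Real.log (1/(d:ℝ)) := by ring
    rw [this]
  · -- main case 1/d < P < 1
    set D := (d:ℝ) with hDdef
    set s := Real.sqrt ((1 - 1/D) * (P - 1/D)) with hsdef
    have hs0 : 0 ≤ s := Real.sqrt_nonneg _
    have hs2 : s^2 = (1 - 1/D) * (P - 1/D) :=
      Real.sq_sqrt (mul_nonneg h1d (by linarith))
    have h1dpos : (0:ℝ) < 1 - 1/D := by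
      have : 1/D ≤ 1/2 := by apply one_div_le_one_div_of_le <;> linarith
      linarith
    have hspos : 0 < s := Real.sqrt_pos.2 (mul_pos h1dpos (by linarith))
    have hslt : s < 1 - 1/D := by nlinarith [hs2]
    set μ := (1 - lam)/(D - 1) with hμdef
    have hμeq : (D - 1) * μ = 1 - lam := by
      rw [hμdef]; field_simp
    have hlamlt1 : lam < 1 := by rw [hlam]; push_cast; linarith
    have hμpos : 0 < μ := div_pos (by linarith) hDm1
    have hlamgt : 1/D < lam := by rw [hlam]; linarith
    have hμlt : μ < 1/D := by
      rw [hμdef, div_lt_iff₀ hDm1, hlam]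
      have : 1/D * (D - 1) = 1 - 1/D := by field_simp
      rw [this]
      linarith
    have hμlam : μ < lam := hμlt.trans hlamgt
    have hlamμ : lam - μ ≠ 0 := ne_of_gt (by linarith)
    -- polynomial identities
    have hlamD : D * lam = 1 + D * s := by rw [hlam]; field_simp
    have hs2' : D^2 * s^2 = (D - 1) * (D * P - 1) := by
      rw [hs2]; field_simp
    have I2big : D^2 * ((D-1)*lam^2 + (1-lam)^2) = D^2 * ((D-1)*P) := by
      linear_combination D * hs2' + (D*(D*lam - 1 + D*s)) * hlamD
    have I2 : (D-1)*lam^2 + (1-lam)^2 = (D-1)*P :=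
      mul_left_cancel₀ (pow_ne_zero 2 hD0) I2big
    have I2μ : (D-1)*μ^2 = P - lam^2 :=
      mul_left_cancel₀ (ne_of_gt hDm1) (by linear_combination ((D-1)*μ + (1-lam)) * hμeq + I2)
    -- max entry bound
    have hmax : ∀ i, p i ≤ lam := by
      intro i
      by_contra hgt
      push_neg at hgt
      have hcard : ((Finset.univ.erase i).card : ℝ) = D - 1 := by
        rw [Finset.card_erase_of_mem (Finset.mem_univ i), Finset.card_univ, Fintype.card_fin]
        have : (1:ℕ) ≤ d := by omega
        push_cast [Nat.cast_sub this]
        ring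
      have hCS := sq_sum_le_card_mul_sum_sq (s := Finset.univ.erase i) (f := p)
      have hsub1 : ∑ j ∈ Finset.univ.erase i, p j = 1 - p i := by
        have := Finset.add_sum_erase Finset.univ p (Finset.mem_univ i)
        rw [hpsum] at this; linarith
      have hsub2 : ∑ j ∈ Finset.univ.erase i, (p j)^2 = P - (p i)^2 := by
        have := Finset.add_sum_erase Finset.univ (fun j => (p j)^2) (Finset.mem_univ i)
        rw [hpur] at this; simp at this ⊢; linarith
      rw [hsub1, hsub2, hcard] at hCS
      have hDlam : 1 ≤ D * lam := by rw [hlamD]; nlinarith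
      have hbr : 0 < D * (p i + lam) - 2 := by
        nlinarith [mul_lt_mul_of_pos_left hgt (show (0:ℝ) < D by linarith)]
      nlinarith [mul_pos (sub_pos.2 hgt) hbr, I2, hCS]
    -- quadratic coefficient
    set c := (-(lam * Real.log lam) - (-(μ * Real.log μ)) - (-Real.log μ - 1) * (lam - μ))
        / (lam - μ)^2 with hcdef
    have hc : -(lam * Real.log lam) =
        -(μ * Real.log μ) + (-Real.log μ - 1) * (lam - μ) + c * (lam - μ)^2 := by
      rw [hcdef]; field_simp; ring
    have key := aux_quad_bound μ lam c hμpos hμlam hc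
    clear_value s μ c
    -- summation
    have step1 : ∑ i, -(p i * Real.log (p i)) ≤
        ∑ i, (-(μ * Real.log μ) + (-Real.log μ - 1) * (p i - μ) + c * (p i - μ)^2) :=
      Finset.sum_le_sum (fun i _ => key (p i) (hp0 i) (hmax i))
    have step2 : ∑ i, (-(μ * Real.log μ) + (-Real.log μ - 1) * (p i - μ) + c * (p i - μ)^2)
        = D * (-(μ * Real.log μ)) + (-Real.log μ - 1) * (1 - D*μ) + c * (P - 2*μ + D*μ^2) := by
      have expand : ∀ i : Fin d, -(μ * Real.log μ) + (-Real.log μ - 1) * (p i - μ) + c * (p i - μ)^2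
          = (-(μ * Real.log μ) - (-Real.log μ - 1)*μ + c*μ^2)
            + ((-Real.log μ - 1) - 2*c*μ) * (p i) + c * (p i)^2 := fun i => by ring
      simp_rw [expand]
      rw [Finset.sum_add_distrib, Finset.sum_add_distrib, Finset.sum_const, ← Finset.mul_sum,
        ← Finset.mul_sum, hpsum, hpur, Finset.card_univ, Fintype.card_fin, nsmul_eq_mul]
      ring
    have step3 : D * (-(μ * Real.log μ)) + (-Real.log μ - 1) * (1 - D*μ) + c * (P - 2*μ + D*μ^2)
        = -((1 - lam) * Real.log μ + lam * Real.log lam) := by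
      linear_combination (1 + 2*c*μ) * hμeq - c * I2μ - hc
    have lhs_eq : -(∑ i, p i * Real.log (p i)) = ∑ i, -(p i * Real.log (p i)) := by
      rw [← Finset.sum_neg_distrib]
    rw [lhs_eq]
    exact step1.trans (le_of_eq (step2.trans step3))
end

section
/- Let d ≥ 2 and 1/d ≤ P ≤ 1, and set λ = 1/d + √((1 − 1/d)(P − 1/d)). Then the vector in ℝ^d with one entry equal to λ and d − 1 entries equal to (1 − λ)/(d − 1) is a probability vector, has purity λ² + (1 − λ)²/(d − 1) = P, and has Shannon entropy exactly −[(1 − λ) ln((1 − λ)/(d − 1)) + λ ln λ]; hence the maximum of the Shannon entropy over probability vectors in ℝ^d of fixed purity P equals U(P,d). -/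
open Real Finset Set
set_option maxHeartbeats 1000000

lemma log_slope_bounds {u w : ℝ} (hu : 0 < u) (huw : u < w) :
    (w - u) / w < Real.log w - Real.log u ∧ Real.log w - Real.log u < (w - u) / u := by
  have hw : 0 < w := lt_trans hu huw
  constructor
  · have h : Real.log (u / w) < u / w - 1 :=
      Real.log_lt_sub_one_of_pos (by positivity) (by
        intro h; rw [div_eq_one_iff_eq (ne_of_gt hw)] at h; exact absurd h (ne_of_lt huw))
    rw [Real.log_div (ne_of_gt hu) (ne_of_gt hw)] at h
    have h2 : u / w - 1 = -((w - u) / w) := by field_simp; ring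
    linarith [h2 ▸ h]
  · have h : Real.log (w / u) < w / u - 1 :=
      Real.log_lt_sub_one_of_pos (by positivity) (by
        intro h; rw [div_eq_one_iff_eq (ne_of_gt hu)] at h; exact absurd h.symm (ne_of_lt huw))
    rw [Real.log_div (ne_of_gt hw) (ne_of_gt hu)] at h
    have h2 : w / u - 1 = (w - u) / u := by field_simp
    linarith


/-- Key pointwise inequality: the quadratic that is tangent to `x log x` at `μ` and passes
through the point at `lam` lies below `x log x` on `[0, lam]`. -/
lemma key_pointwise (μ lam c : ℝ) (hμ0 : 0 < μ) (hml : μ < lam)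
    (hclam : lam * Real.log lam =
      μ * Real.log μ + (1 + Real.log μ) * (lam - μ) + c * (lam - μ) ^ 2) :
    ∀ x, 0 ≤ x → x ≤ lam →
      μ * Real.log μ + (1 + Real.log μ) * (x - μ) + c * (x - μ) ^ 2 ≤ x * Real.log x := by
  set ψ : ℝ → ℝ := fun x => x * Real.log x -
    (μ * Real.log μ + (1 + Real.log μ) * (x - μ) + c * (x - μ) ^ 2) with hψdef
  set g : ℝ → ℝ := fun x => Real.log x - Real.log μ - 2 * c * (x - μ) with hgdef
  have hcont : Continuous ψ := by
    apply Real.continuous_mul_log.sub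
    fun_prop
  have hderiv : ∀ x : ℝ, x ≠ 0 → HasDerivAt ψ (g x) x := by
    intro x hx
    have h1 := Real.hasDerivAt_mul_log hx
    have ha : HasDerivAt (fun y : ℝ => y - μ) 1 x := (hasDerivAt_id x).sub_const μ
    have hb : HasDerivAt (fun y : ℝ => (y - μ) ^ 2) (2 * (x - μ)) x := by
      have := ha.pow 2
      exact this.congr_deriv (by norm_num)
    have h2 : HasDerivAt (fun y => μ * Real.log μ + (1 + Real.log μ) * (y - μ) + c * (y - μ) ^ 2)
        ((1 + Real.log μ) * 1 + c * (2 * (x - μ))) x :=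
      ((ha.const_mul (1 + Real.log μ)).const_add (μ * Real.log μ)).add (hb.const_mul c)
    have h3 := h1.sub h2
    exact h3.congr_deriv (by show _ = Real.log x - Real.log μ - 2 * c * (x - μ); ring)
  have hψμ : ψ μ = 0 := by simp [hψdef]
  have hpsl : ψ lam = 0 := by simp only [hψdef]; linarith [hclam]
  -- Rolle
  obtain ⟨ρ, hρmem, hgρ⟩ := exists_hasDerivAt_eq_zero hml hcont.continuousOn
    (hψμ.trans hpsl.symm) (fun x hx => hderiv x (ne_of_gt (lt_trans hμ0 hx.1)))
  have hρμ : μ < ρ := hρmem.1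
  have hrl : ρ < lam := hρmem.2
  have hρ0 : 0 < ρ := lt_trans hμ0 hρμ
  have h2c : 2 * c * (ρ - μ) = Real.log ρ - Real.log μ := by
    simp only [hgdef] at hgρ; linarith
  -- sign of g on the three regions
  have hg_left : ∀ x, 0 < x → x < μ → g x ≤ 0 := by
    intro x hx hxμ
    have hd1 := (log_slope_bounds hx hxμ).1  -- (μ-x)/μ < log μ - log x
    have hd2 := (log_slope_bounds hμ0 hρμ).2  -- log ρ - log μ < (ρ-μ)/μ
    have hμρ : 0 < ρ - μ := by linarith
    have hxμ' : x - μ < 0 := by linarith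
    have p1 : (μ - x) / μ * (ρ - μ) < (Real.log μ - Real.log x) * (ρ - μ) :=
      mul_lt_mul_of_pos_right hd1 hμρ
    have p2 : (ρ - μ) / μ * (x - μ) < (Real.log ρ - Real.log μ) * (x - μ) :=
      mul_lt_mul_of_neg_right hd2 hxμ'
    have pe : (μ - x) / μ * (ρ - μ) + (ρ - μ) / μ * (x - μ) = 0 := by ring
    have key : (Real.log x - Real.log μ) * (ρ - μ) ≤ (Real.log ρ - Real.log μ) * (x - μ) := by
      nlinarith [p1, p2, pe]
    rw [← h2c] at key
    simp only [hgdef]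
    nlinarith [key, hμρ]
  have hg_mid : ∀ x, μ < x → x < ρ → 0 ≤ g x := by
    intro x hμx hxρ
    have hx0 : 0 < x := lt_trans hμ0 hμx
    have hA := (log_slope_bounds hμ0 hμx).1  -- (x-μ)/x < log x - log μ
    have hB := (log_slope_bounds hx0 hxρ).2  -- log ρ - log x < (ρ-x)/x
    have h1 : 0 < ρ - x := by linarith
    have h2 : 0 < x - μ := by linarith
    have hμρ : 0 < ρ - μ := by linarith
    have p1 : (x - μ) / x * (ρ - x) < (Real.log x - Real.log μ) * (ρ - x) :=
      mul_lt_mul_of_pos_right hA h1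
    have p2 : (Real.log ρ - Real.log x) * (x - μ) < (ρ - x) / x * (x - μ) :=
      mul_lt_mul_of_pos_right hB h2
    have pe : (x - μ) / x * (ρ - x) = (ρ - x) / x * (x - μ) := by ring
    have key : (Real.log ρ - Real.log x) * (x - μ) ≤ (Real.log x - Real.log μ) * (ρ - x) := by
      nlinarith [p1, p2, pe]
    have key2 : (Real.log ρ - Real.log μ) * (x - μ) ≤ (Real.log x - Real.log μ) * (ρ - μ) := by
      nlinarith [key]
    rw [← h2c] at key2
    simp only [hgdef]
    nlinarith [key2, hμρ]
  have hg_right : ∀ x, ρ < x → g x ≤ 0 := by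
    intro x hρx
    have hx0 : 0 < x := lt_trans hρ0 hρx
    have hC := (log_slope_bounds hρ0 hρx).2  -- log x - log ρ < (x-ρ)/ρ
    have hD := (log_slope_bounds hμ0 hρμ).1  -- (ρ-μ)/ρ < log ρ - log μ
    have h1 : 0 < ρ - μ := by linarith
    have h2 : 0 < x - ρ := by linarith
    have p1 : (Real.log x - Real.log ρ) * (ρ - μ) < (x - ρ) / ρ * (ρ - μ) :=
      mul_lt_mul_of_pos_right hC h1
    have p2 : (ρ - μ) / ρ * (x - ρ) < (Real.log ρ - Real.log μ) * (x - ρ) :=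
      mul_lt_mul_of_pos_right hD h2
    have pe : (x - ρ) / ρ * (ρ - μ) = (ρ - μ) / ρ * (x - ρ) := by ring
    have key : (Real.log x - Real.log ρ) * (ρ - μ) ≤ (Real.log ρ - Real.log μ) * (x - ρ) := by
      nlinarith [p1, p2, pe]
    have key2 : (Real.log x - Real.log μ) * (ρ - μ) ≤ (Real.log ρ - Real.log μ) * (x - μ) := by
      nlinarith [key]
    rw [← h2c] at key2
    simp only [hgdef]
    nlinarith [key2, h1]
  -- monotonicity on the three regions
  have hanti1 : AntitoneOn ψ (Set.Icc 0 μ) := by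
    apply antitoneOn_of_deriv_nonpos (convex_Icc 0 μ) hcont.continuousOn
    · intro x hx
      rw [interior_Icc] at hx
      exact (hderiv x (ne_of_gt hx.1)).differentiableAt.differentiableWithinAt
    · intro x hx
      rw [interior_Icc] at hx
      rw [(hderiv x (ne_of_gt hx.1)).deriv]
      exact hg_left x hx.1 hx.2
  have hmono2 : MonotoneOn ψ (Set.Icc μ ρ) := by
    apply monotoneOn_of_deriv_nonneg (convex_Icc μ ρ) hcont.continuousOn
    · intro x hx
      rw [interior_Icc] at hx
      exact (hderiv x (ne_of_gt (lt_trans hμ0 hx.1))).differentiableAt.differentiableWithinAt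
    · intro x hx
      rw [interior_Icc] at hx
      rw [(hderiv x (ne_of_gt (lt_trans hμ0 hx.1))).deriv]
      exact hg_mid x hx.1 hx.2
  have hanti3 : AntitoneOn ψ (Set.Icc ρ lam) := by
    apply antitoneOn_of_deriv_nonpos (convex_Icc ρ lam) hcont.continuousOn
    · intro x hx
      rw [interior_Icc] at hx
      exact (hderiv x (ne_of_gt (lt_trans hρ0 hx.1))).differentiableAt.differentiableWithinAt
    · intro x hx
      rw [interior_Icc] at hx
      rw [(hderiv x (ne_of_gt (lt_trans hρ0 hx.1))).deriv]
      exact hg_right x hx.1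
  -- conclude ψ ≥ 0 on [0, lam]
  intro x hx0 hxlam
  have hψx : 0 ≤ ψ x := by
    rcases le_or_gt x μ with hcase | hcase
    · have := hanti1 ⟨hx0, hcase⟩ ⟨hμ0.le, le_refl μ⟩ hcase
      rw [hψμ] at this; exact this
    · rcases le_or_gt x ρ with hcase2 | hcase2
      · have := hmono2 ⟨le_refl μ, hρμ.le⟩ ⟨hcase.le, hcase2⟩ hcase.le
        rw [hψμ] at this; exact this
      · have := hanti3 ⟨hcase2.le, hxlam⟩ ⟨hrl.le, le_refl lam⟩ hxlam
        rw [hpsl] at this; exact this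
  simp only [hψdef] at hψx
  linarith

/-- sum over `Fin d` of a function that is `A` at index value 0 and `B` elsewhere. -/
lemma sum_ite_fin (d : ℕ) (hd : 0 < d) (A B : ℝ) :
    (∑ i : Fin d, if (i : ℕ) = 0 then A else B) = A + ((d : ℝ) - 1) * B := by
  have h : ∀ i : Fin d, (if (i : ℕ) = 0 then A else B)
      = (if i = (⟨0, hd⟩ : Fin d) then A - B else 0) + B := by
    intro i
    by_cases h : (i : ℕ) = 0
    · rw [if_pos h, if_pos (Fin.ext h), sub_add_cancel]
    · rw [if_neg h, if_neg (fun hc => h (by rw [hc])), zero_add]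
  rw [Finset.sum_congr rfl (fun i _ => h i), Finset.sum_add_distrib,
    Fintype.sum_ite_eq' (⟨0, hd⟩ : Fin d) (fun _ => A - B), Finset.sum_const,
    Finset.card_univ, Fintype.card_fin, nsmul_eq_mul]
  ring

/-- For `d ≥ 2` and `1/d ≤ P ≤ 1`, the vector in `ℝ^d` with one entry
equal to `λ = 1/d + √((1 − 1/d)(P − 1/d))` and `d − 1` entries equal to
`(1 − λ)/(d − 1)` is a probability vector, has purity `λ² + (1 − λ)²/(d − 1) = P`,
and has Shannon entropy exactly `−[(1 − λ) ln((1 − λ)/(d − 1)) + λ ln λ]`; hence the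
maximum of the Shannon entropy over probability vectors in `ℝ^d` of fixed purity `P`
equals `U(P,d)`. -/
theorem entropy_maximizer_at_fixed_purity
    (d : ℕ) (hd : 2 ≤ d) (P : ℝ)
    (hPlow : 1 / (d : ℝ) ≤ P) (hPhigh : P ≤ 1)
    (lam : ℝ)
    (hlam : lam = 1 / (d : ℝ) + Real.sqrt ((1 - 1 / (d : ℝ)) * (P - 1 / (d : ℝ))))
    (v : Fin d → ℝ) (hv : v = fun i : Fin d => if (i : ℕ) = 0 then lam else (1 - lam) / ((d : ℝ) - 1)) :
    (∀ i, 0 ≤ v i) ∧ (∑ i, v i = 1) ∧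
    (lam ^ 2 + (1 - lam) ^ 2 / ((d : ℝ) - 1) = P) ∧ (∑ i, (v i) ^ 2 = P) ∧
    (-(∑ i, v i * Real.log (v i)) =
      -((1 - lam) * Real.log ((1 - lam) / ((d : ℝ) - 1)) + lam * Real.log lam)) ∧
    IsGreatest { H : ℝ | ∃ p : Fin d → ℝ,
        (∀ i, 0 ≤ p i) ∧ (∑ i, p i = 1) ∧ (∑ i, (p i) ^ 2 = P) ∧
        H = -(∑ i, p i * Real.log (p i)) }
      (-((1 - lam) * Real.log ((1 - lam) / ((d : ℝ) - 1)) + lam * Real.log lam)) := by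
  have hd2 : (2 : ℝ) ≤ (d : ℝ) := by exact_mod_cast hd
  have hd0 : (0 : ℝ) < (d : ℝ) := by linarith
  have hd1 : (0 : ℝ) < (d : ℝ) - 1 := by linarith
  have hd1' : ((d : ℝ) - 1) ≠ 0 := ne_of_gt hd1
  have hd0' : ((d : ℝ)) ≠ 0 := ne_of_gt hd0
  have hinv : 1 / (d : ℝ) ≤ 1 := by rw [div_le_one hd0]; linarith
  have hinv0 : 0 < 1 / (d : ℝ) := by positivity
  have hprod : 0 ≤ (1 - 1 / (d : ℝ)) * (P - 1 / (d : ℝ)) :=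
    mul_nonneg (by linarith) (by linarith)
  set s : ℝ := Real.sqrt ((1 - 1 / (d : ℝ)) * (P - 1 / (d : ℝ))) with hs
  have hs0 : 0 ≤ s := Real.sqrt_nonneg _
  have hs2 : s ^ 2 = (1 - 1 / (d : ℝ)) * (P - 1 / (d : ℝ)) := Real.sq_sqrt hprod
  have hlam_ge : 1 / (d : ℝ) ≤ lam := by rw [hlam]; linarith
  have hlamnn : 0 ≤ lam := by linarith
  have hlam_le : lam ≤ 1 := by
    have h1 : s ≤ 1 - 1 / (d : ℝ) := by
      rw [hs]
      calc Real.sqrt ((1 - 1 / (d : ℝ)) * (P - 1 / (d : ℝ)))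
          ≤ Real.sqrt ((1 - 1 / (d : ℝ)) * (1 - 1 / (d : ℝ))) :=
            Real.sqrt_le_sqrt (mul_le_mul_of_nonneg_left (by linarith) (by linarith))
        _ = 1 - 1 / (d : ℝ) := Real.sqrt_mul_self (by linarith)
    rw [hlam]; linarith
  have hpur : lam ^ 2 + (1 - lam) ^ 2 / ((d : ℝ) - 1) = P := by
    rw [hlam]
    field_simp
    ring_nf
    have hs2' := hs2
    field_simp at hs2'
    linear_combination (d:ℝ) * hs2'
  subst hv
  set μ : ℝ := (1 - lam) / ((d : ℝ) - 1) with hμdef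
  have hμnn : 0 ≤ μ := div_nonneg (by linarith) (by linarith)
  have hμd : ((d : ℝ) - 1) * μ = 1 - lam := by rw [hμdef]; field_simp
  have hdpos : 0 < d := by omega
  have hv0 : ∀ i : Fin d, 0 ≤ (fun i : Fin d => if (i : ℕ) = 0 then lam else μ) i := by
    intro i; dsimp only; split
    · exact hlamnn
    · exact hμnn
  have hvsum : (∑ i : Fin d, (fun i : Fin d => if (i : ℕ) = 0 then lam else μ) i) = 1 := by
    simp only
    rw [sum_ite_fin d hdpos lam μ]
    linarith [hμd]
  have hvsq : (∑ i : Fin d, ((fun i : Fin d => if (i : ℕ) = 0 then lam else μ) i) ^ 2) = P := by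
    simp only
    have h : ∀ i : Fin d, (if (i : ℕ) = 0 then lam else μ) ^ 2
        = (if (i : ℕ) = 0 then lam ^ 2 else μ ^ 2) := by
      intro i; split <;> rfl
    rw [Finset.sum_congr rfl (fun i _ => h i), sum_ite_fin d hdpos]
    have h5 : ((d : ℝ) - 1) * μ ^ 2 = (1 - lam) ^ 2 / ((d : ℝ) - 1) := by
      rw [hμdef, div_pow]; field_simp
    linarith [hpur, h5]
  have hvent : (∑ i : Fin d, (fun i : Fin d => if (i : ℕ) = 0 then lam else μ) i *
      Real.log ((fun i : Fin d => if (i : ℕ) = 0 then lam else μ) i))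
      = lam * Real.log lam + ((d : ℝ) - 1) * (μ * Real.log μ) := by
    simp only
    have h : ∀ i : Fin d, (if (i : ℕ) = 0 then lam else μ) * Real.log (if (i : ℕ) = 0 then lam else μ)
        = (if (i : ℕ) = 0 then lam * Real.log lam else μ * Real.log μ) := by
      intro i; split <;> rfl
    rw [Finset.sum_congr rfl (fun i _ => h i), sum_ite_fin d hdpos]
  have hvent' : -(∑ i : Fin d, (fun i : Fin d => if (i : ℕ) = 0 then lam else μ) i *
      Real.log ((fun i : Fin d => if (i : ℕ) = 0 then lam else μ) i))
      = -((1 - lam) * Real.log μ + lam * Real.log lam) := by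
    rw [hvent, ← hμd]; ring
  refine ⟨hv0, hvsum, hpur, hvsq, hvent', ⟨⟨_, hv0, hvsum, hvsq, hvent'.symm⟩, ?_⟩⟩
  rintro H ⟨p, hp0, hp1, hp2, rfl⟩
  rcases eq_or_lt_of_le hPhigh with hP1 | hP1
  · -- P = 1 : all entries of p are 0 or 1
    have hple : ∀ i, p i ≤ 1 := by
      intro i
      calc p i ≤ ∑ j, p j := Finset.single_le_sum (fun j _ => hp0 j) (mem_univ i)
        _ = 1 := hp1
    have hzero : ∑ i, (p i - (p i) ^ 2) = 0 := by
      rw [Finset.sum_sub_distrib, hp1, hp2, hP1]; ring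
    have heach := (Finset.sum_eq_zero_iff_of_nonneg (fun i _ => by
      have h : p i - (p i) ^ 2 = p i * (1 - p i) := by ring
      rw [h]; exact mul_nonneg (hp0 i) (by linarith [hple i]))).mp hzero
    have hterm : ∀ i, p i * Real.log (p i) = 0 := by
      intro i
      have h := heach i (mem_univ i)
      have : p i * (1 - p i) = 0 := by linear_combination h
      rcases mul_eq_zero.mp this with h' | h'
      · rw [h', zero_mul]
      · have : p i = 1 := by linarith
        rw [this, Real.log_one, mul_zero]
    rw [Finset.sum_eq_zero (fun i _ => hterm i)]
    have hlam1 : lam = 1 := by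
      rw [hlam, hs, hP1, Real.sqrt_mul_self (by linarith)]
      ring
    rw [hlam1]
    simp
  rcases eq_or_lt_of_le hPlow with hPd | hPd
  · -- P = 1/d : p is uniform
    have hlamd : lam = 1 / (d : ℝ) := by
      have h0 : (1 - 1 / (d : ℝ)) * (P - 1 / (d : ℝ)) = 0 := by rw [← hPd]; ring
      rw [hlam, hs, h0, Real.sqrt_zero, add_zero]
    have hzero : ∑ i, (p i - 1 / (d : ℝ)) ^ 2 = 0 := by
      have expand : ∀ i : Fin d, (p i - 1 / (d : ℝ)) ^ 2
          = (p i) ^ 2 - (2 / (d : ℝ)) * p i + (1 / (d : ℝ)) ^ 2 := fun i => by ring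
      rw [Finset.sum_congr rfl (fun i _ => expand i), Finset.sum_add_distrib,
        Finset.sum_sub_distrib, ← Finset.mul_sum, hp1, hp2, Finset.sum_const,
        card_univ, Fintype.card_fin, nsmul_eq_mul, ← hPd]
      field_simp
      ring
    have hall : ∀ i, p i = 1 / (d : ℝ) := by
      intro i
      have h := (Finset.sum_eq_zero_iff_of_nonneg (fun i _ => sq_nonneg _)).mp hzero i (mem_univ i)
      have := (pow_eq_zero_iff two_ne_zero).mp h
      linarith [sub_eq_zero.mp this]
    rw [Finset.sum_congr rfl (fun i _ => by rw [hall i]), Finset.sum_const,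
      card_univ, Fintype.card_fin, nsmul_eq_mul]
    have hμeq : μ = 1 / (d : ℝ) := by
      rw [hμdef, hlamd, div_eq_div_iff hd1' hd0']
      field_simp
    rw [hμeq, hlamd]
    have heq : (d : ℝ) * (1 / (d : ℝ) * Real.log (1 / (d : ℝ)))
        = (1 - 1 / (d : ℝ)) * Real.log (1 / (d : ℝ)) + 1 / (d : ℝ) * Real.log (1 / (d : ℝ)) := by
      field_simp
      ring
    rw [heq]
  · -- main case : 1/d < P < 1
    have hs_pos : 0 < s := Real.sqrt_pos.mpr (mul_pos (by linarith) (by linarith))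
    have hlam_gt : 1 / (d : ℝ) < lam := by rw [hlam]; linarith
    have hlam_lt1 : lam < 1 := by
      have h1 : s < 1 - 1 / (d : ℝ) := by
        rw [hs]
        calc Real.sqrt ((1 - 1 / (d : ℝ)) * (P - 1 / (d : ℝ)))
            < Real.sqrt ((1 - 1 / (d : ℝ)) ^ 2) :=
              Real.sqrt_lt_sqrt hprod (by
                rw [sq]
                exact mul_lt_mul_of_pos_left (by linarith) (by linarith))
          _ = 1 - 1 / (d : ℝ) := Real.sqrt_sq (by linarith)
      rw [hlam]; linarith
    have hμpos : 0 < μ := div_pos (by linarith) hd1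
    have hμlt : μ < 1 / (d : ℝ) := by
      rw [hμdef, div_lt_div_iff₀ hd1 hd0]
      have h := (div_lt_iff₀ hd0).mp hlam_gt
      linarith
    have hμlam : μ < lam := lt_trans hμlt hlam_gt
    set c : ℝ := (lam * Real.log lam - μ * Real.log μ - (1 + Real.log μ) * (lam - μ)) / (lam - μ) ^ 2 with hc
    have hlamμ : lam - μ ≠ 0 := ne_of_gt (by linarith)
    have hclam : lam * Real.log lam
        = μ * Real.log μ + (1 + Real.log μ) * (lam - μ) + c * (lam - μ) ^ 2 := by
      rw [hc, div_mul_cancel₀ _ (pow_ne_zero 2 hlamμ)]; ring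
    have hkey := key_pointwise μ lam c hμpos hμlam hclam
    have hple : ∀ i, p i ≤ lam := by
      intro i
      have hCS := sq_sum_le_card_mul_sum_sq (s := univ.erase i) (f := p)
      have hcard : (((univ.erase i).card : ℕ) : ℝ) = (d : ℝ) - 1 := by
        rw [Finset.card_erase_of_mem (mem_univ i), card_univ, Fintype.card_fin,
          Nat.cast_sub (by omega)]
        simp
      have h1 : ∑ j ∈ univ.erase i, p j = 1 - p i := by
        rw [Finset.sum_erase_eq_sub (mem_univ i), hp1]
      have h2 : ∑ j ∈ univ.erase i, (p j) ^ 2 = P - (p i) ^ 2 := by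
        rw [Finset.sum_erase_eq_sub (mem_univ i), hp2]
      rw [h1, h2, hcard] at hCS
      have hs2d : (d : ℝ) * s ^ 2 = ((d : ℝ) - 1) * P - ((d : ℝ) - 1) / (d : ℝ) := by
        rw [hs2]; field_simp
      have h4 : (p i - 1 / (d : ℝ)) ^ 2 ≤ s ^ 2 := by
        have e3 : (d : ℝ) * (p i - 1 / (d : ℝ)) ^ 2
            = (d : ℝ) * (p i) ^ 2 - 2 * (p i) + 1 / (d : ℝ) := by
          field_simp; ring
        have e5 : ((d : ℝ) - 1) / (d : ℝ) + 1 / (d : ℝ) = 1 := by field_simp; ring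
        have hqd : (d : ℝ) * (p i - 1 / (d : ℝ)) ^ 2 ≤ (d : ℝ) * s ^ 2 := by
          rw [e3, hs2d]
          linarith [hCS, e5]
        exact (mul_le_mul_iff_right₀ hd0).mp hqd
      have habs : |p i - 1 / (d : ℝ)| ≤ s := by
        rw [← Real.sqrt_sq_eq_abs, ← Real.sqrt_sq hs0]
        exact Real.sqrt_le_sqrt h4
      have h5 := le_trans (le_abs_self (p i - 1 / (d : ℝ))) habs
      rw [hlam]; linarith
    have hsum_le : (∑ i, (μ * Real.log μ + (1 + Real.log μ) * (p i - μ) + c * (p i - μ) ^ 2))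
        ≤ ∑ i, p i * Real.log (p i) :=
      Finset.sum_le_sum (fun i _ => hkey (p i) (hp0 i) (hple i))
    have e1 : 1 - (d : ℝ) * μ = lam - μ := by linarith [hμd]
    have e2 : P - 2 * μ + (d : ℝ) * μ ^ 2 = (lam - μ) ^ 2 := by
      have h5 : ((d : ℝ) - 1) * μ ^ 2 = (1 - lam) ^ 2 / ((d : ℝ) - 1) := by
        rw [hμdef, div_pow]; field_simp
      linear_combination (-1 : ℝ) * hpur + (-1 : ℝ) * h5 + (2 * μ) * hμd
    have hsum_eq : (∑ i, (μ * Real.log μ + (1 + Real.log μ) * (p i - μ) + c * (p i - μ) ^ 2))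
        = ((d : ℝ) - 1) * (μ * Real.log μ) + lam * Real.log lam := by
      have expand : ∀ i : Fin d, μ * Real.log μ + (1 + Real.log μ) * (p i - μ) + c * (p i - μ) ^ 2
          = (μ * Real.log μ - (1 + Real.log μ) * μ + c * μ ^ 2)
            + ((1 + Real.log μ) - 2 * c * μ) * (p i) + c * (p i) ^ 2 := fun i => by ring
      rw [Finset.sum_congr rfl (fun i _ => expand i), Finset.sum_add_distrib,
        Finset.sum_add_distrib, ← Finset.mul_sum, ← Finset.mul_sum, hp1, hp2,
        Finset.sum_const, card_univ, Fintype.card_fin, nsmul_eq_mul]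
      linear_combination (1 + Real.log μ) * e1 + c * e2 - hclam
    have hfin : (1 - lam) * Real.log μ = ((d : ℝ) - 1) * (μ * Real.log μ) := by
      rw [← hμd]; ring
    have := le_trans (le_of_eq hsum_eq.symm) hsum_le
    linarith [this, hfin]
end

section
/- Let ρ be a density matrix on ℂ^d (d ≥ 2) with purity P = Tr[ρ²], and suppose 1/d ≤ P < 1 with k ≥ 2 the integer satisfying 1/k ≤ P ≤ 1/(k−1). Then the von Neumann entropy of ρ satisfies L(P) ≤ S(ρ) ≤ U(P,d), where L(P) = −[(1 − λ_k) ln λ₁ + λ_k ln λ_k] with λ_k = 1/k − √((1 − 1/k)(P − 1/k)), λ₁ = (1 − λ_k)/(k − 1), and U(P,d) = −[(1 − λ) ln((1 − λ)/(d − 1)) + λ ln λ] with λ = 1/d + √((1 − 1/d)(P − 1/d)). -/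
open scoped Kronecker ComplexOrder

/-- Von Neumann entropy (natural logarithm) of a matrix, via its eigenvalues
(`0` if the matrix is not Hermitian; `Real.log 0 = 0` handles zero eigenvalues). -/
noncomputable def vN {n : Type*} [Fintype n] [DecidableEq n] (ρ : Matrix n n ℂ) : ℝ :=
  if h : ρ.IsHermitian then -∑ i, h.eigenvalues i * Real.log (h.eigenvalues i) else 0

/-- Lower bound `L(P)` on the entropy at fixed purity `P`, where `k` is the integer
with `1/k ≤ P ≤ 1/(k−1)`: `L(P) = −[(1 − λ_k) ln λ₁ + λ_k ln λ_k]` with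
`λ_k = 1/k − √((1 − 1/k)(P − 1/k))` and `λ₁ = (1 − λ_k)/(k − 1)`. -/
noncomputable def Lent (P : ℝ) (k : ℕ) : ℝ :=
  let lamk : ℝ := 1 / (k : ℝ) - Real.sqrt ((1 - 1 / (k : ℝ)) * (P - 1 / (k : ℝ)))
  let lam1 : ℝ := (1 - lamk) / ((k : ℝ) - 1);
  -((1 - lamk) * Real.log lam1 + lamk * Real.log lamk)

/-- Upper bound `U(P,d)` on the entropy at fixed purity `P` in dimension `d`:
`U(P,d) = −[(1 − λ) ln((1 − λ)/(d − 1)) + λ ln λ]` with `λ = 1/d + √((1 − 1/d)(P − 1/d))`. -/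
noncomputable def Uent (P : ℝ) (d : ℕ) : ℝ :=
  let lam : ℝ := 1 / (d : ℝ) + Real.sqrt ((1 - 1 / (d : ℝ)) * (P - 1 / (d : ℝ)));
  -((1 - lam) * Real.log ((1 - lam) / ((d : ℝ) - 1)) + lam * Real.log lam)


section EntropyPurityAux

open Real

noncomputable def ent (t : ℝ) : ℝ := t * Real.log t

lemma ent_zero : ent 0 = 0 := by simp [ent]

lemma continuous_ent : Continuous ent := Real.continuous_mul_log



-- circle parametrization
noncomputable def Dl (S Q z : ℝ) : ℝ := 2*Q - 2*z^2 - (S - z)^2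
noncomputable def Xl (S Q z : ℝ) : ℝ := ((S - z) + Real.sqrt (Dl S Q z))/2
noncomputable def Yl (S Q z : ℝ) : ℝ := ((S - z) - Real.sqrt (Dl S Q z))/2
noncomputable def Fl (S Q z : ℝ) : ℝ := ent (Xl S Q z) + ent (Yl S Q z) + ent z
noncomputable def El (S Q z : ℝ) : ℝ :=
  Real.log z - (Real.log (Xl S Q z) + Real.log (Yl S Q z))/2
    + (Real.log (Xl S Q z) - Real.log (Yl S Q z)) * (2*S - 6*z) / (4 * Real.sqrt (Dl S Q z))

lemma sumXY (S Q z : ℝ) : Xl S Q z + Yl S Q z = S - z := by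
  simp [Xl, Yl]; ring

lemma sqXY (S Q z : ℝ) (h : 0 ≤ Dl S Q z) :
    (Xl S Q z)^2 + (Yl S Q z)^2 = Q - z^2 := by
  have : Real.sqrt (Dl S Q z) ^ 2 = Dl S Q z := Real.sq_sqrt h
  simp only [Xl, Yl, Dl] at this ⊢
  linear_combination this / 2

lemma contX (S Q : ℝ) : Continuous (Xl S Q) := by
  unfold Xl Dl
  fun_prop

lemma contY (S Q : ℝ) : Continuous (Yl S Q) := by
  unfold Yl Dl
  fun_prop

lemma contF (S Q : ℝ) : Continuous (Fl S Q) := by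
  unfold Fl
  exact ((continuous_ent.comp (contX S Q)).add (continuous_ent.comp (contY S Q))).add
    (continuous_ent)

lemma hasDerivD (S Q z : ℝ) : HasDerivAt (fun t => Dl S Q t) (2*S - 6*z) z := by
  have h1 : HasDerivAt (fun t : ℝ => t^2) (2*z) z := by
    simpa using hasDerivAt_pow 2 z
  have hs : HasDerivAt (fun t : ℝ => S - t) (-1) z := (hasDerivAt_id z).const_sub S
  have h2 : HasDerivAt (fun t : ℝ => (S - t)^2) (2*(S-z)*(-1)) z := by
    simpa using hs.fun_pow 2
  have h3 := ((h1.const_mul (2:ℝ)).const_sub (2*Q)).sub h2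
  refine h3.congr_deriv ?_
  ring

lemma hasDerivF (S Q z : ℝ) (hz : z ≠ 0) (hD : 0 < Dl S Q z)
    (hX : Xl S Q z ≠ 0) (hY : Yl S Q z ≠ 0) :
    HasDerivAt (Fl S Q) (El S Q z) z := by
  have hrpos : 0 < Real.sqrt (Dl S Q z) := Real.sqrt_pos.2 hD
  have hr : HasDerivAt (fun t => Real.sqrt (Dl S Q t))
      (1 / (2 * Real.sqrt (Dl S Q z)) * (2*S - 6*z)) z :=
    (Real.hasDerivAt_sqrt hD.ne').comp z (hasDerivD S Q z)
  have hs : HasDerivAt (fun t : ℝ => S - t) (-1) z := (hasDerivAt_id z).const_sub S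
  have hXd : HasDerivAt (fun t => Xl S Q t)
      ((-1 + 1 / (2 * Real.sqrt (Dl S Q z)) * (2*S - 6*z))/2) z := by
    unfold Xl
    exact (hs.add hr).div_const 2
  have hYd : HasDerivAt (fun t => Yl S Q t)
      ((-1 - 1 / (2 * Real.sqrt (Dl S Q z)) * (2*S - 6*z))/2) z := by
    unfold Yl
    exact (hs.sub hr).div_const 2
  have hx := (Real.hasDerivAt_mul_log hX).comp z hXd
  have hy := (Real.hasDerivAt_mul_log hY).comp z hYd
  have hzz := Real.hasDerivAt_mul_log hz
  have htot := (hx.add hy).add hzz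
  have : Fl S Q = (fun t => ((fun s => s * Real.log s) ∘ fun t => Xl S Q t) t
      + ((fun s => s * Real.log s) ∘ fun t => Yl S Q t) t + t * Real.log t) := by
    funext t; simp [Fl, ent, Function.comp]
  rw [this]
  refine htot.congr_deriv ?_
  unfold El
  field_simp
  ring

example : True := trivial

lemma XY_at (S Q u v w : ℝ) (hS : S = u + v + w) (hQ : Q = u^2+v^2+w^2) (huv : v ≤ u) :
    Xl S Q w = u ∧ Yl S Q w = v := by
  have hD : Dl S Q w = (u-v)^2 := by unfold Dl; rw [hS, hQ]; ring
  constructor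
  · unfold Xl; rw [hD, Real.sqrt_sq_eq_abs, abs_of_nonneg (by linarith), hS]; ring
  · unfold Yl; rw [hD, Real.sqrt_sq_eq_abs, abs_of_nonneg (by linarith), hS]; ring

lemma engine (S Q a b : ℝ) (hab : a < b)
    (h : ∀ z ∈ Set.Ioo a b, z ≠ 0 ∧ 0 < Dl S Q z ∧ Xl S Q z ≠ 0 ∧ Yl S Q z ≠ 0 ∧ El S Q z < 0) :
    Fl S Q b < Fl S Q a := by
  have hm := strictAntiOn_of_deriv_neg (convex_Icc a b) ((contF S Q).continuousOn)
    (fun z hz => by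
      rw [interior_Icc] at hz
      obtain ⟨h1, h2, h3, h4, h5⟩ := h z hz
      rw [(hasDerivF S Q z h1 h2 h3 h4).deriv]; exact h5)
  exact hm (Set.left_mem_Icc.2 hab.le) (Set.right_mem_Icc.2 hab.le) hab

lemma X_sub_Y (S Q z : ℝ) : Xl S Q z - Yl S Q z = Real.sqrt (Dl S Q z) := by
  unfold Xl Yl; ring

lemma El_le_up (S Q z : ℝ) (hz : 0 < z) (hD : 0 < Dl S Q z) (hY : 0 < Yl S Q z)
    (hc : 0 ≤ 2*S - 6*z) :
    El S Q z ≤ Real.log z - (Real.log (Xl S Q z) + Real.log (Yl S Q z))/2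
      + (2*S - 6*z)/(4 * Yl S Q z) := by
  have hr : 0 < Real.sqrt (Dl S Q z) := Real.sqrt_pos.2 hD
  have hX : 0 < Xl S Q z := by have := X_sub_Y S Q z; linarith
  have hlog : Real.log (Xl S Q z) - Real.log (Yl S Q z) ≤ Real.sqrt (Dl S Q z) / Yl S Q z := by
    rw [← Real.log_div hX.ne' hY.ne']
    have h1 := Real.log_le_sub_one_of_pos (show 0 < Xl S Q z / Yl S Q z by positivity)
    have h2 : Xl S Q z / Yl S Q z - 1 = Real.sqrt (Dl S Q z) / Yl S Q z := by
      field_simp; linarith [X_sub_Y S Q z]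
    linarith
  unfold El
  have key : (Real.log (Xl S Q z) - Real.log (Yl S Q z)) * (2*S - 6*z) / (4 * Real.sqrt (Dl S Q z))
      ≤ (2*S - 6*z)/(4 * Yl S Q z) := by
    rw [div_le_div_iff₀ (by positivity) (by positivity)]
    have h3 := mul_le_mul_of_nonneg_right hlog hc
    calc (Real.log (Xl S Q z) - Real.log (Yl S Q z)) * (2*S-6*z) * (4 * Yl S Q z)
        ≤ (Real.sqrt (Dl S Q z) / Yl S Q z) * (2*S-6*z) * (4 * Yl S Q z) := by
          apply mul_le_mul_of_nonneg_right h3 (by positivity)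
      _ = (2*S - 6*z) * (4 * Real.sqrt (Dl S Q z)) := by field_simp
  linarith

lemma El_le_down (S Q z : ℝ) (hz : 0 < z) (hD : 0 < Dl S Q z) (hY : 0 < Yl S Q z)
    (hc : 2*S - 6*z ≤ 0) :
    El S Q z ≤ Real.log z - (Real.log (Xl S Q z) + Real.log (Yl S Q z))/2
      + (2*S - 6*z)/(4 * Xl S Q z) := by
  have hr : 0 < Real.sqrt (Dl S Q z) := Real.sqrt_pos.2 hD
  have hX : 0 < Xl S Q z := by have := X_sub_Y S Q z; linarith
  have hlog : Real.sqrt (Dl S Q z) / Xl S Q z ≤ Real.log (Xl S Q z) - Real.log (Yl S Q z) := by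
    rw [← Real.log_div hX.ne' hY.ne']
    have h1 := Real.log_le_sub_one_of_pos (show 0 < Yl S Q z / Xl S Q z by positivity)
    have h2 : Real.log (Yl S Q z / Xl S Q z) = - Real.log (Xl S Q z / Yl S Q z) := by
      rw [← Real.log_inv]; congr 1; field_simp
    rw [h2] at h1
    have h3 : 1 - Yl S Q z / Xl S Q z = Real.sqrt (Dl S Q z) / Xl S Q z := by
      field_simp; linarith [X_sub_Y S Q z]
    linarith
  unfold El
  have key : (Real.log (Xl S Q z) - Real.log (Yl S Q z)) * (2*S - 6*z) / (4 * Real.sqrt (Dl S Q z))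
      ≤ (2*S - 6*z)/(4 * Xl S Q z) := by
    rw [div_le_div_iff₀ (by positivity) (by positivity)]
    have h3 := mul_le_mul_of_nonpos_right hlog hc
    calc (Real.log (Xl S Q z) - Real.log (Yl S Q z)) * (2*S-6*z) * (4 * Xl S Q z)
        ≤ (Real.sqrt (Dl S Q z) / Xl S Q z) * (2*S-6*z) * (4 * Xl S Q z) := by
          apply mul_le_mul_of_nonneg_right h3 (by positivity)
      _ = (2*S - 6*z) * (4 * Real.sqrt (Dl S Q z)) := by field_simp
  linarith

lemma pert3 (u v : ℝ) (hv : 0 < v) (hvu : v ≤ u) :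
    ∃ x y z : ℝ, 0 ≤ x ∧ 0 ≤ y ∧ 0 ≤ z ∧ x + y + z = u + v ∧
      x^2 + y^2 + z^2 = u^2 + v^2 ∧ ent x + ent y + ent z < ent u + ent v := by
  set S : ℝ := u + v with hSdef
  set Q : ℝ := u^2 + v^2 with hQdef
  have hu : 0 < u := lt_of_lt_of_le hv hvu
  have hS : 0 < S := by positivity
  obtain ⟨hX0, hY0⟩ := XY_at S Q u v 0 (by rw [hSdef]; ring) (by rw [hQdef]; ring) hvu
  -- eventually Y > v/2
  have hYev : ∀ᶠ z in nhds (0:ℝ), v/2 < Yl S Q z := by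
    have hc : ContinuousAt (Yl S Q) 0 := (contY S Q).continuousAt
    have := ContinuousAt.eventually_lt (f := fun _ : ℝ => v/2) continuousAt_const hc
      (by rw [hY0]; linarith)
    exact this
  obtain ⟨ε₁, hε₁, hb₁⟩ := Metric.eventually_nhds_iff.1 hYev
  set C : ℝ := -Real.log (v/2) + S/v with hCdef
  set δ : ℝ := min (min (ε₁/2) (S/6)) (Real.exp (-C-1)) with hδdef
  have hδpos : 0 < δ := by
    apply lt_min (lt_min (by linarith) (by linarith))
    exact Real.exp_pos _
  have hkey : ∀ z ∈ Set.Ioc (0:ℝ) δ, z ≠ 0 ∧ 0 < Dl S Q z ∧ Xl S Q z ≠ 0 ∧ Yl S Q z ≠ 0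
      ∧ El S Q z < 0 ∧ v/2 < Yl S Q z := by
    intro z hz
    obtain ⟨hz0, hzδ⟩ := hz
    have hzε : v/2 < Yl S Q z := by
      apply hb₁
      rw [Real.dist_eq, sub_zero, abs_of_pos hz0]
      calc z ≤ δ := hzδ
        _ ≤ ε₁/2 := le_trans (min_le_left _ _) (min_le_left _ _)
        _ < ε₁ := by linarith
    have hzS : z ≤ S/6 := le_trans hzδ (le_trans (min_le_left _ _) (min_le_right _ _))
    have hD : 0 < Dl S Q z := by
      have : Dl S Q z = (u-v)^2 + z*(2*S - 3*z) := by unfold Dl; rw [hSdef, hQdef]; ring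
      rw [this]
      nlinarith
    have hY : 0 < Yl S Q z := lt_trans (by linarith) hzε
    have hX : 0 < Xl S Q z := by
      have h1 := X_sub_Y S Q z
      have h2 : 0 ≤ Real.sqrt (Dl S Q z) := Real.sqrt_nonneg _
      linarith
    have hc : 0 ≤ 2*S - 6*z := by linarith
    have hEl : El S Q z < 0 := by
      have hb := El_le_up S Q z hz0 hD hY hc
      have hX2 : Real.log (v/2) ≤ Real.log (Xl S Q z) := by
        apply Real.log_le_log (by linarith)
        have h1 := X_sub_Y S Q z
        have h2 : 0 ≤ Real.sqrt (Dl S Q z) := Real.sqrt_nonneg _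
        linarith
      have hY2 : Real.log (v/2) ≤ Real.log (Yl S Q z) := Real.log_le_log (by linarith) hzε.le
      have hdiv : (2*S - 6*z)/(4 * Yl S Q z) ≤ S/v := by
        rw [div_le_div_iff₀ (by positivity) (by positivity)]
        nlinarith
      have hlogz : Real.log z ≤ -C - 1 := by
        have : z ≤ Real.exp (-C-1) := le_trans hzδ (min_le_right _ _)
        calc Real.log z ≤ Real.log (Real.exp (-C-1)) := Real.log_le_log hz0 this
          _ = -C - 1 := Real.log_exp _
      have : El S Q z ≤ Real.log z + C := by
        rw [hCdef]; linarith
      linarith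
    exact ⟨hz0.ne', hD, hX.ne', hY.ne', hEl, hzε⟩
  have hFlt : Fl S Q δ < Fl S Q 0 := by
    apply engine S Q 0 δ hδpos
    intro z hz
    obtain ⟨h1, h2, h3, h4, h5, _⟩ := hkey z ⟨hz.1, hz.2.le⟩
    exact ⟨h1, h2, h3, h4, h5⟩
  obtain ⟨_, hDδ, hXδ, hYδ, _, hYhalf⟩ := hkey δ ⟨hδpos, le_refl δ⟩
  have hYpos : 0 < Yl S Q δ := lt_trans (by linarith) hYhalf
  have hXpos : 0 < Xl S Q δ := by
    have h1 := X_sub_Y S Q δ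
    have h2 : 0 ≤ Real.sqrt (Dl S Q δ) := Real.sqrt_nonneg _
    linarith
  refine ⟨Xl S Q δ, Yl S Q δ, δ, hXpos.le, hYpos.le, hδpos.le, ?_, ?_, ?_⟩
  · have := sumXY S Q δ
    rw [hSdef] at this
    linarith
  · have := sqXY S Q δ hDδ.le
    rw [hQdef] at this
    linarith
  · have hF0 : Fl S Q 0 = ent u + ent v := by
      unfold Fl
      rw [hX0, hY0, ent_zero]
      ring
    have hFδ : Fl S Q δ = ent (Xl S Q δ) + ent (Yl S Q δ) + ent δ := rfl
    rw [← hF0, ← hFδ]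
    exact hFlt

lemma log_concave3 (u v w : ℝ) (hw : 0 < w) (hwv : w < v) (hvu : v < u) :
    (v-w) * Real.log u + (u-v) * Real.log w < (u-w) * Real.log v := by
  have huw0 : u - w ≠ 0 := by intro h; linarith
  have h := strictConcaveOn_log_Ioi.2 (Set.mem_Ioi.2 (by linarith : (0:ℝ) < u))
    (Set.mem_Ioi.2 hw) (by intro h; linarith)
    (show (0:ℝ) < (v-w)/(u-w) from div_pos (by linarith) (by linarith))
    (show (0:ℝ) < (u-v)/(u-w) from div_pos (by linarith) (by linarith))
    (by field_simp; ring)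
  rw [smul_eq_mul, smul_eq_mul, smul_eq_mul, smul_eq_mul] at h
  have huw : (0:ℝ) < u - w := by linarith
  have hv' : (v-w)/(u-w) * u + (u-v)/(u-w) * w = v := by
    field_simp
    ring
  rw [hv'] at h
  have h3 := mul_lt_mul_of_pos_left h huw
  have e1 : (u-w) * ((v-w)/(u-w) * Real.log u + (u-v)/(u-w) * Real.log w)
      = (v-w) * Real.log u + (u-v) * Real.log w := by
    field_simp
  rw [e1] at h3
  linarith

lemma pert1 (u v w : ℝ) (hw : 0 < w) (hwv : w < v) (hvu : v < u) :
    (∃ x y z : ℝ, 0 ≤ x ∧ 0 ≤ y ∧ 0 ≤ z ∧ x + y + z = u + v + w ∧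
      x^2 + y^2 + z^2 = u^2 + v^2 + w^2 ∧ ent x + ent y + ent z < ent u + ent v + ent w) ∧
    (∃ x y z : ℝ, 0 ≤ x ∧ 0 ≤ y ∧ 0 ≤ z ∧ x + y + z = u + v + w ∧
      x^2 + y^2 + z^2 = u^2 + v^2 + w^2 ∧ ent u + ent v + ent w < ent x + ent y + ent z) := by
  set S : ℝ := u + v + w with hSdef
  set Q : ℝ := u^2 + v^2 + w^2 with hQdef
  have hv : 0 < v := by linarith
  have hu : 0 < u := by linarith
  obtain ⟨hX0, hY0⟩ := XY_at S Q u v w rfl rfl hvu.le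
  have hDw : Dl S Q w = (u-v)^2 := by unfold Dl; rw [hSdef, hQdef]; ring
  have hDwpos : 0 < Dl S Q w := by
    rw [hDw]
    exact pow_pos (by linarith) 2
  have hsqw : Real.sqrt (Dl S Q w) = u - v := by
    rw [hDw, Real.sqrt_sq_eq_abs, abs_of_pos (by linarith)]
  -- continuity of auxiliary functions at w
  have hXc : ContinuousAt (Xl S Q) w := (contX S Q).continuousAt
  have hYc : ContinuousAt (Yl S Q) w := (contY S Q).continuousAt
  have hDc : Continuous (Dl S Q) := by unfold Dl; fun_prop
  have hsqc : Continuous (fun z => Real.sqrt (Dl S Q z)) := Real.continuous_sqrt.comp hDc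
  have hlogXc : ContinuousAt (fun z => Real.log (Xl S Q z)) w :=
    (Real.continuousAt_log (by rw [hX0]; exact hu.ne')).comp hXc
  have hlogYc : ContinuousAt (fun z => Real.log (Yl S Q z)) w :=
    (Real.continuousAt_log (by rw [hY0]; exact hv.ne')).comp hYc
  have hlogzc : ContinuousAt Real.log w := Real.continuousAt_log hw.ne'
  have hElc : ContinuousAt (El S Q) w := by
    unfold El
    exact (hlogzc.sub ((hlogXc.add hlogYc).div_const 2)).add
      (((hlogXc.sub hlogYc).mul (by fun_prop)).div
        ((continuousAt_const.mul hsqc.continuousAt))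
        (by rw [hsqw]; intro hcon; simp at hcon; linarith))
  -- El S Q w < 0
  have hEw : El S Q w < 0 := by
    have hlc := log_concave3 u v w hw hwv hvu
    unfold El
    rw [hX0, hY0, hsqw]
    set A := Real.log u
    set B := Real.log v
    set Cw := Real.log w
    have huv : (0:ℝ) < u - v := by linarith
    set T := (A - B) * (2*S - 6*w) / (4*(u-v)) with hTdef
    have hT : T * (4*(u-v)) = (A - B) * (2*S - 6*w) := div_mul_cancel₀ _ (by positivity)
    have h5 : (4*(u-v)) * (Cw - (A+B)/2 + T)
        = 4 * ((v-w)*A + (u-v)*Cw - (u-w)*B) := by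
      linear_combination hT
    have h6 : (4*(u-v)) * (Cw - (A+B)/2 + T) < 0 := by rw [h5]; linarith
    nlinarith [h6, huv]
  -- eventual facts near w
  have hev : ∀ᶠ z in nhds w, El S Q z < 0 ∧ v/2 < Yl S Q z ∧ 0 < Dl S Q z ∧ w/2 < z := by
    have h1 : ∀ᶠ z in nhds w, El S Q z < 0 :=
      hElc.eventually_lt continuousAt_const hEw
    have h2 : ∀ᶠ z in nhds w, v/2 < Yl S Q z :=
      ContinuousAt.eventually_lt continuousAt_const hYc (by rw [hY0]; linarith)
    have h3 : ∀ᶠ z in nhds w, 0 < Dl S Q z :=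
      ContinuousAt.eventually_lt continuousAt_const hDc.continuousAt hDwpos
    have h4 : ∀ᶠ z in nhds w, w/2 < z :=
      ContinuousAt.eventually_lt continuousAt_const continuousAt_id (by simpa using by linarith)
    filter_upwards [h1, h2, h3, h4] with z hz1 hz2 hz3 hz4
    exact ⟨hz1, hz2, hz3, hz4⟩
  obtain ⟨ε, hε, hb⟩ := Metric.eventually_nhds_iff.1 hev
  set δ : ℝ := ε/2 with hδdef
  have hδpos : 0 < δ := by linarith
  have hball : ∀ z, |z - w| ≤ δ → El S Q z < 0 ∧ v/2 < Yl S Q z ∧ 0 < Dl S Q z ∧ w/2 < z := by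
    intro z hzd
    apply hb
    rw [Real.dist_eq]
    linarith [hzd]
  have hcond : ∀ z ∈ Set.Icc (w - δ) (w + δ), z ≠ 0 ∧ 0 < Dl S Q z ∧ Xl S Q z ≠ 0
      ∧ Yl S Q z ≠ 0 ∧ El S Q z < 0 ∧ 0 < Yl S Q z := by
    intro z hz
    have habs : |z - w| ≤ δ := abs_le.2 ⟨by linarith [hz.1], by linarith [hz.2]⟩
    obtain ⟨he1, he2, he3, he4⟩ := hball z habs
    have hYpos : 0 < Yl S Q z := lt_trans (by linarith) he2
    have hXpos : 0 < Xl S Q z := by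
      have := X_sub_Y S Q z
      have := Real.sqrt_nonneg (Dl S Q z)
      linarith
    exact ⟨(lt_trans (by linarith) he4).ne', he3, hXpos.ne', hYpos.ne', he1, hYpos⟩
  have hFw : Fl S Q w = ent u + ent v + ent w := by
    unfold Fl; rw [hX0, hY0]
  have mkpoint : ∀ z₀ ∈ Set.Icc (w - δ) (w + δ), (0:ℝ) ≤ Xl S Q z₀ ∧ 0 ≤ Yl S Q z₀ ∧ 0 ≤ z₀
      ∧ Xl S Q z₀ + Yl S Q z₀ + z₀ = u + v + w
      ∧ (Xl S Q z₀)^2 + (Yl S Q z₀)^2 + z₀^2 = u^2 + v^2 + w^2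
      ∧ ent (Xl S Q z₀) + ent (Yl S Q z₀) + ent z₀ = Fl S Q z₀ := by
    intro z₀ hz₀
    obtain ⟨hn0, hD, hXn, hYn, _, hYpos⟩ := hcond z₀ hz₀
    have hXpos : 0 < Xl S Q z₀ := by
      have := X_sub_Y S Q z₀
      have := Real.sqrt_nonneg (Dl S Q z₀)
      linarith
    refine ⟨hXpos.le, hYpos.le, ?_, ?_, ?_, rfl⟩
    · obtain ⟨_, _, _, hz4⟩ := hball z₀ (abs_le.2 ⟨by linarith [hz₀.1], by linarith [hz₀.2]⟩)
      linarith
    · have := sumXY S Q z₀; rw [hSdef] at this; linarith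
    · have := sqXY S Q z₀ hD.le; rw [hQdef] at this; linarith
  constructor
  · -- decrease: take z₀ = w + δ
    have hFlt : Fl S Q (w + δ) < Fl S Q w := by
      apply engine S Q w (w + δ) (by linarith)
      intro z hz
      obtain ⟨h1, h2, h3, h4, h5, _⟩ := hcond z ⟨by linarith [hz.1], by linarith [hz.2]⟩
      exact ⟨h1, h2, h3, h4, h5⟩
    obtain ⟨p1, p2, p3, p4, p5, p6⟩ := mkpoint (w + δ) ⟨by linarith, by linarith⟩
    exact ⟨_, _, _, p1, p2, p3, p4, p5, by rw [p6, ← hFw]; exact hFlt⟩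
  · -- increase: take z₀ = w - δ
    have hFlt : Fl S Q w < Fl S Q (w - δ) := by
      apply engine S Q (w - δ) w (by linarith)
      intro z hz
      obtain ⟨h1, h2, h3, h4, h5, _⟩ := hcond z ⟨by linarith [hz.1], by linarith [hz.2]⟩
      exact ⟨h1, h2, h3, h4, h5⟩
    obtain ⟨p1, p2, p3, p4, p5, p6⟩ := mkpoint (w - δ) ⟨by linarith, by linarith⟩
    exact ⟨_, _, _, p1, p2, p3, p4, p5, by rw [p6, ← hFw]; exact hFlt⟩

lemma pert2 (u w : ℝ) (hw : 0 < w) (hwu : w < u) :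
    ∃ x y z : ℝ, 0 ≤ x ∧ 0 ≤ y ∧ 0 ≤ z ∧ x + y + z = u + u + w ∧
      x^2 + y^2 + z^2 = u^2 + u^2 + w^2 ∧ ent x + ent y + ent z < ent u + ent u + ent w := by
  set S : ℝ := u + u + w with hSdef
  set Q : ℝ := u^2 + u^2 + w^2 with hQdef
  have hu : 0 < u := by linarith
  obtain ⟨hX0, hY0⟩ := XY_at S Q u u w rfl rfl le_rfl
  have hDform : ∀ z, Dl S Q z = (z-w)*(4*(u-w) - 3*(z-w)) := by
    intro z; unfold Dl; rw [hSdef, hQdef]; ring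
  set gb : ℝ → ℝ := fun z => Real.log z - (Real.log (Xl S Q z) + Real.log (Yl S Q z))/2
      + (2*S-6*z)/(4*Yl S Q z) with hgbdef
  have hXc : ContinuousAt (Xl S Q) w := (contX S Q).continuousAt
  have hYc : ContinuousAt (Yl S Q) w := (contY S Q).continuousAt
  have hgbc : ContinuousAt gb w := by
    apply ContinuousAt.add
    · exact ((Real.continuousAt_log hw.ne').sub
        ((((Real.continuousAt_log (by rw [hX0]; exact hu.ne')).comp hXc).add
          ((Real.continuousAt_log (by rw [hY0]; exact hu.ne')).comp hYc)).div_const 2))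
    · exact ContinuousAt.div (by fun_prop) (continuousAt_const.mul hYc)
        (by rw [hY0]; positivity)
  have hgbw : gb w < 0 := by
    have hlog := Real.log_lt_sub_one_of_pos (show 0 < w/u by positivity)
      (by intro hcon; rw [div_eq_one_iff_eq hu.ne'] at hcon; linarith)
    rw [Real.log_div hw.ne' hu.ne'] at hlog
    simp only [hgbdef]
    rw [hX0, hY0, hSdef]
    have h2 : (w-u)/u = w/u - 1 := by field_simp
    have h3 : (2*(u+u+w) - 6*w)/(4*u) + (w-u)/u = 0 := by field_simp; ring
    linarith
  have hev : ∀ᶠ z in nhds w, gb z < 0 ∧ u/2 < Yl S Q z := by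
    have h1 := hgbc.eventually_lt continuousAt_const hgbw
    have h2 := ContinuousAt.eventually_lt (f := fun _ : ℝ => u/2) continuousAt_const hYc
      (by rw [hY0]; linarith)
    filter_upwards [h1, h2] with z hz1 hz2 using ⟨hz1, hz2⟩
  obtain ⟨ε, hε, hb⟩ := Metric.eventually_nhds_iff.1 hev
  set δ : ℝ := min (ε/2) ((u-w)/2) with hδdef
  have hδpos : 0 < δ := lt_min (by linarith) (by linarith)
  have hkey : ∀ z ∈ Set.Ioc w (w+δ), z ≠ 0 ∧ 0 < Dl S Q z ∧ Xl S Q z ≠ 0 ∧ Yl S Q z ≠ 0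
      ∧ El S Q z < 0 ∧ 0 < Yl S Q z := by
    intro z hz
    obtain ⟨hz1, hz2⟩ := hz
    have hzw : 0 < z - w := by linarith
    have hzδ : z - w ≤ δ := by linarith
    have hδuw : δ ≤ (u-w)/2 := min_le_right _ _
    have hzpos : 0 < z := by linarith
    have hball : gb z < 0 ∧ u/2 < Yl S Q z := by
      apply hb
      rw [Real.dist_eq, abs_of_pos hzw]
      have : δ ≤ ε/2 := min_le_left _ _
      linarith
    have hD : 0 < Dl S Q z := by
      rw [hDform]
      have : 4*(u-w) - 3*(z-w) ≥ u - w := by linarith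
      nlinarith
    have hY : 0 < Yl S Q z := lt_trans (by linarith) hball.2
    have hX : 0 < Xl S Q z := by
      have := X_sub_Y S Q z
      have := Real.sqrt_nonneg (Dl S Q z)
      linarith
    have hc : 0 ≤ 2*S - 6*z := by
      rw [hSdef]
      linarith
    have hEl : El S Q z < 0 := lt_of_le_of_lt (El_le_up S Q z hzpos hD hY hc) hball.1
    exact ⟨hzpos.ne', hD, hX.ne', hY.ne', hEl, hY⟩
  have hFlt : Fl S Q (w+δ) < Fl S Q w := by
    apply engine S Q w (w+δ) (by linarith)
    intro z hz
    obtain ⟨h1, h2, h3, h4, h5, _⟩ := hkey z ⟨hz.1, hz.2.le⟩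
    exact ⟨h1, h2, h3, h4, h5⟩
  obtain ⟨_, hD, hXn, hYn, _, hY⟩ := hkey (w+δ) ⟨by linarith, le_refl _⟩
  have hX : 0 < Xl S Q (w+δ) := by
    have := X_sub_Y S Q (w+δ)
    have := Real.sqrt_nonneg (Dl S Q (w+δ))
    linarith
  refine ⟨Xl S Q (w+δ), Yl S Q (w+δ), w+δ, hX.le, hY.le, by linarith, ?_, ?_, ?_⟩
  · have := sumXY S Q (w+δ); rw [hSdef] at this; linarith
  · have := sqXY S Q (w+δ) hD.le; rw [hQdef] at this; linarith
  · have hFw : Fl S Q w = ent u + ent u + ent w := by unfold Fl; rw [hX0, hY0]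
    rw [← hFw]
    exact hFlt

lemma pert4 (u v : ℝ) (hv : 0 < v) (hvu : v < u) :
    ∃ x y z : ℝ, 0 ≤ x ∧ 0 ≤ y ∧ 0 ≤ z ∧ x + y + z = v + v + u ∧
      x^2 + y^2 + z^2 = v^2 + v^2 + u^2 ∧ ent v + ent v + ent u < ent x + ent y + ent z := by
  set S : ℝ := v + v + u with hSdef
  set Q : ℝ := v^2 + v^2 + u^2 with hQdef
  have hu : 0 < u := by linarith
  obtain ⟨hX0, hY0⟩ := XY_at S Q v v u rfl rfl le_rfl
  have hDform : ∀ z, Dl S Q z = (u-z)*(4*(u-v) - 3*(u-z)) := by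
    intro z; unfold Dl; rw [hSdef, hQdef]; ring
  set gb : ℝ → ℝ := fun z => Real.log z - (Real.log (Xl S Q z) + Real.log (Yl S Q z))/2
      + (2*S-6*z)/(4*Xl S Q z) with hgbdef
  have hXc : ContinuousAt (Xl S Q) u := (contX S Q).continuousAt
  have hYc : ContinuousAt (Yl S Q) u := (contY S Q).continuousAt
  have hgbc : ContinuousAt gb u := by
    apply ContinuousAt.add
    · exact ((Real.continuousAt_log hu.ne').sub
        ((((Real.continuousAt_log (by rw [hX0]; exact hv.ne')).comp hXc).add
          ((Real.continuousAt_log (by rw [hY0]; exact hv.ne')).comp hYc)).div_const 2))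
    · exact ContinuousAt.div (by fun_prop) (continuousAt_const.mul hXc)
        (by rw [hX0]; positivity)
  have hgbu : gb u < 0 := by
    have hlog := Real.log_lt_sub_one_of_pos (show 0 < u/v by positivity)
      (by intro hcon; rw [div_eq_one_iff_eq hv.ne'] at hcon; linarith)
    rw [Real.log_div hu.ne' hv.ne'] at hlog
    simp only [hgbdef]
    rw [hX0, hY0, hSdef]
    have h2 : (2*(v+v+u) - 6*u)/(4*v) = -((u-v)/v) := by field_simp; ring
    rw [h2]
    have h3 : u/v - 1 = (u-v)/v := by field_simp
    nlinarith [hlog]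
  have hev : ∀ᶠ z in nhds u, gb z < 0 ∧ v/2 < Yl S Q z := by
    have h1 := hgbc.eventually_lt continuousAt_const hgbu
    have h2 := ContinuousAt.eventually_lt (f := fun _ : ℝ => v/2) continuousAt_const hYc
      (by rw [hY0]; linarith)
    filter_upwards [h1, h2] with z hz1 hz2 using ⟨hz1, hz2⟩
  obtain ⟨ε, hε, hb⟩ := Metric.eventually_nhds_iff.1 hev
  set δ : ℝ := min (ε/2) (min ((u-v)/2) (u/2)) with hδdef
  have hδpos : 0 < δ := lt_min (by linarith) (lt_min (by linarith) (by linarith))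
  have hδ1 : δ ≤ ε/2 := min_le_left _ _
  have hδ2 : δ ≤ (u-v)/2 := le_trans (min_le_right _ _) (min_le_left _ _)
  have hδ3 : δ ≤ u/2 := le_trans (min_le_right _ _) (min_le_right _ _)
  have hkey : ∀ z ∈ Set.Ico (u-δ) u, z ≠ 0 ∧ 0 < Dl S Q z ∧ Xl S Q z ≠ 0 ∧ Yl S Q z ≠ 0
      ∧ El S Q z < 0 ∧ 0 < Yl S Q z := by
    intro z hz
    obtain ⟨hz1, hz2⟩ := hz
    have hzu : 0 ≤ u - z := by linarith
    have hzδ : u - z ≤ δ := by linarith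
    have hzpos : 0 < z := by linarith
    have hball : gb z < 0 ∧ v/2 < Yl S Q z := by
      apply hb
      rw [Real.dist_eq, abs_of_nonpos (by linarith)]
      linarith
    have hD : 0 < Dl S Q z := by
      rw [hDform]
      have h1 : 0 < u - z := by linarith
      have : 4*(u-v) - 3*(u-z) ≥ u - v := by linarith
      nlinarith
    have hY : 0 < Yl S Q z := lt_trans (by linarith) hball.2
    have hX : 0 < Xl S Q z := by
      have := X_sub_Y S Q z
      have := Real.sqrt_nonneg (Dl S Q z)
      linarith
    have hc : 2*S - 6*z ≤ 0 := by
      rw [hSdef]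
      linarith
    have hEl : El S Q z < 0 := lt_of_le_of_lt (El_le_down S Q z hzpos hD hY hc) hball.1
    exact ⟨hzpos.ne', hD, hX.ne', hY.ne', hEl, hY⟩
  have hFlt : Fl S Q u < Fl S Q (u-δ) := by
    apply engine S Q (u-δ) u (by linarith)
    intro z hz
    obtain ⟨h1, h2, h3, h4, h5, _⟩ := hkey z ⟨hz.1.le, hz.2⟩
    exact ⟨h1, h2, h3, h4, h5⟩
  obtain ⟨hz0, hD, hXn, hYn, _, hY⟩ := hkey (u-δ) ⟨le_refl _, by linarith⟩
  have hX : 0 < Xl S Q (u-δ) := by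
    have := X_sub_Y S Q (u-δ)
    have := Real.sqrt_nonneg (Dl S Q (u-δ))
    linarith
  refine ⟨Xl S Q (u-δ), Yl S Q (u-δ), u-δ, hX.le, hY.le, by linarith, ?_, ?_, ?_⟩
  · have := sumXY S Q (u-δ); rw [hSdef] at this; linarith
  · have := sqXY S Q (u-δ) hD.le; rw [hQdef] at this; linarith
  · have hFu : Fl S Q u = ent v + ent v + ent u := by unfold Fl; rw [hX0, hY0]
    rw [← hFu]
    exact hFlt



def feas {d : ℕ} (P : ℝ) (q : Fin d → ℝ) : Prop :=
  (∀ m, 0 ≤ q m) ∧ (∑ m, q m = 1) ∧ (∑ m, (q m)^2 = P)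

noncomputable def upd3 {d : ℕ} (q : Fin d → ℝ) (i j l : Fin d) (x y z : ℝ) : Fin d → ℝ :=
  fun m => if m = i then x else if m = j then y else if m = l then z else q m

lemma sum3_upd {d : ℕ} (q : Fin d → ℝ) (i j l : Fin d) (hij : i ≠ j) (hil : i ≠ l)
    (hjl : j ≠ l) (x y z : ℝ) (φ : ℝ → ℝ) :
    ∑ m, φ (upd3 q i j l x y z m)
      = ∑ m, φ (q m) - (φ (q i) + φ (q j) + φ (q l)) + (φ x + φ y + φ z) := by
  classical
  set s : Finset (Fin d) := {i, j, l} with hsdef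
  have hsub : s ⊆ Finset.univ := Finset.subset_univ s
  have hjmem : j ∉ ({l} : Finset (Fin d)) := by simp [hjl]
  have himem : i ∉ ({j, l} : Finset (Fin d)) := by simp [hij, hil]
  have hsum3 : ∀ f : Fin d → ℝ, ∑ m ∈ s, f m = f i + f j + f l := by
    intro f
    rw [hsdef, Finset.sum_insert himem, Finset.sum_insert hjmem, Finset.sum_singleton]
    ring
  have hsplit : ∀ f : Fin d → ℝ,
      ∑ m, f m = ∑ m ∈ Finset.univ \ s, f m + (f i + f j + f l) := by
    intro f
    rw [← hsum3 f, Finset.sum_sdiff hsub]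
  have hoff : ∀ m ∈ Finset.univ \ s, upd3 q i j l x y z m = q m := by
    intro m hm
    rw [Finset.mem_sdiff, hsdef] at hm
    simp only [Finset.mem_insert, Finset.mem_singleton] at hm
    push_neg at hm
    obtain ⟨-, hm1, hm2, hm3⟩ := hm
    simp [upd3, hm1, hm2, hm3]
  have hvi : upd3 q i j l x y z i = x := by simp [upd3]
  have hvj : upd3 q i j l x y z j = y := by simp [upd3, (Ne.symm hij)]
  have hvl : upd3 q i j l x y z l = z := by simp [upd3, (Ne.symm hil), (Ne.symm hjl)]
  rw [hsplit (fun m => φ (upd3 q i j l x y z m)), hsplit (fun m => φ (q m))]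
  have : ∑ m ∈ Finset.univ \ s, φ (upd3 q i j l x y z m) = ∑ m ∈ Finset.univ \ s, φ (q m) :=
    Finset.sum_congr rfl (fun m hm => by rw [hoff m hm])
  rw [this, hvi, hvj, hvl]
  ring

lemma feas_upd3 {d : ℕ} (P : ℝ) (q : Fin d → ℝ) (hq : feas P q) (i j l : Fin d)
    (hij : i ≠ j) (hil : i ≠ l) (hjl : j ≠ l) (x y z : ℝ)
    (hx : 0 ≤ x) (hy : 0 ≤ y) (hz : 0 ≤ z)
    (hsum : x + y + z = q i + q j + q l)
    (hsq : x^2 + y^2 + z^2 = (q i)^2 + (q j)^2 + (q l)^2) :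
    feas P (upd3 q i j l x y z) := by
  obtain ⟨h0, h1, h2⟩ := hq
  refine ⟨?_, ?_, ?_⟩
  · intro m
    simp only [upd3]
    split_ifs <;> first | assumption | exact h0 m
  · have hs := sum3_upd q i j l hij hil hjl x y z (fun t => t)
    rw [hs, h1]
    linarith
  · have hs := sum3_upd q i j l hij hil hjl x y z (fun t => t^2)
    rw [hs, h2]
    linarith

lemma ent_upd3 {d : ℕ} (q : Fin d → ℝ) (i j l : Fin d)
    (hij : i ≠ j) (hil : i ≠ l) (hjl : j ≠ l) (x y z : ℝ) :
    ∑ m, ent (upd3 q i j l x y z m)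
      = ∑ m, ent (q m) - (ent (q i) + ent (q j) + ent (q l)) + (ent x + ent y + ent z) :=
  sum3_upd q i j l hij hil hjl x y z ent

lemma feas_compact {d : ℕ} (P : ℝ) : IsCompact {v : Fin d → ℝ | feas P v} := by
  have hclosed : IsClosed {v : Fin d → ℝ | feas P v} := by
    have h1 : IsClosed {v : Fin d → ℝ | ∀ m, 0 ≤ v m} := by
      have : {v : Fin d → ℝ | ∀ m, 0 ≤ v m} = ⋂ m, {v | 0 ≤ v m} := by
        ext v; simp
      rw [this]
      exact isClosed_iInter (fun m => isClosed_le continuous_const (continuous_apply m))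
    have h2 : IsClosed {v : Fin d → ℝ | ∑ m, v m = 1} :=
      isClosed_eq (by fun_prop) continuous_const
    have h3 : IsClosed {v : Fin d → ℝ | ∑ m, (v m)^2 = P} :=
      isClosed_eq (by fun_prop) continuous_const
    have : {v : Fin d → ℝ | feas P v}
        = {v | ∀ m, 0 ≤ v m} ∩ ({v | ∑ m, v m = 1} ∩ {v | ∑ m, (v m)^2 = P}) := by
      ext v
      simp only [feas, Set.mem_setOf_eq, Set.mem_inter_iff]
    rw [this]
    exact h1.inter (h2.inter h3)
  have hbdd : {v : Fin d → ℝ | feas P v} ⊆ Metric.closedBall 0 1 := by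
    intro v hv
    obtain ⟨h0, h1, _⟩ := hv
    rw [Metric.mem_closedBall, dist_zero_right]
    rw [pi_norm_le_iff_of_nonneg (by norm_num)]
    intro m
    rw [Real.norm_eq_abs, abs_of_nonneg (h0 m)]
    calc v m ≤ ∑ m', v m' := Finset.single_le_sum (fun m' _ => h0 m') (Finset.mem_univ m)
      _ = 1 := h1
  exact (isCompact_closedBall (0 : Fin d → ℝ) 1).of_isClosed_subset hclosed hbdd

lemma exists_extr {d : ℕ} (P : ℝ) (p : Fin d → ℝ) (hp : feas P p) :
    (∃ q : Fin d → ℝ, feas P q ∧ ∀ r : Fin d → ℝ, feas P r → ∑ m, ent (q m) ≤ ∑ m, ent (r m)) ∧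
    (∃ q : Fin d → ℝ, feas P q ∧ ∀ r : Fin d → ℝ, feas P r → ∑ m, ent (r m) ≤ ∑ m, ent (q m)) := by
  have hcont : ContinuousOn (fun v : Fin d → ℝ => ∑ m, ent (v m)) {v | feas P v} := by
    apply Continuous.continuousOn
    apply continuous_finset_sum
    intro m _
    exact Real.continuous_mul_log.comp (continuous_apply m)
  have hne : {v : Fin d → ℝ | feas P v}.Nonempty := ⟨p, hp⟩
  constructor
  · obtain ⟨q, hq, hmin⟩ := (feas_compact P).exists_isMinOn hne hcont
    exact ⟨q, hq, fun r hr => hmin hr⟩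
  · obtain ⟨q, hq, hmax⟩ := (feas_compact P).exists_isMaxOn hne hcont
    exact ⟨q, hq, fun r hr => hmax hr⟩

lemma maxStructure {d : ℕ} (hd : 2 ≤ d) (P : ℝ) (hP1 : P < 1) (q : Fin d → ℝ)
    (hq : feas P q)
    (hopt : ∀ r : Fin d → ℝ, feas P r → ∑ m, ent (q m) ≤ ∑ m, ent (r m)) :
    ∃ i₀ B, 0 < B ∧ B ≤ q i₀ ∧ ∀ j, j ≠ i₀ → q j = B := by
  classical
  have hne : Nonempty (Fin d) := ⟨⟨0, by omega⟩⟩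
  obtain ⟨h0, h1, h2⟩ := hq
  -- at least two positive coordinates
  have htwo : ∃ i j : Fin d, i ≠ j ∧ 0 < q i ∧ 0 < q j := by
    set s := Finset.univ.filter (fun m => 0 < q m) with hsdef
    have hzero : ∀ x, x ∉ s → q x = 0 := by
      intro x hx
      simp only [hsdef, Finset.mem_filter, Finset.mem_univ, true_and, not_lt] at hx
      exact le_antisymm hx (h0 x)
    have hsum_s : ∑ m ∈ s, q m = 1 := by
      rw [← h1]
      exact Finset.sum_subset (Finset.filter_subset _ _) (fun x _ hx => hzero x hx)
    have hsq_s : ∑ m ∈ s, (q m)^2 = P := by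
      rw [← h2]
      exact Finset.sum_subset (Finset.filter_subset _ _)
        (fun x _ hx => by rw [hzero x hx]; ring)
    have hcard : 1 < s.card := by
      rcases Nat.lt_or_ge s.card 2 with hc | hc
      · interval_cases h : s.card
        · rw [Finset.card_eq_zero] at h
          rw [h, Finset.sum_empty] at hsum_s
          norm_num at hsum_s
        · obtain ⟨m₀, hm₀⟩ := Finset.card_eq_one.1 h
          rw [hm₀, Finset.sum_singleton] at hsum_s hsq_s
          rw [hsum_s] at hsq_s
          norm_num at hsq_s
          rw [← hsq_s] at hP1
          norm_num at hP1
      · exact hc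
    obtain ⟨i, hi, j, hj, hij⟩ := Finset.one_lt_card.1 hcard
    simp only [hsdef, Finset.mem_filter, Finset.mem_univ, true_and] at hi hj
    exact ⟨i, j, hij, hi, hj⟩
  -- all coordinates positive
  have hpos : ∀ m, 0 < q m := by
    by_contra hcon
    push_neg at hcon
    obtain ⟨l, hl⟩ := hcon
    have hl0 : q l = 0 := le_antisymm hl (h0 l)
    obtain ⟨i, j, hij, hi, hj⟩ := htwo
    have hil : i ≠ l := fun h => by rw [h, hl0] at hi; exact lt_irrefl _ hi
    have hjl : j ≠ l := fun h => by rw [h, hl0] at hj; exact lt_irrefl _ hj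
    rcases le_total (q j) (q i) with hle | hle
    · obtain ⟨x, y, z, hx, hy, hz, hsum, hsq, hent⟩ := pert3 (q i) (q j) hj hle
      have hfeas := feas_upd3 P q ⟨h0, h1, h2⟩ i j l hij hil hjl x y z hx hy hz
        (by rw [hl0]; linarith) (by rw [hl0]; ring_nf; linarith [hsq])
      have hthis := hopt _ hfeas
      rw [ent_upd3 q i j l hij hil hjl x y z, hl0, ent_zero] at hthis
      linarith
    · obtain ⟨x, y, z, hx, hy, hz, hsum, hsq, hent⟩ := pert3 (q j) (q i) hi hle
      have hfeas := feas_upd3 P q ⟨h0, h1, h2⟩ j i l hij.symm hjl hil x y z hx hy hz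
        (by rw [hl0]; linarith) (by rw [hl0]; ring_nf; linarith [hsq])
      have hthis := hopt _ hfeas
      rw [ent_upd3 q j i l hij.symm hjl hil x y z, hl0, ent_zero] at hthis
      linarith
  -- minimal coordinate
  obtain ⟨imin, -, hmin⟩ := Finset.exists_min_image Finset.univ q Finset.univ_nonempty
  -- a repeated value is minimal
  have hrep : ∀ i j, i ≠ j → q i = q j → q i ≤ q imin := by
    intro i j hij hqij
    by_contra hcon
    push_neg at hcon
    have himin : i ≠ imin := fun h => by rw [h] at hcon; exact lt_irrefl _ hcon
    have hjmin : j ≠ imin := fun h => by rw [h] at hqij; rw [hqij] at hcon; exact lt_irrefl _ hcon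
    obtain ⟨x, y, z, hx, hy, hz, hsum, hsq, hent⟩ := pert2 (q i) (q imin) (hpos imin) hcon
    have hfeas := feas_upd3 P q ⟨h0, h1, h2⟩ i j imin hij himin hjmin x y z hx hy hz
      (by rw [← hqij]; linarith) (by rw [← hqij]; linarith)
    have hthis := hopt _ hfeas
    rw [ent_upd3 q i j imin hij himin hjmin x y z] at hthis
    have heq : ent (q j) = ent (q i) := by rw [hqij]
    linarith
  -- at most one coordinate above the min
  set s2 := Finset.univ.filter (fun m => q imin < q m) with hs2def
  have hcard2 : s2.card ≤ 1 := by
    by_contra hc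
    push_neg at hc
    obtain ⟨i, hi, j, hj, hij⟩ := Finset.one_lt_card.1 hc
    simp only [hs2def, Finset.mem_filter, Finset.mem_univ, true_and] at hi hj
    have himin : i ≠ imin := fun h => by rw [h] at hi; exact lt_irrefl _ hi
    have hjmin : j ≠ imin := fun h => by rw [h] at hj; exact lt_irrefl _ hj
    have hqij : q i ≠ q j := by
      intro h
      exact absurd (hrep i j hij h) (not_le.2 hi)
    rcases lt_or_gt_of_ne hqij with hlt | hlt
    · obtain ⟨x, y, z, hx, hy, hz, hsum, hsq, hent⟩ :=
        (pert1 (q j) (q i) (q imin) (hpos imin) hi hlt).1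
      have hfeas := feas_upd3 P q ⟨h0, h1, h2⟩ j i imin hij.symm hjmin himin x y z hx hy hz
        (by linarith) (by linarith)
      have hthis := hopt _ hfeas
      rw [ent_upd3 q j i imin hij.symm hjmin himin x y z] at hthis
      linarith
    · obtain ⟨x, y, z, hx, hy, hz, hsum, hsq, hent⟩ :=
        (pert1 (q i) (q j) (q imin) (hpos imin) hj hlt).1
      have hfeas := feas_upd3 P q ⟨h0, h1, h2⟩ i j imin hij himin hjmin x y z hx hy hz
        (by linarith) (by linarith)
      have hthis := hopt _ hfeas
      rw [ent_upd3 q i j imin hij himin hjmin x y z] at hthis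
      linarith
  rcases Nat.le_one_iff_eq_zero_or_eq_one.1 hcard2 with h | h
  · refine ⟨imin, q imin, hpos imin, le_refl _, ?_⟩
    intro j _
    by_contra hcon
    have : j ∈ s2 := by
      simp only [hs2def, Finset.mem_filter, Finset.mem_univ, true_and]
      exact lt_of_le_of_ne (hmin j (Finset.mem_univ j)) (Ne.symm hcon)
    rw [Finset.card_eq_zero] at h
    rw [h] at this
    exact absurd this (Finset.notMem_empty j)
  · obtain ⟨i₀, hs2⟩ := Finset.card_eq_one.1 h
    refine ⟨i₀, q imin, hpos imin, hmin i₀ (Finset.mem_univ i₀), ?_⟩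
    intro jj hjj
    have hnot : jj ∉ s2 := by rw [hs2]; simp [hjj]
    simp only [hs2def, Finset.mem_filter, Finset.mem_univ, true_and, not_lt] at hnot
    exact le_antisymm hnot (hmin jj (Finset.mem_univ jj))

lemma minStructure {d : ℕ} (P : ℝ) (q : Fin d → ℝ) (hq : feas P q) (hd : 0 < d)
    (hopt : ∀ r : Fin d → ℝ, feas P r → ∑ m, ent (r m) ≤ ∑ m, ent (q m)) :
    ∃ (i₀ : Fin d) (A : ℝ), 0 < q i₀ ∧ q i₀ ≤ A ∧ ∀ m, m ≠ i₀ → q m = 0 ∨ q m = A := by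
  classical
  have hne : Nonempty (Fin d) := ⟨⟨0, by omega⟩⟩
  obtain ⟨h0, h1, h2⟩ := hq
  obtain ⟨imax, -, hmax⟩ := Finset.exists_max_image Finset.univ q Finset.univ_nonempty
  have hApos : 0 < q imax := by
    by_contra hcon
    push_neg at hcon
    have : ∀ m, q m = 0 := fun m =>
      le_antisymm (le_trans (hmax m (Finset.mem_univ m)) hcon) (h0 m)
    rw [Finset.sum_congr rfl (fun m _ => this m), Finset.sum_const] at h1
    simp at h1
  -- a repeated positive value is maximal
  have hrep : ∀ i j, i ≠ j → 0 < q i → q i = q j → q imax ≤ q i := by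
    intro i j hij hipos hqij
    by_contra hcon
    push_neg at hcon
    have himax : i ≠ imax := fun h => by rw [h] at hcon; exact lt_irrefl _ hcon
    have hjmax : j ≠ imax := fun h => by rw [h] at hqij; rw [hqij] at hcon; exact lt_irrefl _ hcon
    obtain ⟨x, y, z, hx, hy, hz, hsum, hsq, hent⟩ := pert4 (q imax) (q i) hipos hcon
    have hfeas := feas_upd3 P q ⟨h0, h1, h2⟩ i j imax hij himax hjmax x y z hx hy hz
      (by rw [← hqij]; linarith) (by rw [← hqij]; linarith)
    have hthis := hopt _ hfeas
    rw [ent_upd3 q i j imax hij himax hjmax x y z] at hthis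
    have heq : ent (q j) = ent (q i) := by rw [hqij]
    linarith
  -- at most one strictly-between coordinate
  set Mid := Finset.univ.filter (fun m => 0 < q m ∧ q m < q imax) with hMdef
  have hcardM : Mid.card ≤ 1 := by
    by_contra hc
    push_neg at hc
    obtain ⟨i, hi, j, hj, hij⟩ := Finset.one_lt_card.1 hc
    simp only [hMdef, Finset.mem_filter, Finset.mem_univ, true_and] at hi hj
    have himax : i ≠ imax := fun h => by rw [h] at hi; exact lt_irrefl _ hi.2
    have hjmax : j ≠ imax := fun h => by rw [h] at hj; exact lt_irrefl _ hj.2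
    have hqij : q i ≠ q j := by
      intro h
      exact absurd (hrep i j hij hi.1 h) (not_le.2 hi.2)
    rcases lt_or_gt_of_ne hqij with hlt | hlt
    · obtain ⟨x, y, z, hx, hy, hz, hsum, hsq, hent⟩ :=
        (pert1 (q imax) (q j) (q i) hi.1 hlt hj.2).2
      have hfeas := feas_upd3 P q ⟨h0, h1, h2⟩ imax j i hjmax.symm himax.symm hij.symm
        x y z hx hy hz (by linarith) (by linarith)
      have hthis := hopt _ hfeas
      rw [ent_upd3 q imax j i hjmax.symm himax.symm hij.symm x y z] at hthis
      linarith
    · obtain ⟨x, y, z, hx, hy, hz, hsum, hsq, hent⟩ :=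
        (pert1 (q imax) (q i) (q j) hj.1 hlt hi.2).2
      have hfeas := feas_upd3 P q ⟨h0, h1, h2⟩ imax i j himax.symm hjmax.symm hij
        x y z hx hy hz (by linarith) (by linarith)
      have hthis := hopt _ hfeas
      rw [ent_upd3 q imax i j himax.symm hjmax.symm hij x y z] at hthis
      linarith
  rcases Nat.le_one_iff_eq_zero_or_eq_one.1 hcardM with h | h
  · refine ⟨imax, q imax, hApos, le_refl _, ?_⟩
    intro m _
    have hnot : m ∉ Mid := by
      rw [Finset.card_eq_zero] at h
      rw [h]
      exact Finset.notMem_empty m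
    simp only [hMdef, Finset.mem_filter, Finset.mem_univ, true_and, not_and, not_lt] at hnot
    rcases le_or_gt (q m) 0 with hm | hm
    · exact Or.inl (le_antisymm hm (h0 m))
    · exact Or.inr (le_antisymm (hmax m (Finset.mem_univ m)) (hnot hm))
  · obtain ⟨i₀, hM⟩ := Finset.card_eq_one.1 h
    have hi₀ : 0 < q i₀ ∧ q i₀ < q imax := by
      have : i₀ ∈ Mid := by rw [hM]; exact Finset.mem_singleton_self i₀
      simpa only [hMdef, Finset.mem_filter, Finset.mem_univ, true_and] using this
    refine ⟨i₀, q imax, hi₀.1, (hmax i₀ (Finset.mem_univ i₀)), ?_⟩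
    intro m hm
    have hnot : m ∉ Mid := by rw [hM]; simp [hm]
    simp only [hMdef, Finset.mem_filter, Finset.mem_univ, true_and, not_and, not_lt] at hnot
    rcases le_or_gt (q m) 0 with hmle | hmlt
    · exact Or.inl (le_antisymm hmle (h0 m))
    · exact Or.inr (le_antisymm (hmax m (Finset.mem_univ m)) (hnot hmlt))

lemma sum_structured {d : ℕ} (q : Fin d → ℝ) (i₀ : Fin d) (B : ℝ)
    (hB : ∀ j, j ≠ i₀ → q j = B) (φ : ℝ → ℝ) :
    ∑ m, φ (q m) = φ (q i₀) + ((d:ℝ) - 1) * φ B := by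
  classical
  have h1 : ∑ m, φ (q m) = φ (q i₀) + ∑ m ∈ Finset.univ.erase i₀, φ (q m) := by
    rw [← Finset.add_sum_erase Finset.univ (fun m => φ (q m)) (Finset.mem_univ i₀)]
  have h2 : ∑ m ∈ Finset.univ.erase i₀, φ (q m) = ((d:ℝ) - 1) * φ B := by
    rw [Finset.sum_congr rfl (fun m hm => by
      rw [hB m (Finset.ne_of_mem_erase hm)])]
    rw [Finset.sum_const, Finset.card_erase_of_mem (Finset.mem_univ i₀)]
    simp only [Finset.card_univ, Fintype.card_fin, nsmul_eq_mul]
    have hd1 : 1 ≤ d := by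
      have : 0 < d := Fin.pos i₀
      omega
    rw [Nat.cast_sub hd1]
    norm_num
  rw [h1, h2]

lemma sum_structured_min {d : ℕ} (q : Fin d → ℝ) (i₀ : Fin d) (A : ℝ)
    (hstr : ∀ m, m ≠ i₀ → q m = 0 ∨ q m = A) (φ : ℝ → ℝ) (hφ : φ 0 = 0) :
    ∑ m, φ (q m) = φ (q i₀)
      + ((Finset.univ.filter (fun m => m ≠ i₀ ∧ q m ≠ 0)).card : ℝ) * φ A := by
  classical
  have h1 : ∑ m, φ (q m) = φ (q i₀) + ∑ m ∈ Finset.univ.erase i₀, φ (q m) := by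
    rw [← Finset.add_sum_erase Finset.univ (fun m => φ (q m)) (Finset.mem_univ i₀)]
  have hTeq : (Finset.univ.erase i₀).filter (fun m => q m ≠ 0)
      = Finset.univ.filter (fun m => m ≠ i₀ ∧ q m ≠ 0) := by
    ext m
    simp only [Finset.mem_filter, Finset.mem_erase, Finset.mem_univ, true_and]
    tauto
  have h2 : ∑ m ∈ Finset.univ.erase i₀, φ (q m)
      = ((Finset.univ.filter (fun m => m ≠ i₀ ∧ q m ≠ 0)).card : ℝ) * φ A := by
    rw [← Finset.sum_filter_add_sum_filter_not (Finset.univ.erase i₀) (fun m => q m ≠ 0)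
      (fun m => φ (q m))]
    have hz : ∑ m ∈ (Finset.univ.erase i₀).filter (fun m => ¬ q m ≠ 0), φ (q m) = 0 := by
      apply Finset.sum_eq_zero
      intro m hm
      simp only [Finset.mem_filter, not_not] at hm
      rw [hm.2, hφ]
    have hA : ∑ m ∈ (Finset.univ.erase i₀).filter (fun m => q m ≠ 0), φ (q m)
        = ((Finset.univ.filter (fun m => m ≠ i₀ ∧ q m ≠ 0)).card : ℝ) * φ A := by
      rw [Finset.sum_congr rfl (fun m hm => by
        simp only [Finset.mem_filter, Finset.mem_erase] at hm
        rcases hstr m hm.1.1 with h | h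
        · exact absurd h hm.2
        · rw [h])]
      rw [Finset.sum_const, hTeq, nsmul_eq_mul]
    rw [hz, hA, add_zero]
  rw [h1, h2]

lemma maxAlgebra (d : ℕ) (hd : 2 ≤ d) (P A B : ℝ) (hBA : B ≤ A)
    (hsum : A + ((d:ℝ)-1)*B = 1) (hsq : A^2 + ((d:ℝ)-1)*B^2 = P) :
    -(ent A + ((d:ℝ)-1) * ent B) = Uent P d := by
  have hd' : (2:ℝ) ≤ (d:ℝ) := by exact_mod_cast hd
  have hd0 : (0:ℝ) < (d:ℝ) := by linarith
  have hd1 : (0:ℝ) < (d:ℝ) - 1 := by linarith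
  have hA1d : 1/(d:ℝ) ≤ A := by
    rw [div_le_iff₀ hd0]
    nlinarith
  have hd1n : (d:ℝ) - 1 ≠ 0 := ne_of_gt hd1
  have hsqeq : (1 - 1/(d:ℝ)) * (P - 1/(d:ℝ)) = (A - 1/(d:ℝ))^2 := by
    have hBval : B = (1-A)/((d:ℝ)-1) := by
      field_simp
      linarith
    have hPval : P = A^2 + (1-A)^2/((d:ℝ)-1) := by
      rw [← hsq, hBval]
      field_simp
    rw [hPval]
    field_simp
    ring
  have hsqrt : Real.sqrt ((1 - 1/(d:ℝ)) * (P - 1/(d:ℝ))) = A - 1/(d:ℝ) := by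
    rw [hsqeq, Real.sqrt_sq (by linarith)]
  have hB' : (1-A)/((d:ℝ)-1) = B := by
    field_simp
    linarith
  show _ = Uent P d
  rw [Uent]
  simp only [hsqrt]
  rw [show 1/(d:ℝ) + (A - 1/(d:ℝ)) = A by ring]
  rw [hB']
  simp only [ent]
  have h1A : 1 - A = ((d:ℝ)-1)*B := by linarith
  rw [h1A]
  ring

lemma minAlgebra (k : ℕ) (hk : 2 ≤ k) (j : ℕ) (P A B : ℝ) (hB : 0 < B) (hBA : B ≤ A)
    (hsum : (j:ℝ)*A + B = 1) (hsq : (j:ℝ)*A^2 + B^2 = P)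
    (hk1 : 1/(k:ℝ) ≤ P) (hk2 : P ≤ 1/((k:ℝ)-1)) (hP1 : P < 1) :
    -((j:ℝ) * ent A + ent B) = Lent P k := by
  have hk' : (2:ℝ) ≤ (k:ℝ) := by exact_mod_cast hk
  have hk0 : (0:ℝ) < (k:ℝ) := by linarith
  have hkm1 : (0:ℝ) < (k:ℝ) - 1 := by linarith
  have hA : 0 < A := lt_of_lt_of_le hB hBA
  have hj1 : 1 ≤ j := by
    by_contra hcon
    push_neg at hcon
    interval_cases j
    simp only [Nat.cast_zero, zero_mul, zero_add] at hsum hsq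
    rw [hsum] at hsq
    norm_num at hsq
    rw [← hsq] at hP1
    norm_num at hP1
  have hj1' : (1:ℝ) ≤ (j:ℝ) := by exact_mod_cast hj1
  have hjpos : (0:ℝ) < (j:ℝ) := by linarith
  have idA : (j:ℝ)*(A-B)^2 = ((j:ℝ)+1)*P - 1 := by
    linear_combination ((j:ℝ)+1) * hsq - (1 + (j:ℝ)*A + B) * hsum
  have idP : (j:ℝ)*P - 1 = B*(((j:ℝ)-1)*B - 2*(j:ℝ)*A) := by
    linear_combination (-(j:ℝ))*hsq + ((j:ℝ)*A + B + 1)*hsum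
  have hPj : P < 1/(j:ℝ) := by
    rw [lt_div_iff₀ hjpos]
    have h4 : ((j:ℝ)-1)*B ≤ ((j:ℝ)-1)*A := mul_le_mul_of_nonneg_left hBA (by linarith)
    have h5 : ((j:ℝ)-1)*B - 2*(j:ℝ)*A ≤ -(((j:ℝ)+1)*A) := by nlinarith [hA]
    have h5' : -(((j:ℝ)+1)*A) < 0 := by
      have : 0 < ((j:ℝ)+1)*A := mul_pos (by linarith) hA
      linarith
    have h6 : B*(((j:ℝ)-1)*B - 2*(j:ℝ)*A) < 0 :=
      mul_neg_of_pos_of_neg hB (lt_of_le_of_lt h5 h5')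
    nlinarith [idP, h6]
  have hPj1 : 1/((j:ℝ)+1) ≤ P := by
    rw [div_le_iff₀ (by linarith)]
    nlinarith [idA, sq_nonneg (A-B)]
  -- pin down j
  have hjk : j < k := by
    have h1 : 1/(k:ℝ) < 1/(j:ℝ) := lt_of_le_of_lt hk1 hPj
    have := (div_lt_div_iff₀ hk0 hjpos).1 h1
    exact_mod_cast (by linarith : (j:ℝ) < (k:ℝ))
  have hjk2 : k ≤ j + 2 := by
    have h1 : 1/((j:ℝ)+1) ≤ 1/((k:ℝ)-1) := le_trans hPj1 hk2
    have := (div_le_div_iff₀ (by linarith) hkm1).1 h1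
    have h2 : (k:ℝ) ≤ (j:ℝ) + 2 := by linarith
    exact_mod_cast h2
  have hcases : j = k - 2 ∨ j = k - 1 := by omega
  rcases hcases with hc | hc
  · -- j = k-2 : uniform case, P = 1/(k-1)
    have hjr : (j:ℝ) = (k:ℝ) - 2 := by
      rw [hc]
      push_cast [Nat.cast_sub (by omega : 2 ≤ k)]
      ring
    have hPeq : P = 1/((k:ℝ)-1) := by
      apply le_antisymm hk2
      calc 1/((k:ℝ)-1) = 1/((j:ℝ)+1) := by rw [hjr]; ring_nf
        _ ≤ P := hPj1
    have hAB : A = B := by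
      have h1 : (j:ℝ)*(A-B)^2 = 0 := by
        rw [idA, hPeq, hjr]
        field_simp
        ring
      have := mul_eq_zero.1 h1
      rcases this with h | h
      · linarith
      · have := pow_eq_zero_iff (n := 2) (by norm_num) |>.1 h
        linarith
    have hBval : B = 1/((k:ℝ)-1) := by
      have : ((j:ℝ)+1)*B = 1 := by rw [← hAB] at hsum ⊢; linarith
      rw [hjr] at this
      field_simp at this ⊢
      linarith
    -- Lent at P = 1/(k-1)
    have harg : (1 - 1/(k:ℝ)) * (P - 1/(k:ℝ)) = (1/(k:ℝ))^2 := by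
      rw [hPeq]
      field_simp
      ring
    have hsqrt : Real.sqrt ((1 - 1/(k:ℝ)) * (P - 1/(k:ℝ))) = 1/(k:ℝ) := by
      rw [harg, Real.sqrt_sq (by positivity)]
    rw [Lent]
    simp only [hsqrt]
    rw [show 1/(k:ℝ) - 1/(k:ℝ) = 0 by ring]
    simp only [Real.log_zero, zero_mul, add_zero, sub_zero, mul_zero]
    rw [hAB, hBval]
    simp only [ent]
    rw [hjr]
    have h9 : (k:ℝ) - 1 ≠ 0 := ne_of_gt hkm1
    field_simp
    ring
  · -- j = k-1 : main case
    have hjr : (j:ℝ) = (k:ℝ) - 1 := by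
      rw [hc]
      push_cast [Nat.cast_sub (by omega : 1 ≤ k)]
      ring
    have hk2' : (k:ℝ) = (j:ℝ) + 1 := by linarith [hjr]
    have hBk : B ≤ 1/(k:ℝ) := by
      rw [le_div_iff₀ hk0]
      have hjB : (j:ℝ)*B ≤ (j:ℝ)*A := mul_le_mul_of_nonneg_left hBA hjpos.le
      have e : B*(k:ℝ) = (j:ℝ)*B + B := by rw [hk2']; ring
      linarith [hsum]
    have h9 : (k:ℝ) - 1 ≠ 0 := ne_of_gt hkm1
    have hA2 : ((k:ℝ)-1)*A = 1 - B := by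
      rw [← hjr]
      linarith
    have key : (1 - 1/(k:ℝ)) * (P - 1/(k:ℝ)) = (1/(k:ℝ) - B)^2 := by
      have hPval : P = ((k:ℝ)-1)*A^2 + B^2 := by rw [← hsq, hjr]
      have hAv : A = (1-B)/((k:ℝ)-1) := by
        field_simp
        linarith
      rw [hPval, hAv]
      field_simp
      ring
    have hsqrt : Real.sqrt ((1 - 1/(k:ℝ)) * (P - 1/(k:ℝ))) = 1/(k:ℝ) - B := by
      rw [key, Real.sqrt_sq (by linarith)]
    have hAval : (1 - B)/((k:ℝ)-1) = A := by
      field_simp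
      linarith
    rw [Lent]
    simp only [hsqrt]
    rw [show 1/(k:ℝ) - (1/(k:ℝ) - B) = B by ring]
    rw [hAval]
    simp only [ent]
    have h1B : 1 - B = (j:ℝ)*A := by linarith
    rw [h1B]
    ring


lemma extract (d : ℕ) (ρ : Matrix (Fin d) (Fin d) ℂ) (hH : ρ.IsHermitian)
    (P : ℝ) (htr : ρ.trace = 1) (hP : (ρ * ρ).trace = (P : ℂ)) :
    (∑ i, hH.eigenvalues i) = 1 ∧ (∑ i, (hH.eigenvalues i)^2) = P := by
  set V : Matrix (Fin d) (Fin d) ℂ := ↑hH.eigenvectorUnitary with hVdef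
  set D : Matrix (Fin d) (Fin d) ℂ := Matrix.diagonal (RCLike.ofReal ∘ hH.eigenvalues) with hDdef
  have hspec : ρ = V * D * star V := hH.spectral_theorem
  have hU : star V * V = 1 := Matrix.UnitaryGroup.star_mul_self hH.eigenvectorUnitary
  have htr1 : ρ.trace = D.trace := by
    rw [hspec, Matrix.trace_mul_comm, ← Matrix.mul_assoc, hU, one_mul]
  have htr2 : (ρ * ρ).trace = (D * D).trace := by
    have h2 : ρ * ρ = V * (D * D) * star V := by
      rw [hspec]
      calc (V * D * star V) * (V * D * star V)
          = V * D * (star V * V) * D * star V := by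
            simp only [Matrix.mul_assoc]
        _ = V * (D * D) * star V := by rw [hU]; simp only [Matrix.mul_assoc, Matrix.mul_one, Matrix.one_mul]
    rw [h2, Matrix.trace_mul_comm, ← Matrix.mul_assoc, hU, one_mul]
  constructor
  · have : D.trace = ∑ i, (hH.eigenvalues i : ℂ) := by
      rw [hDdef, Matrix.trace_diagonal]
      simp
    rw [htr, this] at htr1
    have := htr1.symm
    exact_mod_cast this
  · have hDD : D * D = Matrix.diagonal (fun i => ((hH.eigenvalues i : ℂ))^2) := by
      rw [hDdef, Matrix.diagonal_mul_diagonal]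
      congr 1
      funext i
      simp [pow_two]
    have : (D * D).trace = ∑ i, ((hH.eigenvalues i : ℂ))^2 := by
      rw [hDD, Matrix.trace_diagonal]
    rw [hP, this] at htr2
    have := htr2.symm
    exact_mod_cast this


end EntropyPurityAux

/-- For a density matrix `ρ` on `ℂ^d` (`d ≥ 2`) with purity
`P = Tr[ρ²]`, `1/d ≤ P < 1`, and `k ≥ 2` the integer with `1/k ≤ P ≤ 1/(k−1)`,
the von Neumann entropy satisfies `L(P) ≤ S(ρ) ≤ U(P,d)`. -/
theorem vonNeumann_entropy_purity_bounds
    (d : ℕ) (hd : 2 ≤ d) (ρ : Matrix (Fin d) (Fin d) ℂ)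
    (hρ : ρ.PosSemidef) (htr : ρ.trace = 1)
    (P : ℝ) (hP : (ρ * ρ).trace = (P : ℂ))
    (hPlow : 1 / (d : ℝ) ≤ P) (hPhigh : P < 1)
    (k : ℕ) (hk : 2 ≤ k) (hkP : 1 / (k : ℝ) ≤ P) (hkP' : P ≤ 1 / ((k : ℝ) - 1)) :
    Lent P k ≤ vN ρ ∧ vN ρ ≤ Uent P d := by
  classical
  have hH : ρ.IsHermitian := hρ.1
  set p := hH.eigenvalues with hpdef
  obtain ⟨hp1, hp2⟩ := extract d ρ hH P htr hP
  have hp0 : ∀ m, 0 ≤ p m := fun m => hρ.eigenvalues_nonneg m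
  have hfeas : feas P p := ⟨hp0, hp1, hp2⟩
  have hvN : vN ρ = -∑ m, ent (p m) := by
    rw [vN, dif_pos hH]
    simp only [ent]
    rfl
  obtain ⟨⟨qmin, hqminf, hqminopt⟩, ⟨qmax, hqmaxf, hqmaxopt⟩⟩ := exists_extr P p hfeas
  constructor
  · -- lower bound via qmax (the entropy minimizer)
    obtain ⟨i₀, A, hqpos, hqA, hstr⟩ := minStructure P qmax hqmaxf (by omega) hqmaxopt
    set jc := (Finset.univ.filter (fun m => m ≠ i₀ ∧ qmax m ≠ 0)).card with hjcdef
    have hsum : (jc:ℝ)*A + qmax i₀ = 1 := by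
      have h := sum_structured_min qmax i₀ A hstr (fun t => t) rfl
      rw [hqmaxf.2.1] at h
      linarith
    have hsq : (jc:ℝ)*A^2 + (qmax i₀)^2 = P := by
      have h := sum_structured_min qmax i₀ A hstr (fun t => t^2) (by norm_num)
      rw [hqmaxf.2.2] at h
      linarith
    have hent : ∑ m, ent (qmax m) = ent (qmax i₀) + (jc:ℝ) * ent A :=
      sum_structured_min qmax i₀ A hstr ent ent_zero
    have halg := minAlgebra k hk jc P A (qmax i₀) hqpos hqA hsum hsq hkP hkP' hPhigh
    have hle := hqmaxopt p hfeas
    rw [hvN]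
    linarith [halg, hent, hle]
  · -- upper bound via qmin (the entropy maximizer)
    obtain ⟨i₀, B, hBpos, hBle, hstr⟩ := maxStructure hd P hPhigh qmin hqminf hqminopt
    have hsum : qmin i₀ + ((d:ℝ)-1)*B = 1 := by
      have h := sum_structured qmin i₀ B hstr (fun t => t)
      rw [hqminf.2.1] at h
      linarith
    have hsq : (qmin i₀)^2 + ((d:ℝ)-1)*B^2 = P := by
      have h := sum_structured qmin i₀ B hstr (fun t => t^2)
      rw [hqminf.2.2] at h
      linarith
    have hent : ∑ m, ent (qmin m) = ent (qmin i₀) + ((d:ℝ)-1) * ent B :=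
      sum_structured qmin i₀ B hstr ent
    have halg := maxAlgebra d hd P (qmin i₀) B hBle hsum hsq
    have hle := hqminopt p hfeas
    rw [hvN]
    linarith [halg, hent, hle]
end
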